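/- arXiv:2110.13821 — 6 statements merged into one kernel-verified Lean document; each statement's English description precedes it below -/
import Mathlib

section
/- Let X be a real Banach space with norm ‖·‖ and let T ∈ Lip₀(X,X). Then the mapping p ↦ ν_L^p(T) from (E(X), μ) to ℝ is uniformly continuous on every bounded subset of E(X); that is, for every κ > 0 and every ε > 0 there exists δ > 0 such that |ν_L^p(T) − ν_L^q(T)| < ε whenever p, q ∈ E(X) satisfy μ(p, ‖·‖) < κ, μ(q, ‖·‖) < κ and μ(p, q) < δ. -/
noncomputable section

/-- `T ∈ Lip₀(X,Y)`: Lipschitz and vanishing at 0. -/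
def IsLip0 {X Y : Type*} [NormedAddCommGroup X] [NormedAddCommGroup Y] (T : X → Y) : Prop :=
  (∃ K, LipschitzWith K T) ∧ T 0 = 0

/-- The set `E(X)` of (semi)norms on `X` which are genuine norms equivalent to the
given norm of `X`. -/
def eqNorms (X : Type*) [NormedAddCommGroup X] [NormedSpace ℝ X] : Set (Seminorm ℝ X) :=
  {p | (∀ x : X, p x = 0 → x = 0) ∧ ∃ k : ℝ, 1 ≤ k ∧ ∀ x : X, p x ≤ k * ‖x‖ ∧ ‖x‖ ≤ k * p x}

/-- The metric `μ(p,q) = log (min {k ≥ 1 : p ≤ k q, q ≤ k p})` on equivalent norms. -/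
def normDist {X : Type*} [NormedAddCommGroup X] [NormedSpace ℝ X] (p q : Seminorm ℝ X) : ℝ :=
  Real.log (sInf {k : ℝ | 1 ≤ k ∧ ∀ x : X, p x ≤ k * q x ∧ q x ≤ k * p x})

/-- The dual norm of a continuous linear functional with respect to the norm `p`. -/
def dualNormP {X : Type*} [NormedAddCommGroup X] [NormedSpace ℝ X] (p : Seminorm ℝ X)
    (f : X →L[ℝ] ℝ) : ℝ :=
  sSup {r : ℝ | ∃ z : X, p z ≤ 1 ∧ r = |f z|}

/-- The Lipschitz numerical radius of `T` with respect to the norm `p`, i.e. the supremum of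
`|x*(Tx - Ty)| / p(x-y)²` over the state `Π_p` of triples `(x, y, x*)` with `x ≠ y` and
`x*(x-y) = p(x*) p(x-y) = p(x-y)²`. -/
def nuLP {X : Type*} [NormedAddCommGroup X] [NormedSpace ℝ X] (p : Seminorm ℝ X)
    (T : X → X) : ℝ :=
  sSup {r : ℝ | ∃ (x y : X) (f : X →L[ℝ] ℝ), x ≠ y ∧
    f (x - y) = (p (x - y)) ^ 2 ∧ dualNormP p f * p (x - y) = (p (x - y)) ^ 2 ∧
    r = |f (T x - T y)| / (p (x - y)) ^ 2}

section Aux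

variable {X : Type*} [NormedAddCommGroup X] [NormedSpace ℝ X]

lemma dualNormP_bddAbove {p : Seminorm ℝ X} (hp : p ∈ eqNorms X) (f : X →L[ℝ] ℝ) :
    BddAbove {r : ℝ | ∃ z : X, p z ≤ 1 ∧ r = |f z|} := by
  obtain ⟨k, hk1, hk⟩ := hp.2
  refine ⟨k * ‖f‖, ?_⟩
  rintro r ⟨z, hz, rfl⟩
  have h1 : ‖z‖ ≤ k := le_trans (hk z).2 (by nlinarith [(hk z).2, norm_nonneg z])
  calc |f z| ≤ ‖f‖ * ‖z‖ := f.le_opNorm z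
    _ ≤ ‖f‖ * k := by nlinarith [norm_nonneg f]
    _ = k * ‖f‖ := mul_comm _ _

lemma abs_le_dualNormP_mul {p : Seminorm ℝ X} (hp : p ∈ eqNorms X) (f : X →L[ℝ] ℝ) (z : X) :
    |f z| ≤ dualNormP p f * p z := by
  rcases eq_or_ne (p z) 0 with h0 | h0
  · have hz : z = 0 := hp.1 z h0
    simp [hz, h0]
  · have hpz : 0 < p z := lt_of_le_of_ne (apply_nonneg p z) (Ne.symm h0)
    have hmem : |f ((p z)⁻¹ • z)| ∈ {r : ℝ | ∃ w : X, p w ≤ 1 ∧ r = |f w|} := by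
      refine ⟨(p z)⁻¹ • z, ?_, rfl⟩
      rw [map_smul_eq_mul]
      rw [Real.norm_eq_abs, abs_inv, abs_of_pos hpz, inv_mul_cancel₀ h0]
    have hle := le_csSup (dualNormP_bddAbove hp f) hmem
    have heq : |f ((p z)⁻¹ • z)| = (p z)⁻¹ * |f z| := by
      rw [map_smul]
      simp [Real.norm_eq_abs, abs_mul, abs_of_pos (inv_pos.mpr hpz)]
    rw [heq] at hle
    have := mul_le_mul_of_nonneg_right hle hpz.le
    rw [mul_comm, ← mul_assoc, mul_inv_cancel₀ h0, one_mul] at this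
    calc |f z| = p z * ((p z)⁻¹ * |f z|) := by field_simp
      _ ≤ dualNormP p f * p z := by rw [mul_comm]; exact mul_le_mul_of_nonneg_right hle hpz.le


lemma exists_state {p : Seminorm ℝ X} (hp : p ∈ eqNorms X) {u : X} (hu : u ≠ 0) :
    ∃ f : X →L[ℝ] ℝ, f u = p u ^ 2 ∧ dualNormP p f = p u ∧ ∀ z : X, |f z| ≤ p u * p z := by
  obtain ⟨k, hk1, hk⟩ := hp.2
  have hpu : 0 < p u := by
    rcases lt_or_eq_of_le (apply_nonneg p u) with h | h
    · exact h
    · exact absurd (hp.1 u h.symm) hu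
  -- Hahn-Banach extension from the span of u
  obtain ⟨g, hg1, hg2⟩ := exists_extension_of_le_sublinear
      (LinearPMap.mkSpanSingleton u (p u) hu) (fun x => p x)
      (fun c hc x => by simp only [map_smul_eq_mul, Real.norm_eq_abs, abs_of_pos hc])
      (fun x y => map_add_le_add p x y)
      (by
        rintro ⟨x, hx⟩
        obtain ⟨c, rfl⟩ := Submodule.mem_span_singleton.1 hx
        have : (LinearPMap.mkSpanSingleton u (p u) hu) ⟨c • u, hx⟩ = c • p u := by
          apply LinearPMap.mkSpanSingleton'_apply
        rw [this]
        have h2 : p (c • u) = |c| * p u := by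
          rw [map_smul_eq_mul]; simp [Real.norm_eq_abs]
        simp only [smul_eq_mul]
        show c * p u ≤ p (c • u)
        rw [h2]
        have := le_abs_self c
        nlinarith [hpu.le])
  have hgu : g u = p u := by
    have := hg1 ⟨u, Submodule.mem_span_singleton_self u⟩
    rwa [LinearPMap.mkSpanSingleton_apply] at this
  have habs : ∀ z : X, |g z| ≤ p z := by
    intro z
    rcases abs_cases (g z) with ⟨h, _⟩ | ⟨h, _⟩
    · rw [h]; exact hg2 z
    · rw [h]; calc -g z = g (-z) := by rw [map_neg]
        _ ≤ p (-z) := hg2 (-z)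
        _ = p z := map_neg_eq_map p z
  -- continuity
  have hcont : ∀ z : X, ‖g z‖ ≤ k * ‖z‖ := by
    intro z
    rw [Real.norm_eq_abs]
    exact le_trans (habs z) (hk z).1
  let G : X →L[ℝ] ℝ := LinearMap.mkContinuous g k hcont
  have hGapp : ∀ z : X, G z = g z := fun z => rfl
  refine ⟨p u • G, ?_, ?_, ?_⟩
  · simp [hGapp, hgu, sq]
  · -- dualNormP
    have hub : ∀ r ∈ {r : ℝ | ∃ z : X, p z ≤ 1 ∧ r = |(p u • G) z|}, r ≤ p u := by
      rintro r ⟨z, hz, rfl⟩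
      have : |(p u • G) z| = p u * |g z| := by
        simp [hGapp, abs_mul, abs_of_pos hpu]
      rw [this]
      nlinarith [habs z, apply_nonneg p z, (habs z).trans hz, abs_nonneg (g z)]
    have hmem : p u ∈ {r : ℝ | ∃ z : X, p z ≤ 1 ∧ r = |(p u • G) z|} := by
      refine ⟨(p u)⁻¹ • u, ?_, ?_⟩
      · rw [map_smul_eq_mul, Real.norm_eq_abs, abs_inv, abs_of_pos hpu,
          inv_mul_cancel₀ hpu.ne']
      · simp only [ContinuousLinearMap.smul_apply, hGapp, map_smul, smul_eq_mul]
        rw [hgu]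
        rw [abs_mul, abs_mul, abs_inv, abs_of_pos hpu]
        field_simp
    exact le_antisymm (Real.sSup_le hub hpu.le) (le_csSup ⟨p u, hub⟩ hmem)
  · intro z
    have : |(p u • G) z| = p u * |g z| := by simp [hGapp, abs_mul, abs_of_pos hpu]
    rw [this]
    exact mul_le_mul_of_nonneg_left (habs z) hpu.le

lemma nuLP_nonneg (p : Seminorm ℝ X) (T : X → X) : 0 ≤ nuLP p T := by
  apply Real.sSup_nonneg
  rintro r ⟨x, y, f, hxy, h1, h2, rfl⟩
  positivity

lemma stateSet_le {p : Seminorm ℝ X} (hp : p ∈ eqNorms X) {T : X → X} {L : ℝ}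
    (hLip : ∀ a b : X, p (T a - T b) ≤ L * p (a - b)) :
    ∀ r ∈ {r : ℝ | ∃ (x y : X) (f : X →L[ℝ] ℝ), x ≠ y ∧
      f (x - y) = (p (x - y)) ^ 2 ∧ dualNormP p f * p (x - y) = (p (x - y)) ^ 2 ∧
      r = |f (T x - T y)| / (p (x - y)) ^ 2}, r ≤ L := by
  rintro r ⟨x, y, f, hxy, h1, h2, rfl⟩
  have hu : x - y ≠ 0 := sub_ne_zero.mpr hxy
  have hpu : 0 < p (x - y) := by
    rcases lt_or_eq_of_le (apply_nonneg p (x - y)) with h | h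
    · exact h
    · exact absurd (hp.1 _ h.symm) hu
  have hdual : dualNormP p f = p (x - y) := by
    have : dualNormP p f * p (x - y) = p (x - y) * p (x - y) := by rw [h2, sq]
    exact mul_right_cancel₀ hpu.ne' this
  have h3 : |f (T x - T y)| ≤ p (x - y) * (L * p (x - y)) := by
    calc |f (T x - T y)| ≤ dualNormP p f * p (T x - T y) := abs_le_dualNormP_mul hp f _
      _ = p (x - y) * p (T x - T y) := by rw [hdual]
      _ ≤ p (x - y) * (L * p (x - y)) :=
        mul_le_mul_of_nonneg_left (hLip x y) hpu.le
  rw [div_le_iff₀ (by positivity)]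
  nlinarith

lemma nuLP_le {p : Seminorm ℝ X} (hp : p ∈ eqNorms X) {T : X → X} {L : ℝ} (hL : 0 ≤ L)
    (hLip : ∀ a b : X, p (T a - T b) ≤ L * p (a - b)) : nuLP p T ≤ L :=
  Real.sSup_le (stateSet_le hp hLip) hL

lemma normSeminorm_mem_eqNorms : normSeminorm ℝ X ∈ eqNorms X := by
  constructor
  · intro x hx
    simpa using hx
  · exact ⟨1, le_refl 1, fun x => by simp⟩

lemma eqNorms_exp_bound {p q : Seminorm ℝ X} (hp : p ∈ eqNorms X) (hq : q ∈ eqNorms X)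
    {δ : ℝ} (h : normDist p q < δ) :
    ∀ x : X, p x ≤ Real.exp δ * q x ∧ q x ≤ Real.exp δ * p x := by
  set S : Set ℝ := {k : ℝ | 1 ≤ k ∧ ∀ x : X, p x ≤ k * q x ∧ q x ≤ k * p x} with hS
  obtain ⟨k₁, hk₁, H₁⟩ := hp.2
  obtain ⟨k₂, hk₂, H₂⟩ := hq.2
  have hmem : k₁ * k₂ ∈ S := by
    refine ⟨by nlinarith, fun x => ⟨?_, ?_⟩⟩
    · calc p x ≤ k₁ * ‖x‖ := (H₁ x).1
        _ ≤ k₁ * (k₂ * q x) := by nlinarith [(H₂ x).2]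
        _ = k₁ * k₂ * q x := by ring
    · calc q x ≤ k₂ * ‖x‖ := (H₂ x).1
        _ ≤ k₂ * (k₁ * p x) := by nlinarith [(H₁ x).2]
        _ = k₁ * k₂ * p x := by ring
  have hne : S.Nonempty := ⟨_, hmem⟩
  have h1le : 1 ≤ sInf S := le_csInf hne fun k hk => hk.1
  have hkey : ∀ x : X, p x ≤ sInf S * q x ∧ q x ≤ sInf S * p x := by
    intro x
    constructor
    · rcases eq_or_ne (q x) 0 with h0 | h0
      · have : x = 0 := hq.1 x h0
        simp [this]
      · have hqx : 0 < q x := lt_of_le_of_ne (apply_nonneg q x) (Ne.symm h0)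
        have : p x / q x ≤ sInf S :=
          le_csInf hne fun k hk => (div_le_iff₀ hqx).2 ((hk.2 x).1)
        calc p x = p x / q x * q x := by field_simp
          _ ≤ sInf S * q x := mul_le_mul_of_nonneg_right this hqx.le
    · rcases eq_or_ne (p x) 0 with h0 | h0
      · have : x = 0 := hp.1 x h0
        simp [this]
      · have hpx : 0 < p x := lt_of_le_of_ne (apply_nonneg p x) (Ne.symm h0)
        have : q x / p x ≤ sInf S :=
          le_csInf hne fun k hk => (div_le_iff₀ hpx).2 ((hk.2 x).2)
        calc q x = q x / p x * p x := by field_simp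
          _ ≤ sInf S * p x := mul_le_mul_of_nonneg_right this hpx.le
  have hlt : sInf S < Real.exp δ := by
    have hpos : 0 < sInf S := lt_of_lt_of_le one_pos h1le
    have : Real.log (sInf S) < δ := h
    exact (Real.log_lt_iff_lt_exp hpos).1 this
  intro x
  exact ⟨le_trans (hkey x).1 (mul_le_mul_of_nonneg_right hlt.le (apply_nonneg q x)),
    le_trans (hkey x).2 (mul_le_mul_of_nonneg_right hlt.le (apply_nonneg p x))⟩

lemma nuLP_le_estimate {p q : Seminorm ℝ X} (hp : p ∈ eqNorms X) (hq : q ∈ eqNorms X)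
    {T : X → X} {L s D : ℝ} (hL : 0 ≤ L) (hs0 : 0 < s) (hs : s ≤ 1/2)
    (hD1 : 1 ≤ D) (hD2 : D^2 ≤ 2)
    (hLp : ∀ a b : X, p (T a - T b) ≤ L * p (a - b))
    (hLq : ∀ a b : X, q (T a - T b) ≤ L * q (a - b))
    (hpq : ∀ x : X, p x ≤ D * q x ∧ q x ≤ D * p x) :
    nuLP p T ≤ (1+s) * D^2 * nuLP q T + (D^2-1) * (L+1) / s + 2 * s * L := by
  have hν : 0 ≤ nuLP q T := nuLP_nonneg q T
  have hD0 : (0:ℝ) < D := lt_of_lt_of_le one_pos hD1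
  have hRHS : (0:ℝ) ≤ (1+s) * D^2 * nuLP q T + (D^2-1) * (L+1) / s + 2 * s * L := by
    have ha : 0 ≤ (1+s) * D^2 * nuLP q T :=
      mul_nonneg (by positivity) hν
    have hb : 0 ≤ (D^2-1) * (L+1) / s :=
      div_nonneg (mul_nonneg (by nlinarith) (by linarith)) hs0.le
    have hc : 0 ≤ 2 * s * L := by positivity
    linarith
  rw [nuLP]
  apply Real.sSup_le _ hRHS
  rintro r ⟨x, y, f, hxy, h1, h2, rfl⟩
  set u : X := x - y with hu_def
  set v : X := T x - T y with hv_def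
  set P : ℝ := p u with hP_def
  have hu : u ≠ 0 := sub_ne_zero.mpr hxy
  have hP : 0 < P := by
    rcases lt_or_eq_of_le (apply_nonneg p u) with h | h
    · exact h
    · exact absurd (hp.1 _ h.symm) hu
  have hdual : dualNormP p f = P := by
    have : dualNormP p f * P = P * P := by rw [h2, sq]
    exact mul_right_cancel₀ hP.ne' this
  set B : ℝ := q u with hB_def
  have hB : 0 < B := by
    rcases lt_or_eq_of_le (apply_nonneg q u) with h | h
    · exact h
    · exact absurd (hq.1 _ h.symm) hu
  -- sign
  set σ : ℝ := if 0 ≤ f v then 1 else -1 with hσ_def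
  have hσ : σ * f v = |f v| := by
    by_cases h : 0 ≤ f v
    · simp [hσ_def, h, abs_of_nonneg h]
    · simp [hσ_def, h, abs_of_neg (lt_of_not_ge h)]
  have hσabs : |σ| = 1 := by
    by_cases h : 0 ≤ f v <;> simp [hσ_def, h]
  -- perturbation parameter
  set t : ℝ := s / (L+1) with ht_def
  have hL1 : (0:ℝ) < L + 1 := by linarith
  have ht : 0 < t := div_pos hs0 hL1
  have htL : t * (L+1) = s := by rw [ht_def, div_mul_cancel₀ _ hL1.ne']
  -- perturbed point
  set x' : X := x + (t*σ) • v with hx'_def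
  set u' : X := x' - y with hu'_def
  have hu'u : u' = u + (t*σ) • v := by rw [hu'_def, hx'_def, hu_def]; abel
  set v' : X := T x' - T y with hv'_def
  set A : ℝ := q u' with hA_def
  have hqsmul : q ((t*σ) • v) = t * q v := by
    rw [map_smul_eq_mul, Real.norm_eq_abs, abs_mul, abs_of_pos ht, hσabs, mul_one]
  have hqv : q v ≤ L * B := by
    have := hLq x y
    rw [← hv_def, ← hu_def, ← hB_def] at this
    exact this
  have htqv : t * q v ≤ s * B := by
    have h1' : q v ≤ (L+1) * B := by nlinarith [hB.le]
    have h2' : t * q v ≤ t * ((L+1)*B) := mul_le_mul_of_nonneg_left h1' ht.le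
    calc t * q v ≤ t * ((L+1)*B) := h2'
      _ = s * B := by rw [← mul_assoc, htL]
  have hA_ub : A ≤ (1+s) * B := by
    have : q u' ≤ q u + q ((t*σ) • v) := by
      rw [hu'u]; exact map_add_le_add q u ((t*σ) • v)
    rw [hqsmul] at this
    rw [hA_def]
    linarith [htqv]
  have hA_lb : (1-s) * B ≤ A := by
    have hback : u = u' - (t*σ) • v := by rw [hu'u]; abel
    have : q u ≤ q u' + q ((t*σ) • v) := by
      calc q u = q (u' - (t*σ) • v) := by rw [← hback]
        _ ≤ q u' + q ((t*σ) • v) := map_sub_le_add q u' ((t*σ) • v)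
    rw [hqsmul] at this
    rw [hB_def] at htqv ⊢
    linarith
  have hA : 0 < A := by
    have h0 : 0 < (1-s) * B := mul_pos (by linarith) hB
    linarith
  have hu' : u' ≠ 0 := by
    intro h
    rw [hA_def, h, map_zero] at hA
    exact lt_irrefl 0 hA
  have hx'y : x' ≠ y := by
    intro h
    exact hu' (by rw [hu'_def, h, sub_self])
  -- q-norming functional at u'
  obtain ⟨g, hg1, hg2, hg3⟩ := exists_state hq hu'
  rw [← hA_def] at hg1 hg2 hg3
  clear_value u v P B σ t x' u' v' A
  -- the perturbed pair is a q-state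
  have hbddq : BddAbove {r : ℝ | ∃ (a b : X) (f : X →L[ℝ] ℝ), a ≠ b ∧
      f (a - b) = (q (a - b)) ^ 2 ∧ dualNormP q f * q (a - b) = (q (a - b)) ^ 2 ∧
      r = |f (T a - T b)| / (q (a - b)) ^ 2} := ⟨L, stateSet_le hq hLq⟩
  have hρ : |g v'| / A^2 ≤ nuLP q T := by
    rw [nuLP]
    apply le_csSup hbddq
    refine ⟨x', y, g, hx'y, ?_, ?_, ?_⟩
    · rw [← hu'_def, ← hA_def]; exact hg1
    · rw [← hu'_def, ← hA_def, hg2, sq]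
    · rw [← hv'_def, ← hu'_def, ← hA_def]
  have hgle : |g v'| ≤ nuLP q T * A^2 := by
    rw [div_le_iff₀ (by positivity)] at hρ
    exact hρ
  -- lower bound for |g v'|
  have hguA : g u ≤ A * B := le_trans (le_abs_self _) (by rw [hB_def]; exact hg3 u)
  have hgueq : A^2 = g u + t*(σ*(g v)) := by
    rw [← hg1, hu'u, map_add, map_smul, smul_eq_mul]; ring
  have e1 : A^2 - A*B ≤ t*(σ*(g v)) := by linarith
  have hx'x : x' - x = (t*σ) • v := by rw [hx'_def]; abel
  have hv'veq : v' - v = T x' - T x := by rw [hv'_def, hv_def]; abel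
  have hqv'v : q (v' - v) ≤ L * (t * q v) := by
    rw [hv'veq]
    calc q (T x' - T x) ≤ L * q (x' - x) := hLq x' x
      _ = L * (t * q v) := by rw [hx'x, hqsmul]
  have hgv'v : |g (v' - v)| ≤ A * (L * (t * q v)) := by
    calc |g (v' - v)| ≤ A * q (v' - v) := hg3 (v' - v)
      _ ≤ A * (L * (t * q v)) := mul_le_mul_of_nonneg_left hqv'v hA.le
  have e2 : -(A * (L * (t * q v))) ≤ σ * g (v' - v) := by
    have habs2 : |σ * g (v' - v)| = |g (v' - v)| := by rw [abs_mul, hσabs, one_mul]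
    have := neg_abs_le (σ * g (v' - v))
    rw [habs2] at this
    linarith
  have e3 : g v' = g v + g (v' - v) := by
    have := map_sub g v' v
    linarith
  have e5 : σ * (g v') ≤ |g v'| := by
    have : σ * (g v') ≤ |σ * (g v')| := le_abs_self _
    rwa [abs_mul, hσabs, one_mul] at this
  have e6 : t*(σ*(g v')) = t*(σ*(g v)) + t*(σ*(g (v'-v))) := by rw [e3]; ring
  have e7 : t * (-(A * (L * (t * q v)))) ≤ t*(σ*(g (v'-v))) :=
    mul_le_mul_of_nonneg_left e2 ht.le
  have e8 : t*(σ*(g v')) ≤ t*|g v'| := mul_le_mul_of_nonneg_left e5 ht.le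
  have key : A^2 - A*B - t*(A*(L*(t*q v))) ≤ t*|g v'| := by linarith [e1, e6, e7, e8]
  have h6 : A^2 - A*B - t*(A*(L*(t*q v))) ≤ t*(nuLP q T * A^2) := by
    have := mul_le_mul_of_nonneg_left hgle ht.le
    linarith
  have h6' : A*(A - B - t*(L*(t*q v))) ≤ A*(t*(nuLP q T * A)) := by linarith [h6]
  have h7 : A - B - t*(L*(t*q v)) ≤ t*(nuLP q T * A) := le_of_mul_le_mul_left h6' hA
  -- relate p and q
  have hBP : B ≤ D * P := by rw [hB_def, hP_def]; exact (hpq u).2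
  have hPA' : p u' ≤ D * A := by rw [hA_def]; exact (hpq u').1
  have hfu' : f u' = P^2 + t*|f v| := by
    rw [hu'u, map_add, map_smul, smul_eq_mul, h1, ← hσ]; ring
  have hPu' : P^2 + t*|f v| ≤ P * (D * A) := by
    calc P^2 + t*|f v| = f u' := (hfu').symm
      _ ≤ |f u'| := le_abs_self _
      _ ≤ dualNormP p f * p u' := abs_le_dualNormP_mul hp f u'
      _ = P * p u' := by rw [hdual]
      _ ≤ P * (D * A) := mul_le_mul_of_nonneg_left hPA' hP.le
  -- assemble
  have hAub2 : A ≤ (1+s) * (D*P) := by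
    have := mul_le_mul_of_nonneg_left hBP (by linarith : (0:ℝ) ≤ 1+s)
    linarith
  have hqvDP : q v ≤ L * (D*P) := le_trans hqv (mul_le_mul_of_nonneg_left hBP hL)
  have ht1 : t*(nuLP q T * A) ≤ t*(nuLP q T)*((1+s)*(D*P)) := by
    have := mul_le_mul_of_nonneg_left hAub2 (mul_nonneg ht.le hν)
    linarith
  have ht2 : t*(L*(t*q v)) ≤ t*(L*(t*(L*(D*P)))) := by
    have h0 : (0:ℝ) ≤ t*(L*t) := by positivity
    have := mul_le_mul_of_nonneg_left hqvDP h0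
    linarith
  have h9 : A ≤ D*P + t*(nuLP q T)*((1+s)*(D*P)) + t*(L*(t*(L*(D*P)))) := by
    linarith [h7, ht1, ht2, hBP]
  have hmain : P^2 + t*|f v| ≤
      P*(D*(D*P + t*(nuLP q T)*((1+s)*(D*P)) + t*(L*(t*(L*(D*P)))))) := by
    calc P^2 + t*|f v| ≤ P * (D * A) := hPu'
      _ ≤ _ := mul_le_mul_of_nonneg_left (mul_le_mul_of_nonneg_left h9 hD0.le) hP.le
  -- final computation
  have hdivt : (D^2-1) * (L+1) / s = (D^2-1) / t := by
    rw [ht_def, div_div_eq_mul_div]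
  rw [hdivt, div_le_iff₀ (by positivity : (0:ℝ) < P^2)]
  rw [← mul_le_mul_iff_of_pos_right ht]
  have hQ : (D^2-1)/t * t = D^2-1 := div_mul_cancel₀ _ ht.ne'
  have hQ2 : (D^2-1)/t * t * P^2 = (D^2-1) * P^2 := by rw [hQ]
  have htL2 : t * L^2 ≤ s * L := by
    have h : t*(L+1)*L = s*L := by rw [htL]
    have h2' : (0:ℝ) ≤ t*L := mul_nonneg ht.le hL
    linarith [h]
  have hfin : (0:ℝ) ≤ 2*(s*L) - D^2*(t*L^2) := by
    have h0 : (0:ℝ) ≤ t*L^2 := by positivity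
    have := mul_le_mul_of_nonneg_right hD2 h0
    linarith [htL2]
  have hfin2 : (0:ℝ) ≤ t * P^2 * (2*(s*L) - D^2*(t*L^2)) :=
    mul_nonneg (by positivity) hfin
  linarith [hmain, hQ2, hfin2]

end Aux

/-- For a Lipschitz map `T ∈ Lip₀(X,X)` on a real Banach space `X`, the map
`p ↦ ν_L^p(T)` is uniformly continuous on every bounded subset of `(E(X), μ)`. -/
theorem lipschitz_numerical_radius_uniformly_continuous_on_bounded
    {X : Type*} [NormedAddCommGroup X] [NormedSpace ℝ X] [CompleteSpace X]
    (T : X → X) (hT : IsLip0 T) :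
    ∀ κ > (0 : ℝ), ∀ ε > (0 : ℝ), ∃ δ > (0 : ℝ), ∀ p ∈ eqNorms X, ∀ q ∈ eqNorms X,
      normDist p (normSeminorm ℝ X) < κ → normDist q (normSeminorm ℝ X) < κ →
      normDist p q < δ → |nuLP p T - nuLP q T| < ε := by
  intro κ hκ ε hε
  obtain ⟨⟨K, hK⟩, hT0⟩ := hT
  set M : ℝ := Real.exp κ with hM_def
  have hM0 : 0 < M := Real.exp_pos κ
  set L : ℝ := M * M * (K : ℝ) with hL_def
  have hL : 0 ≤ L := by positivity
  set s : ℝ := min (1/2) (ε/(16*(L+1))) with hs_def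
  have hL1 : (0:ℝ) < L + 1 := by linarith
  have hs0 : 0 < s := lt_min (by norm_num) (by positivity)
  have hs12 : s ≤ 1/2 := min_le_left _ _
  have hsle : s ≤ ε/(16*(L+1)) := min_le_right _ _
  set C : ℝ := L + (L+1)/s with hC_def
  have hC : 0 < C := by
    rw [hC_def]
    have : 0 < (L+1)/s := div_pos hL1 hs0
    linarith
  set m : ℝ := min 1 (ε/(4*C)) with hm_def
  have hm0 : 0 < m := lt_min one_pos (by positivity)
  have hm1 : m ≤ 1 := min_le_left _ _
  have hmle : m ≤ ε/(4*C) := min_le_right _ _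
  have hδ0 : 0 < Real.log (1+m)/2 := by
    have := Real.log_pos (by linarith : (1:ℝ) < 1+m)
    linarith
  refine ⟨Real.log (1+m)/2, hδ0, ?_⟩
  intro p hp q hq hpκ hqκ hpq
  set D : ℝ := Real.exp (Real.log (1+m)/2) with hD_def
  clear_value M L s C m D
  have hD1 : (1:ℝ) ≤ D := by rw [hD_def]; exact Real.one_le_exp hδ0.le
  have hDsq : D^2 = 1+m := by
    rw [hD_def, sq, ← Real.exp_add]
    have : Real.log (1+m)/2 + Real.log (1+m)/2 = Real.log (1+m) := by ring
    rw [this, Real.exp_log (by linarith)]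
  have hD2 : D^2 ≤ 2 := by rw [hDsq]; linarith
  -- norm comparisons
  have hpq' : ∀ x : X, p x ≤ D * q x ∧ q x ≤ D * p x := by
    intro x
    rw [hD_def]
    exact eqNorms_exp_bound hp hq hpq x
  have hqp' : ∀ x : X, q x ≤ D * p x ∧ p x ≤ D * q x := fun x => ⟨(hpq' x).2, (hpq' x).1⟩
  have hMp : ∀ x : X, p x ≤ M * ‖x‖ ∧ ‖x‖ ≤ M * p x := by
    intro x
    rw [hM_def]
    have := eqNorms_exp_bound hp normSeminorm_mem_eqNorms hpκ x
    simpa using this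
  have hMq : ∀ x : X, q x ≤ M * ‖x‖ ∧ ‖x‖ ≤ M * q x := by
    intro x
    rw [hM_def]
    have := eqNorms_exp_bound hq normSeminorm_mem_eqNorms hqκ x
    simpa using this
  have hKnorm : ∀ a b : X, ‖T a - T b‖ ≤ (K:ℝ) * ‖a - b‖ := by
    intro a b
    have := hK.dist_le_mul a b
    rwa [dist_eq_norm, dist_eq_norm] at this
  have hLp : ∀ a b : X, p (T a - T b) ≤ L * p (a - b) := by
    intro a b
    calc p (T a - T b) ≤ M * ‖T a - T b‖ := (hMp _).1
      _ ≤ M * ((K:ℝ) * ‖a - b‖) :=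
        mul_le_mul_of_nonneg_left (hKnorm a b) hM0.le
      _ ≤ M * ((K:ℝ) * (M * p (a - b))) := by
        have h1 : ‖a - b‖ ≤ M * p (a - b) := (hMp _).2
        have h2 : (K:ℝ) * ‖a - b‖ ≤ (K:ℝ) * (M * p (a - b)) :=
          mul_le_mul_of_nonneg_left h1 K.coe_nonneg
        exact mul_le_mul_of_nonneg_left h2 hM0.le
      _ = L * p (a - b) := by rw [hL_def]; ring
  have hLq : ∀ a b : X, q (T a - T b) ≤ L * q (a - b) := by
    intro a b
    calc q (T a - T b) ≤ M * ‖T a - T b‖ := (hMq _).1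
      _ ≤ M * ((K:ℝ) * ‖a - b‖) :=
        mul_le_mul_of_nonneg_left (hKnorm a b) hM0.le
      _ ≤ M * ((K:ℝ) * (M * q (a - b))) := by
        have h1 : ‖a - b‖ ≤ M * q (a - b) := (hMq _).2
        have h2 : (K:ℝ) * ‖a - b‖ ≤ (K:ℝ) * (M * q (a - b)) :=
          mul_le_mul_of_nonneg_left h1 K.coe_nonneg
        exact mul_le_mul_of_nonneg_left h2 hM0.le
      _ = L * q (a - b) := by rw [hL_def]; ring
  -- bounds on the radii
  set a : ℝ := nuLP p T with ha_def
  set b : ℝ := nuLP q T with hb_def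
  have hνp0 : 0 ≤ a := ha_def ▸ nuLP_nonneg p T
  have hνq0 : 0 ≤ b := hb_def ▸ nuLP_nonneg q T
  have hνpL : a ≤ L := ha_def ▸ nuLP_le hp hL hLp
  have hνqL : b ≤ L := hb_def ▸ nuLP_le hq hL hLq
  have h1 : a ≤ (1+s) * D^2 * b + (D^2-1) * (L+1) / s + 2 * s * L := by
    rw [ha_def, hb_def]
    exact nuLP_le_estimate hp hq hL hs0 hs12 hD1 hD2 hLp hLq hpq'
  have h2 : b ≤ (1+s) * D^2 * a + (D^2-1) * (L+1) / s + 2 * s * L := by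
    rw [ha_def, hb_def]
    exact nuLP_le_estimate hq hp hL hs0 hs12 hD1 hD2 hLq hLp hqp'
  clear_value a b
  have hDm : (0:ℝ) ≤ D^2 - 1 := by rw [hDsq]; linarith
  have hE1 : a - b ≤ (D^2-1)*C + 4*s*L := by
    have e1 : (D^2-1)*b ≤ (D^2-1)*L := mul_le_mul_of_nonneg_left hνqL hDm
    have e2 : s*(D^2*b) ≤ s*(2*L) := by
      apply mul_le_mul_of_nonneg_left _ hs0.le
      have h' : D^2*b ≤ 2*b := mul_le_mul_of_nonneg_right hD2 hνq0
      linarith [h', hνqL]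
    have hCexp : (D^2-1)*C = (D^2-1)*L + (D^2-1)*(L+1)/s := by rw [hC_def]; ring
    linarith [h1, e1, e2, hCexp]
  have hE2 : b - a ≤ (D^2-1)*C + 4*s*L := by
    have e1 : (D^2-1)*a ≤ (D^2-1)*L := mul_le_mul_of_nonneg_left hνpL hDm
    have e2 : s*(D^2*a) ≤ s*(2*L) := by
      apply mul_le_mul_of_nonneg_left _ hs0.le
      have h' : D^2*a ≤ 2*a := mul_le_mul_of_nonneg_right hD2 hνp0
      linarith [h', hνpL]
    have hCexp : (D^2-1)*C = (D^2-1)*L + (D^2-1)*(L+1)/s := by rw [hC_def]; ring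
    linarith [h2, e1, e2, hCexp]
  -- numeric bounds on the error
  have hterm1 : (D^2-1)*C ≤ ε/4 := by
    have hmm : D^2 - 1 = m := by rw [hDsq]; ring
    rw [hmm]
    have h := mul_le_mul_of_nonneg_right hmle hC.le
    calc m * C ≤ ε/(4*C)*C := h
      _ = ε/4 := by
        field_simp
  have hterm2 : 4*s*L ≤ ε/4 := by
    have h := mul_le_mul_of_nonneg_right hsle (by linarith : (0:ℝ) ≤ 4*(L+1))
    have heq : ε/(16*(L+1)) * (4*(L+1)) = ε/4 := by
      field_simp
      ring
    rw [heq] at h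
    nlinarith [hs0.le, hL, h]
  have : |a - b| ≤ ε/2 := by
    rw [abs_le]
    constructor <;> linarith
  linarith

end
end

section
/- Let X be a real Banach space. Then the mapping p ↦ n_L^p(X) from (E(X), μ) to ℝ is continuous, and consequently the set N_L(X) = {n_L^p(X) : p ∈ E(X)} is an interval: whenever a, b ∈ N_L(X) and c ∈ ℝ satisfies a ≤ c ≤ b, then c ∈ N_L(X). -/
noncomputable section

/-- The Lipschitz norm of `T` with respect to the norm `p`. -/
def lipNormP {X : Type*} [NormedAddCommGroup X] [NormedSpace ℝ X] (p : Seminorm ℝ X)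
    (T : X → X) : ℝ :=
  sSup {r : ℝ | ∃ x y : X, x ≠ y ∧ r = p (T x - T y) / p (x - y)}

/-- The Lipschitz numerical index of `X` with respect to the norm `p`. -/
def nLP {X : Type*} [NormedAddCommGroup X] [NormedSpace ℝ X] (p : Seminorm ℝ X) : ℝ :=
  sInf {r : ℝ | ∃ T : X → X, (∃ K, LipschitzWith K T) ∧ T 0 = 0 ∧ lipNormP p T = 1 ∧
    r = nuLP p T}

namespace LipIndexAux

open Set

variable {X : Type*} [NormedAddCommGroup X] [NormedSpace ℝ X]

def lipSet (p : Seminorm ℝ X) (T : X → X) : Set ℝ :=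
  {r : ℝ | ∃ x y : X, x ≠ y ∧ r = p (T x - T y) / p (x - y)}

def nuSet (p : Seminorm ℝ X) (T : X → X) : Set ℝ :=
  {r : ℝ | ∃ (x y : X) (f : X →L[ℝ] ℝ), x ≠ y ∧
    f (x - y) = (p (x - y)) ^ 2 ∧ dualNormP p f * p (x - y) = (p (x - y)) ^ 2 ∧
    r = |f (T x - T y)| / (p (x - y)) ^ 2}

def nSet (p : Seminorm ℝ X) : Set ℝ :=
  {r : ℝ | ∃ T : X → X, (∃ K, LipschitzWith K T) ∧ T 0 = 0 ∧ lipNormP p T = 1 ∧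
    r = nuLP p T}

lemma lipNormP_def (p : Seminorm ℝ X) (T : X → X) : lipNormP p T = sSup (lipSet p T) := rfl
lemma nuLP_def (p : Seminorm ℝ X) (T : X → X) : nuLP p T = sSup (nuSet p T) := rfl
lemma nLP_def (p : Seminorm ℝ X) : nLP p = sInf (nSet p) := rfl

lemma eqn_pos {p : Seminorm ℝ X} (hp : p ∈ eqNorms X) {x : X} (hx : x ≠ 0) : 0 < p x :=
  lt_of_le_of_ne (apply_nonneg p x) (fun h => hx (hp.1 x h.symm))

lemma eqn_pos_sub {p : Seminorm ℝ X} (hp : p ∈ eqNorms X) {x y : X} (hxy : x ≠ y) :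
    0 < p (x - y) :=
  eqn_pos hp (sub_ne_zero.2 hxy)

lemma lip_bound {p : Seminorm ℝ X} (hp : p ∈ eqNorms X) {T : X → X} {K : NNReal}
    (hT : LipschitzWith K T) : ∃ C : ℝ, 0 ≤ C ∧ ∀ x y : X, p (T x - T y) ≤ C * p (x - y) := by
  obtain ⟨k, hk1, hk⟩ := hp.2
  have hk0 : (0:ℝ) ≤ k := by linarith
  refine ⟨k * K * k, by positivity, fun x y => ?_⟩
  have h1 : p (T x - T y) ≤ k * ‖T x - T y‖ := (hk _).1
  have h2 : ‖T x - T y‖ ≤ (K : ℝ) * ‖x - y‖ := by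
    simpa [dist_eq_norm] using hT.dist_le_mul x y
  have h3 : ‖x - y‖ ≤ k * p (x - y) := (hk _).2
  calc p (T x - T y) ≤ k * ‖T x - T y‖ := h1
    _ ≤ k * ((K : ℝ) * ‖x - y‖) := by
        exact mul_le_mul_of_nonneg_left h2 hk0
    _ ≤ k * ((K : ℝ) * (k * p (x - y))) := by
        have := mul_le_mul_of_nonneg_left h3 (K.coe_nonneg)
        exact mul_le_mul_of_nonneg_left this hk0
    _ = k * K * k * p (x - y) := by ring

lemma lipSet_bddAbove {p : Seminorm ℝ X} (hp : p ∈ eqNorms X) {T : X → X}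
    (hT : ∃ K, LipschitzWith K T) : BddAbove (lipSet p T) := by
  obtain ⟨K, hTK⟩ := hT
  obtain ⟨C, hC0, hC⟩ := lip_bound hp hTK
  refine ⟨C, ?_⟩
  rintro r ⟨x, y, hxy, rfl⟩
  exact (div_le_iff₀ (eqn_pos_sub hp hxy)).2 ((hC x y).trans (by rw [mul_comm]))

lemma le_lipNormP {p : Seminorm ℝ X} (hp : p ∈ eqNorms X) {T : X → X}
    (hT : ∃ K, LipschitzWith K T) {x y : X} (hxy : x ≠ y) :
    p (T x - T y) / p (x - y) ≤ lipNormP p T :=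
  le_csSup (lipSet_bddAbove hp hT) ⟨x, y, hxy, rfl⟩

lemma lipNormP_mul {p : Seminorm ℝ X} (hp : p ∈ eqNorms X) {T : X → X}
    (hT : ∃ K, LipschitzWith K T) (x y : X) :
    p (T x - T y) ≤ lipNormP p T * p (x - y) := by
  rcases eq_or_ne x y with rfl | hxy
  · simp
  · exact (div_le_iff₀ (eqn_pos_sub hp hxy)).1 (le_lipNormP hp hT hxy)

lemma lipNormP_nonneg [Nontrivial X] {p : Seminorm ℝ X} (hp : p ∈ eqNorms X) {T : X → X}
    (hT : ∃ K, LipschitzWith K T) : 0 ≤ lipNormP p T := by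
  obtain ⟨x, hx⟩ := exists_ne (0 : X)
  have h := le_lipNormP hp hT (x := x) (y := 0) hx
  have h0 : 0 ≤ p (T x - T 0) / p (x - 0) :=
    div_nonneg (apply_nonneg _ _) (apply_nonneg _ _)
  linarith

lemma lipNormP_le {p : Seminorm ℝ X} (hp : p ∈ eqNorms X) {T : X → X} {C : ℝ}
    (h : ∀ x y : X, x ≠ y → p (T x - T y) ≤ C * p (x - y)) (hC : 0 ≤ C) :
    lipNormP p T ≤ C := by
  apply Real.sSup_le _ hC
  rintro r ⟨x, y, hxy, rfl⟩
  exact (div_le_iff₀ (eqn_pos_sub hp hxy)).2 ((h x y hxy).trans (by rw [mul_comm]))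

lemma exists_norming {p : Seminorm ℝ X} (hp : p ∈ eqNorms X)
    {w : X} (hw : w ≠ 0) :
    ∃ f : X →L[ℝ] ℝ, f w = p w ∧ ∀ z, |f z| ≤ p z := by
  have hf : ∀ x : (LinearPMap.mkSpanSingleton w (p w) hw : X →ₗ.[ℝ] ℝ).domain,
      (LinearPMap.mkSpanSingleton w (p w) hw) x ≤ p x := by
    rintro ⟨z, hz⟩
    obtain ⟨c, rfl⟩ := Submodule.mem_span_singleton.1 hz
    rw [LinearPMap.mkSpanSingleton'_apply]
    have h1 : c • p w ≤ |c| * p w := by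
      rw [smul_eq_mul]
      exact mul_le_mul_of_nonneg_right (le_abs_self c) (apply_nonneg p w)
    exact h1.trans (by rw [map_smul_eq_mul, Real.norm_eq_abs])
  obtain ⟨g, hg_eq, hg_le⟩ := exists_extension_of_le_sublinear
      (LinearPMap.mkSpanSingleton w (p w) hw) (fun z => p z)
      (fun c hc x => by show p (c • x) = c * p x; rw [map_smul_eq_mul, Real.norm_eq_abs, abs_of_pos hc])
      (fun x y => map_add_le_add p x y) hf
  have habs : ∀ z, |g z| ≤ p z := by
    intro z
    rcases abs_cases (g z) with ⟨h, _⟩ | ⟨h, _⟩ <;> rw [h]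
    · exact hg_le z
    · calc -g z = g (-z) := by rw [map_neg]
        _ ≤ p (-z) := hg_le _
        _ = p z := map_neg_eq_map p z
  obtain ⟨k, hk1, hk⟩ := hp.2
  refine ⟨g.mkContinuous k (fun z => ?_), ?_, fun z => ?_⟩
  · rw [Real.norm_eq_abs]; exact (habs z).trans (hk z).1
  · have h := hg_eq ⟨w, Submodule.mem_span_singleton_self w⟩
    rw [LinearMap.mkContinuous_apply, h, LinearPMap.mkSpanSingleton_apply]
  · rw [LinearMap.mkContinuous_apply]; exact habs z


lemma dual_bddAbove {p : Seminorm ℝ X} (hp : p ∈ eqNorms X) (f : X →L[ℝ] ℝ) :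
    BddAbove {r : ℝ | ∃ z : X, p z ≤ 1 ∧ r = |f z|} := by
  obtain ⟨k, hk1, hk⟩ := hp.2
  refine ⟨‖f‖ * k, ?_⟩
  rintro r ⟨z, hz, rfl⟩
  have h1 : |f z| ≤ ‖f‖ * ‖z‖ := by
    rw [← Real.norm_eq_abs]; exact f.le_opNorm z
  have h2 : ‖z‖ ≤ k * p z := (hk z).2
  nlinarith [mul_le_mul_of_nonneg_left h2 (norm_nonneg f),
    mul_le_mul_of_nonneg_left hz (mul_nonneg (norm_nonneg f) (by linarith : (0:ℝ) ≤ k))]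

lemma abs_le_dual {p : Seminorm ℝ X} (hp : p ∈ eqNorms X) (f : X →L[ℝ] ℝ) (z : X) :
    |f z| ≤ dualNormP p f * p z := by
  rcases eq_or_ne z 0 with rfl | hz
  · simp
  · have hpz := eqn_pos hp hz
    have hmem : |f ((p z)⁻¹ • z)| ∈ {r : ℝ | ∃ z : X, p z ≤ 1 ∧ r = |f z|} :=
      ⟨(p z)⁻¹ • z, by
        rw [map_smul_eq_mul, Real.norm_eq_abs, abs_of_pos (inv_pos.2 hpz),
          inv_mul_cancel₀ hpz.ne'], rfl⟩
    have h := le_csSup (dual_bddAbove hp f) hmem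
    rw [map_smul, smul_eq_mul, abs_mul, abs_of_pos (inv_pos.2 hpz)] at h
    calc |f z| = p z * ((p z)⁻¹ * |f z|) := by field_simp
      _ ≤ p z * dualNormP p f := mul_le_mul_of_nonneg_left h hpz.le
      _ = dualNormP p f * p z := mul_comm _ _

lemma dual_eq_of_state {p : Seminorm ℝ X} (hp : p ∈ eqNorms X) {x y : X} {f : X →L[ℝ] ℝ}
    (hxy : x ≠ y) (hdual : dualNormP p f * p (x - y) = (p (x - y)) ^ 2) :
    dualNormP p f = p (x - y) :=
  mul_right_cancel₀ (eqn_pos_sub hp hxy).ne' (by rw [hdual, sq])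

lemma nu_elt_le {p : Seminorm ℝ X} (hp : p ∈ eqNorms X) {T : X → X}
    (hT : ∃ K, LipschitzWith K T) : ∀ r ∈ nuSet p T, r ≤ lipNormP p T := by
  rintro r ⟨x, y, f, hxy, hfu, hdual, rfl⟩
  have hu := eqn_pos_sub hp hxy
  have hdf := dual_eq_of_state hp hxy hdual
  have h1 : |f (T x - T y)| ≤ p (x - y) * p (T x - T y) := by
    rw [← hdf]; exact abs_le_dual hp f _
  have h2 : p (T x - T y) ≤ lipNormP p T * p (x - y) := lipNormP_mul hp hT x y
  rw [div_le_iff₀ (pow_pos hu 2)]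
  calc |f (T x - T y)| ≤ p (x - y) * (lipNormP p T * p (x - y)) :=
        le_trans h1 (mul_le_mul_of_nonneg_left h2 hu.le)
    _ = lipNormP p T * p (x - y) ^ 2 := by ring

lemma nuSet_bddAbove {p : Seminorm ℝ X} (hp : p ∈ eqNorms X) {T : X → X}
    (hT : ∃ K, LipschitzWith K T) : BddAbove (nuSet p T) :=
  ⟨lipNormP p T, nu_elt_le hp hT⟩

lemma nuLP_nonneg (p : Seminorm ℝ X) (T : X → X) : 0 ≤ nuLP p T := by
  rw [nuLP_def]
  apply Real.sSup_nonneg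
  rintro r ⟨x, y, f, hxy, _, _, rfl⟩
  positivity

lemma nuLP_le_lip [Nontrivial X] {p : Seminorm ℝ X} (hp : p ∈ eqNorms X) {T : X → X}
    (hT : ∃ K, LipschitzWith K T) : nuLP p T ≤ lipNormP p T := by
  rw [nuLP_def]
  exact Real.sSup_le (nu_elt_le hp hT) (lipNormP_nonneg hp hT)

lemma state_le_nu {p : Seminorm ℝ X} (hp : p ∈ eqNorms X) {T : X → X}
    (hT : ∃ K, LipschitzWith K T) {x y : X} {f : X →L[ℝ] ℝ} (hxy : x ≠ y)
    (hfu : f (x - y) = (p (x - y)) ^ 2)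
    (hdual : dualNormP p f * p (x - y) = (p (x - y)) ^ 2) :
    |f (T x - T y)| ≤ nuLP p T * p (x - y) ^ 2 := by
  have hu := eqn_pos_sub hp hxy
  have h := le_csSup (nuSet_bddAbove hp hT) (⟨x, y, f, hxy, hfu, hdual, rfl⟩ :
    |f (T x - T y)| / (p (x - y)) ^ 2 ∈ nuSet p T)
  rw [nuLP_def]
  exact (div_le_iff₀ (pow_pos hu 2)).1 h

lemma real_sSup_mul_image {c : ℝ} (hc : 0 < c) (S : Set ℝ) :
    sSup ((fun r => c * r) '' S) = c * sSup S := by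
  rcases S.eq_empty_or_nonempty with rfl | hne
  · simp [Real.sSup_empty]
  by_cases hbd : BddAbove S
  · have hbd' : BddAbove ((fun r => c * r) '' S) := by
      obtain ⟨B, hB⟩ := hbd
      exact ⟨c * B, by rintro r ⟨s, hs, rfl⟩; exact mul_le_mul_of_nonneg_left (hB hs) hc.le⟩
    apply le_antisymm
    · apply csSup_le (hne.image _)
      rintro r ⟨s, hs, rfl⟩
      exact mul_le_mul_of_nonneg_left (le_csSup hbd hs) hc.le
    · rw [mul_comm, ← le_div_iff₀ hc]
      apply csSup_le hne
      intro s hs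
      rw [le_div_iff₀ hc, mul_comm]
      exact le_csSup hbd' ⟨s, hs, rfl⟩
  · have hbd' : ¬ BddAbove ((fun r => c * r) '' S) := by
      rintro ⟨B, hB⟩
      refine hbd ⟨B / c, fun s hs => ?_⟩
      rw [le_div_iff₀ hc, mul_comm]
      exact hB ⟨s, hs, rfl⟩
    rw [Real.sSup_of_not_bddAbove hbd, Real.sSup_of_not_bddAbove hbd', mul_zero]

lemma lipSet_smul (p : Seminorm ℝ X) (T : X → X) {c : ℝ} (hc : 0 < c) :
    lipSet p (fun z => c • T z) = (fun r => c * r) '' lipSet p T := by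
  ext r
  constructor
  · rintro ⟨x, y, hxy, rfl⟩
    exact ⟨p (T x - T y) / p (x - y), ⟨x, y, hxy, rfl⟩, by
      rw [← smul_sub, map_smul_eq_mul, Real.norm_eq_abs, abs_of_pos hc, mul_div_assoc]⟩
  · rintro ⟨r, ⟨x, y, hxy, rfl⟩, rfl⟩
    exact ⟨x, y, hxy, by
      rw [← smul_sub, map_smul_eq_mul, Real.norm_eq_abs, abs_of_pos hc, mul_div_assoc]⟩

lemma nuSet_smul (p : Seminorm ℝ X) (T : X → X) {c : ℝ} (hc : 0 < c) :
    nuSet p (fun z => c • T z) = (fun r => c * r) '' nuSet p T := by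
  have key : ∀ (f : X →L[ℝ] ℝ) (x y : X),
      |f (c • T x - c • T y)| / (p (x - y)) ^ 2 = c * (|f (T x - T y)| / (p (x - y)) ^ 2) := by
    intro f x y
    rw [← smul_sub, map_smul, smul_eq_mul, abs_mul, abs_of_pos hc, mul_div_assoc]
  ext r
  constructor
  · rintro ⟨x, y, f, hxy, hfu, hdual, rfl⟩
    exact ⟨|f (T x - T y)| / (p (x - y)) ^ 2, ⟨x, y, f, hxy, hfu, hdual, rfl⟩, (key f x y).symm⟩
  · rintro ⟨r, ⟨x, y, f, hxy, hfu, hdual, rfl⟩, rfl⟩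
    exact ⟨x, y, f, hxy, hfu, hdual, (key f x y).symm⟩

lemma lipNormP_smul (p : Seminorm ℝ X) (T : X → X) {c : ℝ} (hc : 0 < c) :
    lipNormP p (fun z => c • T z) = c * lipNormP p T := by
  rw [lipNormP_def, lipNormP_def, lipSet_smul p T hc, real_sSup_mul_image hc]

lemma nuLP_smul (p : Seminorm ℝ X) (T : X → X) {c : ℝ} (hc : 0 < c) :
    nuLP p (fun z => c • T z) = c * nuLP p T := by
  rw [nuLP_def, nuLP_def, nuSet_smul p T hc, real_sSup_mul_image hc]

lemma lipSet_neg (p : Seminorm ℝ X) (T : X → X) :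
    lipSet p (fun z => -T z) = lipSet p T := by
  have key : ∀ x y : X, p (-T x - -T y) = p (T x - T y) := by
    intro x y
    rw [neg_sub_neg, map_sub_rev]
  ext r
  constructor
  · rintro ⟨x, y, hxy, rfl⟩
    exact ⟨x, y, hxy, by rw [key]⟩
  · rintro ⟨x, y, hxy, rfl⟩
    exact ⟨x, y, hxy, by rw [key]⟩

lemma nuSet_neg (p : Seminorm ℝ X) (T : X → X) :
    nuSet p (fun z => -T z) = nuSet p T := by
  have key : ∀ (f : X →L[ℝ] ℝ) (x y : X), |f (-T x - -T y)| = |f (T x - T y)| := by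
    intro f x y
    have h : -T x - -T y = -(T x - T y) := by abel
    rw [h, map_neg, abs_neg]
  ext r
  constructor
  · rintro ⟨x, y, f, hxy, hfu, hdual, rfl⟩
    exact ⟨x, y, f, hxy, hfu, hdual, by rw [key]⟩
  · rintro ⟨x, y, f, hxy, hfu, hdual, rfl⟩
    exact ⟨x, y, f, hxy, hfu, hdual, by rw [key]⟩

lemma lips_aux {T : X → X} (hT : ∃ K, LipschitzWith K T) (t : ℝ) :
    ∃ K, LipschitzWith K (fun z => z + t • T z) := by
  obtain ⟨K, hK⟩ := hT
  exact ⟨1 + ‖t‖₊ * K, LipschitzWith.id.add ((lipschitzWith_smul t).comp hK)⟩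

lemma lips_neg {T : X → X} (hT : ∃ K, LipschitzWith K T) :
    ∃ K, LipschitzWith K (fun z => -T z) := by
  obtain ⟨K, hK⟩ := hT
  exact ⟨K, hK.neg⟩

lemma lipNormP_id [Nontrivial X] {p : Seminorm ℝ X} (hp : p ∈ eqNorms X) :
    lipNormP p (fun z : X => z) = 1 := by
  rw [lipNormP_def]
  have h : lipSet p (fun z : X => z) = {1} := by
    ext r
    constructor
    · rintro ⟨x, y, hxy, rfl⟩
      have := eqn_pos_sub hp hxy
      simp [div_self this.ne']
    · rintro rfl
      obtain ⟨x, hx⟩ := exists_ne (0 : X)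
      refine ⟨x, 0, hx, ?_⟩
      rw [div_self (eqn_pos_sub hp hx).ne']
  rw [h, csSup_singleton]

lemma nSet_bddBelow (p : Seminorm ℝ X) : BddBelow (nSet p) := by
  refine ⟨0, ?_⟩
  rintro r ⟨T, hT, hT0, hlip, rfl⟩
  exact nuLP_nonneg p T

lemma id_mem_nSet [Nontrivial X] {p : Seminorm ℝ X} (hp : p ∈ eqNorms X) :
    nuLP p (fun z : X => z) ∈ nSet p :=
  ⟨fun z => z, ⟨1, LipschitzWith.id⟩, rfl, lipNormP_id hp, rfl⟩

lemma nLP_nonneg (p : Seminorm ℝ X) : 0 ≤ nLP p := by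
  rw [nLP_def]
  apply Real.sInf_nonneg
  rintro r ⟨T, hT, hT0, hlip, rfl⟩
  exact nuLP_nonneg p T

lemma nLP_le_one [Nontrivial X] {p : Seminorm ℝ X} (hp : p ∈ eqNorms X) : nLP p ≤ 1 := by
  have h1 : nLP p ≤ nuLP p (fun z : X => z) := csInf_le (nSet_bddBelow p) (id_mem_nSet hp)
  have h2 : nuLP p (fun z : X => z) ≤ lipNormP p (fun z : X => z) :=
    nuLP_le_lip hp ⟨1, LipschitzWith.id⟩
  rw [lipNormP_id hp] at h2
  linarith

lemma nLP_mul_lip_le [Nontrivial X] {p : Seminorm ℝ X} (hp : p ∈ eqNorms X) {T : X → X}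
    (hT : ∃ K, LipschitzWith K T) (hT0 : T 0 = 0) (hpos : 0 < lipNormP p T) :
    nLP p * lipNormP p T ≤ nuLP p T := by
  set d := lipNormP p T with hd
  have hmem : nuLP p (fun z => d⁻¹ • T z) ∈ nSet p := by
    refine ⟨fun z => d⁻¹ • T z, ?_, by show d⁻¹ • T 0 = 0; rw [hT0, smul_zero], ?_, rfl⟩
    · obtain ⟨K, hK⟩ := hT
      exact ⟨‖d⁻¹‖₊ * K, (lipschitzWith_smul d⁻¹).comp hK⟩
    · rw [lipNormP_smul p T (inv_pos.2 hpos), inv_mul_cancel₀ hpos.ne']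
  have h1 : nLP p ≤ nuLP p (fun z => d⁻¹ • T z) := csInf_le (nSet_bddBelow p) hmem
  rw [nuLP_smul p T (inv_pos.2 hpos)] at h1
  calc nLP p * d ≤ (d⁻¹ * nuLP p T) * d := mul_le_mul_of_nonneg_right h1 hpos.le
    _ = nuLP p T := by field_simp

lemma arith_e1 {pw pu pv K nu t : ℝ} (hpu : 0 < pu) (hpw : 0 < pw) (ht : 0 ≤ t) (hK0 : 0 ≤ K)
    (hpv0 : 0 ≤ pv) (hv : pv ≤ K * pu)
    (hkey : pw ^ 2 ≤ pw * pu + t * (nu * pw ^ 2) + t * (pw * (t * K * pv))) :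
    pw * (1 - t * nu) ≤ (1 + K ^ 2 * t ^ 2) * pu := by
  have h := mul_le_mul_of_nonneg_left hv (show (0:ℝ) ≤ t * pw * (t * K) by positivity)
  have h7 : t * (pw * (t * K * pv)) ≤ K ^ 2 * t ^ 2 * (pw * pu) := by nlinarith [h]
  have h8 : (pw * (1 - t * nu)) * pw ≤ ((1 + K ^ 2 * t ^ 2) * pu) * pw := by nlinarith [hkey, h7]
  exact le_of_mul_le_mul_right h8 hpw

lemma E1 [Nontrivial X] {p : Seminorm ℝ X} (hp : p ∈ eqNorms X) {T : X → X}
    (hT : ∃ K, LipschitzWith K T) {t : ℝ} (ht : 0 < t)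
    (htK : t * lipNormP p T < 1) (htν : t * nuLP p T < 1) :
    lipNormP p (fun z => z + t • T z) ≤
      (1 + (lipNormP p T) ^ 2 * t ^ 2) / (1 - t * nuLP p T) := by
  set K := lipNormP p T with hKdef
  set ν := nuLP p T with hνdef
  have hK0 : 0 ≤ K := lipNormP_nonneg hp hT
  have hν0 : 0 ≤ ν := nuLP_nonneg p T
  have hden : 0 < 1 - t * ν := by linarith
  have hCpos : 0 < (1 + K ^ 2 * t ^ 2) / (1 - t * ν) := div_pos (by positivity) hden
  apply lipNormP_le hp ?_ hCpos.le
  intro x y hxy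
  show p ((x + t • T x) - (y + t • T y)) ≤ (1 + K ^ 2 * t ^ 2) / (1 - t * ν) * p (x - y)
  have hu : 0 < p (x - y) := eqn_pos_sub hp hxy
  have hv : p (T x - T y) ≤ K * p (x - y) := lipNormP_mul hp hT x y
  set u := x - y with hu_def
  set v := T x - T y with hv_def
  have hvec : (x + t • T x) - (y + t • T y) = u + t • v := by
    rw [hu_def, hv_def, smul_sub]; abel
  rw [hvec]
  set w := u + t • v with hw_def
  have htv : p (t • v) = t * p v := by
    rw [map_smul_eq_mul, Real.norm_eq_abs, abs_of_pos ht]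
  have hw_lb : p u * (1 - t * K) ≤ p w := by
    have h1 : p u ≤ p w + p (t • v) := by
      calc p u = p (w - t • v) := by rw [hw_def, add_sub_cancel_right]
        _ = p (w + (- (t • v))) := by rw [sub_eq_add_neg]
        _ ≤ p w + p (- (t • v)) := map_add_le_add p _ _
        _ = p w + p (t • v) := by rw [map_neg_eq_map]
    linarith [h1, htv, mul_le_mul_of_nonneg_left hv ht.le]
  have hw0 : 0 < p w := by
    have h2 : 0 < 1 - t * K := by
      have h3 : t * K < 1 := htK
      linarith
    have := mul_pos hu h2
    linarith
  have hwne : w ≠ 0 := by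
    intro h0
    rw [h0, map_zero] at hw0
    exact lt_irrefl 0 hw0
  obtain ⟨f₀, hf₀w, hf₀b⟩ := exists_norming hp hwne
  set f : X →L[ℝ] ℝ := (p w : ℝ) • f₀ with hfdef
  have hfz : ∀ z, f z = p w * f₀ z := fun z => by
    rw [hfdef, ContinuousLinearMap.smul_apply, smul_eq_mul]
  have hfb : ∀ z, |f z| ≤ p w * p z := fun z => by
    rw [hfz, abs_mul, abs_of_nonneg (apply_nonneg p w)]
    exact mul_le_mul_of_nonneg_left (hf₀b z) (apply_nonneg p w)
  have hfw : f w = p w ^ 2 := by rw [hfz, hf₀w, sq]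
  have hdual : dualNormP p f = p w := by
    apply le_antisymm
    · apply Real.sSup_le _ (apply_nonneg p w)
      rintro r ⟨z, hz, rfl⟩
      calc |f z| ≤ p w * p z := hfb z
        _ ≤ p w * 1 := mul_le_mul_of_nonneg_left hz (apply_nonneg p w)
        _ = p w := mul_one _
    · apply le_csSup
      · refine ⟨p w, ?_⟩
        rintro r ⟨z, hz, rfl⟩
        calc |f z| ≤ p w * p z := hfb z
          _ ≤ p w * 1 := mul_le_mul_of_nonneg_left hz (apply_nonneg p w)
          _ = p w := mul_one _
      · refine ⟨(p w)⁻¹ • w, ?_, ?_⟩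
        · rw [map_smul_eq_mul, Real.norm_eq_abs, abs_of_pos (inv_pos.2 hw0),
            inv_mul_cancel₀ hw0.ne']
        · rw [map_smul, smul_eq_mul, abs_mul, abs_of_pos (inv_pos.2 hw0), hfw,
            abs_of_nonneg (by positivity : (0:ℝ) ≤ p w ^ 2)]
          field_simp
  -- the state at the pair (x + t • v, y)
  have hsub : (x + t • v) - y = w := by rw [hw_def, hu_def]; abel
  have hxyne : x + t • v ≠ y := by
    intro h
    apply hwne
    rw [← hsub, h, sub_self]
  have hstate : |f (T (x + t • v) - T y)| ≤ ν * p w ^ 2 := by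
    have h := state_le_nu hp hT hxyne (f := f) (by rw [hsub, hfw]) (by rw [hsub, hdual, sq])
    rw [hsub] at h
    exact h
  have herr_vec : v - (T (x + t • v) - T y) = T x - T (x + t • v) := by
    rw [hv_def]; abel
  have herr : p (v - (T (x + t • v) - T y)) ≤ t * K * p v := by
    rw [herr_vec]
    have h1 : p (T x - T (x + t • v)) ≤ K * p (x - (x + t • v)) := lipNormP_mul hp hT x _
    have h2 : p (x - (x + t • v)) = t * p v := by
      have e : x - (x + t • v) = -(t • v) := by abel
      rw [e, map_neg_eq_map, htv]
    rw [h2] at h1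
    linarith [h1]
  have hkey : p w ^ 2 ≤ p w * p u + t * (ν * p w ^ 2) + t * (p w * (t * K * p v)) := by
    have hsplit : p w ^ 2 = f u + t * f v := by
      rw [← hfw, hw_def, map_add, map_smul, smul_eq_mul]
    have e1 : f u ≤ p w * p u := (le_abs_self _).trans (hfb u)
    have e2 : f (T (x + t • v) - T y) ≤ ν * p w ^ 2 := (le_abs_self _).trans hstate
    have e3 : f (v - (T (x + t • v) - T y)) ≤ p w * (t * K * p v) :=
      (le_abs_self _).trans ((hfb _).trans (mul_le_mul_of_nonneg_left herr (apply_nonneg p w)))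
    have hmsub : f (v - (T (x + t • v) - T y)) = f v - f (T (x + t • v) - T y) :=
      map_sub f _ _
    have hfv_le : f v ≤ ν * p w ^ 2 + p w * (t * K * p v) := by linarith
    have := mul_le_mul_of_nonneg_left hfv_le ht.le
    linarith
  have h9 : p w * (1 - t * ν) ≤ (1 + K ^ 2 * t ^ 2) * p u :=
    arith_e1 hu hw0 ht.le hK0 (apply_nonneg p v) hv hkey
  rw [div_mul_eq_mul_div, le_div_iff₀ hden]
  exact h9

lemma lip_le_sq [Nontrivial X] {p q : Seminorm ℝ X} (hp : p ∈ eqNorms X) (hq : q ∈ eqNorms X)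
    {k : ℝ} (hk1 : 1 ≤ k) (hcmp : ∀ x, p x ≤ k * q x ∧ q x ≤ k * p x)
    {T : X → X} (hT : ∃ K, LipschitzWith K T) :
    lipNormP p T ≤ k ^ 2 * lipNormP q T := by
  have hk0 : (0:ℝ) < k := lt_of_lt_of_le one_pos hk1
  have hlq0 : 0 ≤ lipNormP q T := lipNormP_nonneg hq hT
  apply lipNormP_le hp _ (by positivity)
  intro x y hxy
  have hqv := lipNormP_mul hq hT x y
  have h1 : p (T x - T y) ≤ k * q (T x - T y) := (hcmp _).1
  have h2 : q (x - y) ≤ k * p (x - y) := (hcmp _).2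
  calc p (T x - T y) ≤ k * q (T x - T y) := h1
    _ ≤ k * (lipNormP q T * q (x - y)) := mul_le_mul_of_nonneg_left hqv hk0.le
    _ ≤ k * (lipNormP q T * (k * p (x - y))) := by
        exact mul_le_mul_of_nonneg_left (mul_le_mul_of_nonneg_left h2 hlq0) hk0.le
    _ = k ^ 2 * lipNormP q T * p (x - y) := by ring

lemma arith_e2 {pu fv t A r : ℝ} (hpu : 0 < pu) (ht : 0 < t)
    (hlow : pu ^ 2 + t * fv ≤ pu * A) (hr : r = fv / pu ^ 2) :
    (1 + t * r) * pu ≤ A := by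
  have h : (1 + t * r) * pu = (pu ^ 2 + t * fv) / pu := by
    rw [hr]; field_simp
  rw [h, div_le_iff₀ hpu]
  nlinarith [hlow]

lemma one_add_nu_le_max [Nontrivial X] {p : Seminorm ℝ X} (hp : p ∈ eqNorms X) {T : X → X}
    (hT : ∃ K, LipschitzWith K T) {t : ℝ} (ht : 0 < t) :
    1 + t * nuLP p T ≤
      max (lipNormP p (fun z => z + t • T z)) (lipNormP p (fun z => z + t • -T z)) := by
  have hTneg : ∃ K, LipschitzWith K (fun z => -T z) := lips_neg hT
  have hTA : ∃ K, LipschitzWith K (fun z => z + t • T z) := lips_aux hT t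
  have hTB : ∃ K, LipschitzWith K (fun z => z + t • -T z) := lips_aux hTneg t
  set A := lipNormP p (fun z => z + t • T z) with hA
  set B := lipNormP p (fun z => z + t • -T z) with hB
  have hmax1 : 1 ≤ max A B := by
    obtain ⟨x0, hx0⟩ := exists_ne (0 : X)
    have hu : 0 < p (x0 - 0) := eqn_pos_sub hp hx0
    have hA1 : p ((x0 + t • T x0) - ((0:X) + t • T 0)) / p (x0 - 0) ≤ A :=
      le_lipNormP hp hTA hx0
    have hB1 : p ((x0 + t • -T x0) - ((0:X) + t • -T 0)) / p (x0 - 0) ≤ B :=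
      le_lipNormP hp hTB hx0
    have hvA : (x0 + t • T x0) - ((0:X) + t • T 0) = (x0 - 0) + t • (T x0 - T 0) := by
      rw [smul_sub]; abel
    have hvB : (x0 + t • -T x0) - ((0:X) + t • -T 0) = (x0 - 0) - t • (T x0 - T 0) := by
      rw [smul_sub]; simp only [smul_neg]; abel
    rw [hvA] at hA1
    rw [hvB] at hB1
    have hsum : 2 * p (x0 - 0) ≤ p ((x0 - 0) + t • (T x0 - T 0)) +
        p ((x0 - 0) - t • (T x0 - T 0)) := by
      have e : ((x0 - 0) + t • (T x0 - T 0)) + ((x0 - 0) - t • (T x0 - T 0))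
          = (2:ℝ) • (x0 - 0) := by rw [two_smul]; abel
      have h := map_add_le_add p ((x0 - 0) + t • (T x0 - T 0)) ((x0 - 0) - t • (T x0 - T 0))
      rw [e, map_smul_eq_mul] at h
      have : ‖(2:ℝ)‖ = 2 := by norm_num
      rw [this] at h
      linarith
    rcases le_total (p ((x0 - 0) - t • (T x0 - T 0))) (p ((x0 - 0) + t • (T x0 - T 0)))
      with h | h
    · have h1 : 1 ≤ p ((x0 - 0) + t • (T x0 - T 0)) / p (x0 - 0) :=
        (one_le_div hu).2 (by linarith)
      exact h1.trans (hA1.trans (le_max_left A B))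
    · have h1 : 1 ≤ p ((x0 - 0) - t • (T x0 - T 0)) / p (x0 - 0) :=
        (one_le_div hu).2 (by linarith)
      exact h1.trans (hB1.trans (le_max_right A B))
  have key : ∀ r ∈ nuSet p T, 1 + t * r ≤ max A B := by
    rintro r ⟨x, y, f, hxy, hfu, hdual, rfl⟩
    have hu : 0 < p (x - y) := eqn_pos_sub hp hxy
    have hdf := dual_eq_of_state hp hxy hdual
    have hfb : ∀ z, |f z| ≤ p (x - y) * p z := fun z => by
      rw [← hdf]; exact abs_le_dual hp f z
    rcases le_or_gt 0 (f (T x - T y)) with hfv | hfv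
    · have hvecA : (x + t • T x) - (y + t • T y) = (x - y) + t • (T x - T y) := by
        rw [smul_sub]; abel
      have hA1 : p ((x + t • T x) - (y + t • T y)) / p (x - y) ≤ A := le_lipNormP hp hTA hxy
      rw [hvecA] at hA1
      have hflow : p (x - y) ^ 2 + t * |f (T x - T y)| ≤
          p (x - y) * p ((x - y) + t • (T x - T y)) := by
        have h2 : f ((x - y) + t • (T x - T y)) = p (x - y) ^ 2 + t * f (T x - T y) := by
          rw [map_add, map_smul, smul_eq_mul, hfu]
        have h1 : f ((x - y) + t • (T x - T y)) ≤
            p (x - y) * p ((x - y) + t • (T x - T y)) := (le_abs_self _).trans (hfb _)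
        rw [abs_of_nonneg hfv]
        linarith
      have h3 : (1 + t * (|f (T x - T y)| / p (x - y) ^ 2)) * p (x - y) ≤
          p ((x - y) + t • (T x - T y)) := arith_e2 hu ht hflow rfl
      have h4 : 1 + t * (|f (T x - T y)| / p (x - y) ^ 2) ≤
          p ((x - y) + t • (T x - T y)) / p (x - y) := (le_div_iff₀ hu).2 h3
      exact h4.trans (hA1.trans (le_max_left A B))
    · have hvecB : (x + t • -T x) - (y + t • -T y) = (x - y) - t • (T x - T y) := by
        rw [smul_sub]; simp only [smul_neg]; abel
      have hB1 : p ((x + t • -T x) - (y + t • -T y)) / p (x - y) ≤ B := le_lipNormP hp hTB hxy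
      rw [hvecB] at hB1
      have hflow : p (x - y) ^ 2 + t * |f (T x - T y)| ≤
          p (x - y) * p ((x - y) - t • (T x - T y)) := by
        have h2 : f ((x - y) - t • (T x - T y)) = p (x - y) ^ 2 - t * f (T x - T y) := by
          rw [map_sub, map_smul, smul_eq_mul, hfu]
        have h1 : f ((x - y) - t • (T x - T y)) ≤
            p (x - y) * p ((x - y) - t • (T x - T y)) := (le_abs_self _).trans (hfb _)
        rw [abs_of_neg hfv]
        linarith
      have h3 : (1 + t * (|f (T x - T y)| / p (x - y) ^ 2)) * p (x - y) ≤
          p ((x - y) - t • (T x - T y)) := arith_e2 hu ht hflow rfl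
      have h4 : 1 + t * (|f (T x - T y)| / p (x - y) ^ 2) ≤
          p ((x - y) - t • (T x - T y)) / p (x - y) := (le_div_iff₀ hu).2 h3
      exact h4.trans (hB1.trans (le_max_right A B))
  rw [nuLP_def]
  rcases (nuSet p T).eq_empty_or_nonempty with he | hne
  · rw [he, Real.sSup_empty, mul_zero, add_zero]
    exact hmax1
  · have h : sSup (nuSet p T) ≤ (max A B - 1) / t :=
      csSup_le hne fun r hr => (le_div_iff₀ ht).2 (by nlinarith [key r hr])
    have h2 := (le_div_iff₀ ht).1 h
    nlinarith [h2]

lemma arith_step {a b k2 t : ℝ} (ha0 : 0 ≤ a) (ha2 : a ≤ 2) (hb0 : 0 ≤ b) (hb1 : b ≤ 1)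
    (ht : 0 < t) (hk2a : 1 ≤ k2) (hk2b : k2 ≤ 2)
    (hmult : (1 + t * a) * (1 - t * b) ≤ k2 * (1 + t ^ 2)) :
    t * a - (k2 - 1) - 4 * t ^ 2 ≤ t * b := by
  have hab : a * b ≤ 2 := by nlinarith
  have h1 : t ^ 2 * (a * b) ≤ t ^ 2 * 2 := mul_le_mul_of_nonneg_left hab (sq_nonneg t)
  have h2 : k2 * t ^ 2 ≤ 2 * t ^ 2 := mul_le_mul_of_nonneg_right hk2b (sq_nonneg t)
  nlinarith [hmult, h1, h2]

lemma arith_h5 {n L k2 v : ℝ} (hn0 : 0 ≤ n) (hn1 : n ≤ 1) (hL0 : 0 ≤ L) (hL : L ≤ k2)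
    (hk2a : 1 ≤ k2) (hk2b : k2 ≤ 2) (h1 : 1 ≤ k2 * L) (hv : n * L ≤ v) :
    n - 2 * (k2 - 1) ≤ v := by
  nlinarith [mul_le_mul_of_nonneg_left h1 hn0, mul_nonneg hn0 hL0,
    mul_le_mul_of_nonneg_right hn1 (mul_nonneg hL0 (by linarith : (0:ℝ) ≤ k2 - 1))]

lemma main_est [Nontrivial X] {p q : Seminorm ℝ X} (hp : p ∈ eqNorms X) (hq : q ∈ eqNorms X)
    {k ε : ℝ} (hk1 : 1 ≤ k) (hcmp : ∀ x, p x ≤ k * q x ∧ q x ≤ k * p x)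
    (hε : 0 < ε) (hε1 : ε ≤ 1) (hk2 : k ^ 2 ≤ 1 + ε ^ 2 / 32) :
    nLP p - ε ≤ nLP q := by
  rw [nLP_def q]
  apply le_csInf ⟨_, id_mem_nSet hq⟩
  rintro r ⟨T, hT, hT0, hlipq, rfl⟩
  set t : ℝ := ε / 8 with htdef
  have ht : 0 < t := by positivity
  have ht8 : t ≤ 1 / 8 := by rw [htdef]; linarith
  have hk0 : (0:ℝ) < k := lt_of_lt_of_le one_pos hk1
  have hksq1 : 1 ≤ k ^ 2 := one_le_pow₀ hk1
  have hεsq : ε ^ 2 ≤ 1 := pow_le_one₀ hε.le hε1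
  have hk2' : k ^ 2 ≤ 2 := by linarith
  have hνq0 : 0 ≤ nuLP q T := nuLP_nonneg q T
  have hνq1 : nuLP q T ≤ 1 := by
    have h := nuLP_le_lip hq hT
    rwa [hlipq] at h
  -- bounds on lipNormP p T
  have hlipp_ub : lipNormP p T ≤ k ^ 2 := by
    have h := lip_le_sq hp hq hk1 hcmp hT
    rwa [hlipq, mul_one] at h
  have hlipp_lb : 1 ≤ k ^ 2 * lipNormP p T := by
    have h := lip_le_sq hq hp hk1 (fun x => ⟨(hcmp x).2, (hcmp x).1⟩) hT
    rwa [hlipq] at h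
  have hlipp_pos : 0 < lipNormP p T := by
    by_contra h
    push_neg at h
    have h2 : k ^ 2 * lipNormP p T ≤ 0 :=
      mul_nonpos_iff.2 (Or.inl ⟨by positivity, h⟩)
    linarith
  have hνp0 : 0 ≤ nuLP p T := nuLP_nonneg p T
  have hνp_le : nuLP p T ≤ k ^ 2 := le_trans (nuLP_le_lip hp hT) hlipp_ub
  -- E1 estimates in the norm q
  have hTneg : ∃ K, LipschitzWith K (fun z => -T z) := lips_neg hT
  have hlipq_neg : lipNormP q (fun z => -T z) = 1 := by
    rw [lipNormP_def, lipSet_neg, ← lipNormP_def, hlipq]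
  have hνq_neg : nuLP q (fun z => -T z) = nuLP q T := by
    rw [nuLP_def, nuSet_neg, ← nuLP_def]
  have hE1a : lipNormP q (fun z => z + t • T z) ≤ (1 + t ^ 2) / (1 - t * nuLP q T) := by
    have h := E1 hq hT ht (by rw [hlipq]; linarith)
      (by linarith [mul_le_mul_of_nonneg_left hνq1 ht.le, mul_one t])
    rwa [hlipq, one_pow, one_mul] at h
  have hE1b : lipNormP q (fun z => z + t • -T z) ≤ (1 + t ^ 2) / (1 - t * nuLP q T) := by
    have h := E1 hq hTneg ht (by rw [hlipq_neg]; linarith)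
      (by rw [hνq_neg]; linarith [mul_le_mul_of_nonneg_left hνq1 ht.le, mul_one t])
    rwa [hlipq_neg, hνq_neg, one_pow, one_mul] at h
  -- E2 in the norm p, transferred through the comparison of norms
  have hE2 := one_add_nu_le_max hp hT ht
  have hc1 : lipNormP p (fun z => z + t • T z) ≤
      k ^ 2 * ((1 + t ^ 2) / (1 - t * nuLP q T)) :=
    le_trans (lip_le_sq hp hq hk1 hcmp (lips_aux hT t))
      (mul_le_mul_of_nonneg_left hE1a (by positivity))
  have hc2 : lipNormP p (fun z => z + t • -T z) ≤
      k ^ 2 * ((1 + t ^ 2) / (1 - t * nuLP q T)) :=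
    le_trans (lip_le_sq hp hq hk1 hcmp (lips_aux hTneg t))
      (mul_le_mul_of_nonneg_left hE1b (by positivity))
  have hchain : 1 + t * nuLP p T ≤ k ^ 2 * ((1 + t ^ 2) / (1 - t * nuLP q T)) :=
    le_trans hE2 (max_le hc1 hc2)
  have hden : 0 < 1 - t * nuLP q T := by
    linarith [mul_le_mul_of_nonneg_left hνq1 ht.le, mul_one t]
  have hmult : (1 + t * nuLP p T) * (1 - t * nuLP q T) ≤ k ^ 2 * (1 + t ^ 2) := by
    rw [← mul_div_assoc] at hchain
    exact (le_div_iff₀ hden).1 hchain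
  -- ν_q ≥ ν_p - (k²-1)/t - 4t
  have hstep' : t * nuLP p T - (k ^ 2 - 1) - 4 * t ^ 2 ≤ t * nuLP q T :=
    arith_step hνp0 (le_trans hνp_le hk2') hνq0 hνq1 ht hksq1 hk2' hmult
  have hstep : nuLP p T - (k ^ 2 - 1) / t - 4 * t ≤ nuLP q T := by
    have hDt : (k ^ 2 - 1) / t * t = k ^ 2 - 1 := div_mul_cancel₀ _ ht.ne'
    have h := hstep'
    have h2 : t * (nuLP p T - (k ^ 2 - 1) / t - 4 * t) ≤ t * nuLP q T := by
      have e : t * (nuLP p T - (k ^ 2 - 1) / t - 4 * t)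
          = t * nuLP p T - (k ^ 2 - 1) / t * t - 4 * t ^ 2 := by ring
      rw [e, hDt]
      linarith [hstep']
    exact le_of_mul_le_mul_left h2 ht
  -- ν_p ≥ nLP p - 2(k²-1)
  have hvp_lb : nLP p * lipNormP p T ≤ nuLP p T := nLP_mul_lip_le hp hT hT0 hlipp_pos
  have hnp0 : 0 ≤ nLP p := nLP_nonneg p
  have hnp1 : nLP p ≤ 1 := nLP_le_one hp
  have h5 : nLP p - 2 * (k ^ 2 - 1) ≤ nuLP p T :=
    arith_h5 hnp0 hnp1 hlipp_pos.le hlipp_ub hksq1 hk2' hlipp_lb hvp_lb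
  -- numerics
  have hnum : (k ^ 2 - 1) / t ≤ ε / 4 := by
    have e : ε / 4 * t = ε ^ 2 / 32 := by rw [htdef]; ring
    rw [div_le_iff₀ ht, e]
    linarith
  linarith [hstep, h5, hnum, mul_le_mul_of_nonneg_right hε1 hε.le]

lemma cmpSet_nonempty {p q : Seminorm ℝ X} (hp : p ∈ eqNorms X) (hq : q ∈ eqNorms X) :
    {k : ℝ | 1 ≤ k ∧ ∀ x : X, p x ≤ k * q x ∧ q x ≤ k * p x}.Nonempty := by
  obtain ⟨k1, hk11, hk1⟩ := hp.2
  obtain ⟨k2, hk21, hk2⟩ := hq.2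
  refine ⟨k1 * k2, one_le_mul_of_one_le_of_one_le hk11 hk21, fun x => ⟨?_, ?_⟩⟩
  · calc p x ≤ k1 * ‖x‖ := (hk1 x).1
      _ ≤ k1 * (k2 * q x) := mul_le_mul_of_nonneg_left (hk2 x).2 (by linarith)
      _ = k1 * k2 * q x := by ring
  · calc q x ≤ k2 * ‖x‖ := (hk2 x).1
      _ ≤ k2 * (k1 * p x) := mul_le_mul_of_nonneg_left (hk1 x).2 (by linarith)
      _ = k1 * k2 * p x := by ring

lemma exists_k {p q : Seminorm ℝ X} (hp : p ∈ eqNorms X) (hq : q ∈ eqNorms X) {δ : ℝ}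
    (hδ : 0 < δ) (h : normDist p q < δ) :
    ∃ k : ℝ, 1 ≤ k ∧ k < Real.exp δ ∧ ∀ x : X, p x ≤ k * q x ∧ q x ≤ k * p x := by
  set S := {k : ℝ | 1 ≤ k ∧ ∀ x : X, p x ≤ k * q x ∧ q x ≤ k * p x} with hS
  have hne : S.Nonempty := cmpSet_nonempty hp hq
  have hbd : BddBelow S := ⟨1, fun r hr => hr.1⟩
  have h1 : (1:ℝ) ≤ sInf S := le_csInf hne (fun r hr => hr.1)
  have h2 : sInf S < Real.exp δ := by
    have := (Real.log_lt_iff_lt_exp (by linarith : (0:ℝ) < sInf S)).1 h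
    exact this
  obtain ⟨k, hkS, hklt⟩ := (csInf_lt_iff hbd hne).1 h2
  exact ⟨k, hkS.1, hklt, hkS.2⟩

lemma normDist_le_log {p q : Seminorm ℝ X} (hp : p ∈ eqNorms X) (hq : q ∈ eqNorms X) {k : ℝ}
    (hk : 1 ≤ k) (h : ∀ x : X, p x ≤ k * q x ∧ q x ≤ k * p x) :
    normDist p q ≤ Real.log k := by
  have hbd : BddBelow {k : ℝ | 1 ≤ k ∧ ∀ x : X, p x ≤ k * q x ∧ q x ≤ k * p x} :=
    ⟨1, fun r hr => hr.1⟩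
  have h1 : sInf {k : ℝ | 1 ≤ k ∧ ∀ x : X, p x ≤ k * q x ∧ q x ≤ k * p x} ≤ k :=
    csInf_le hbd ⟨hk, h⟩
  have h2 : (1:ℝ) ≤ sInf {k : ℝ | 1 ≤ k ∧ ∀ x : X, p x ≤ k * q x ∧ q x ≤ k * p x} :=
    le_csInf (cmpSet_nonempty hp hq) (fun r hr => hr.1)
  exact Real.log_le_log (by linarith) h1

lemma cont_at [Nontrivial X] {p₀ : Seminorm ℝ X} (hp₀ : p₀ ∈ eqNorms X) {ε : ℝ} (hε : 0 < ε) :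
    ∃ δ > (0:ℝ), ∀ p ∈ eqNorms X, normDist p p₀ < δ → |nLP p - nLP p₀| < ε := by
  set ε₂ : ℝ := min ε 1 / 2 with hε₂def
  have hε₂ : 0 < ε₂ := by
    have := lt_min hε one_pos
    rw [hε₂def]; linarith
  have hε₂ε : ε₂ < ε := by
    have h1 := min_le_left ε 1
    rw [hε₂def]; linarith
  have hε₂1 : ε₂ ≤ 1 := by
    have h1 := min_le_right ε 1
    rw [hε₂def]; linarith
  set k₀ : ℝ := Real.sqrt (1 + ε₂ ^ 2 / 32) with hk₀def
  have hk₀sq : k₀ ^ 2 = 1 + ε₂ ^ 2 / 32 := Real.sq_sqrt (by positivity)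
  have hk₀gt : 1 < k₀ := by
    have h1 : Real.sqrt 1 < k₀ := by
      rw [hk₀def]
      exact Real.sqrt_lt_sqrt (by norm_num) (by linarith [pow_pos hε₂ 2])
    rwa [Real.sqrt_one] at h1
  refine ⟨Real.log k₀, Real.log_pos hk₀gt, fun p hp hd => ?_⟩
  obtain ⟨k, hk1, hklt, hkcmp⟩ := exists_k hp hp₀ (Real.log_pos hk₀gt) hd
  rw [Real.exp_log (by linarith : (0:ℝ) < k₀)] at hklt
  have hk2 : k ^ 2 ≤ 1 + ε₂ ^ 2 / 32 := by
    have h1 : k ^ 2 < k₀ ^ 2 := by nlinarith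
    linarith
  have h1 := main_est hp hp₀ hk1 hkcmp hε₂ hε₂1 hk2
  have h2 := main_est hp₀ hp hk1 (fun x => ⟨(hkcmp x).2, (hkcmp x).1⟩) hε₂ hε₂1 hk2
  rw [abs_sub_lt_iff]
  constructor <;> linarith

lemma nLP_trivial [Subsingleton X] (p : Seminorm ℝ X) : nLP p = 0 := by
  have h : nSet p = ∅ := by
    ext r
    simp only [nSet, Set.mem_setOf_eq, Set.mem_empty_iff_false, iff_false]
    rintro ⟨T, _, _, hlip, _⟩
    have h2 : lipSet p T = ∅ := by
      ext s
      simp only [lipSet, Set.mem_setOf_eq, Set.mem_empty_iff_false, iff_false]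
      rintro ⟨x, y, hxy, _⟩
      exact hxy (Subsingleton.elim x y)
    rw [lipNormP_def, h2, Real.sSup_empty] at hlip
    exact one_ne_zero hlip.symm
  rw [nLP_def, h, Real.sInf_empty]

lemma sigma_apply (pa pb : Seminorm ℝ X) {t : ℝ} (h0 : 0 ≤ t) (h1 : t ≤ 1) (x : X) :
    ((Real.toNNReal (1 - t)) • pa + (Real.toNNReal t) • pb) x
      = (1 - t) * pa x + t * pb x := by
  rw [Seminorm.add_apply, Seminorm.smul_apply, Seminorm.smul_apply,
    NNReal.smul_def, NNReal.smul_def, Real.coe_toNNReal _ (by linarith : (0:ℝ) ≤ 1 - t),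
    Real.coe_toNNReal _ h0, smul_eq_mul, smul_eq_mul]

lemma sigma_mem {pa pb : Seminorm ℝ X} (ha : pa ∈ eqNorms X) (hb : pb ∈ eqNorms X)
    {t : ℝ} (h0 : 0 ≤ t) (h1 : t ≤ 1) :
    ((Real.toNNReal (1 - t)) • pa + (Real.toNNReal t) • pb) ∈ eqNorms X := by
  obtain ⟨ka, hka1, hka⟩ := ha.2
  obtain ⟨kb, hkb1, hkb⟩ := hb.2
  constructor
  · intro x hx
    rw [sigma_apply pa pb h0 h1] at hx
    have e1 : 0 ≤ (1 - t) * pa x := mul_nonneg (by linarith) (apply_nonneg _ _)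
    have e2 : 0 ≤ t * pb x := mul_nonneg h0 (apply_nonneg _ _)
    rcases eq_or_lt_of_le h1 with rfl | hlt
    · have hpb : pb x = 0 := by nlinarith [apply_nonneg pb x]
      exact hb.1 x hpb
    · have hpa : pa x = 0 := by
        have h2 : (1 - t) * pa x = 0 := by linarith
        rcases mul_eq_zero.1 h2 with h3 | h3
        · linarith
        · exact h3
      exact ha.1 x hpa
  · refine ⟨ka * kb, one_le_mul_of_one_le_of_one_le hka1 hkb1, fun x => ⟨?_, ?_⟩⟩
    · rw [sigma_apply pa pb h0 h1]
      have e1 : (1 - t) * pa x ≤ (1 - t) * (ka * ‖x‖) :=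
        mul_le_mul_of_nonneg_left (hka x).1 (by linarith)
      have e2 : t * pb x ≤ t * (kb * ‖x‖) :=
        mul_le_mul_of_nonneg_left (hkb x).1 h0
      have e3 : (1 - t) * (ka * ‖x‖) ≤ (1 - t) * (ka * kb * ‖x‖) := by
        apply mul_le_mul_of_nonneg_left _ (by linarith : (0:ℝ) ≤ 1 - t)
        have := mul_le_mul_of_nonneg_right (le_mul_of_one_le_right (by linarith : (0:ℝ) ≤ ka) hkb1) (norm_nonneg x)
        linarith [this]
      have e4 : t * (kb * ‖x‖) ≤ t * (ka * kb * ‖x‖) := by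
        apply mul_le_mul_of_nonneg_left _ h0
        have h5 : kb * ‖x‖ ≤ ka * (kb * ‖x‖) :=
          le_mul_of_one_le_left (by positivity) hka1
        nlinarith [h5]
      nlinarith [e1, e2, e3, e4]
    · rw [sigma_apply pa pb h0 h1]
      have e1 : (1 - t) * ‖x‖ ≤ (1 - t) * (ka * pa x) :=
        mul_le_mul_of_nonneg_left (hka x).2 (by linarith)
      have e2 : t * ‖x‖ ≤ t * (kb * pb x) :=
        mul_le_mul_of_nonneg_left (hkb x).2 h0
      have e3 : (1 - t) * (ka * pa x) ≤ ka * kb * ((1 - t) * pa x) := by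
        have h5 : ka * pa x ≤ ka * kb * pa x := by
          have := mul_le_mul_of_nonneg_right
            (le_mul_of_one_le_right (by linarith : (0:ℝ) ≤ ka) hkb1) (apply_nonneg pa x)
          linarith [this]
        nlinarith [h5]
      have e4 : t * (kb * pb x) ≤ ka * kb * (t * pb x) := by
        have h5 : kb * pb x ≤ ka * kb * pb x := by
          have := mul_le_mul_of_nonneg_right
            (le_mul_of_one_le_left (by linarith : (0:ℝ) ≤ kb) hka1) (apply_nonneg pb x)
          linarith [this]
        nlinarith [h5]
      have e5 : ‖x‖ = (1 - t) * ‖x‖ + t * ‖x‖ := by ring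
      calc ‖x‖ = (1 - t) * ‖x‖ + t * ‖x‖ := e5
        _ ≤ (1 - t) * (ka * pa x) + t * (kb * pb x) := add_le_add e1 e2
        _ ≤ ka * kb * ((1 - t) * pa x) + ka * kb * (t * pb x) := add_le_add e3 e4
        _ = ka * kb * ((1 - t) * pa x + t * pb x) := by ring

lemma sigma_close {pa pb : Seminorm ℝ X} {K : ℝ} (hK : 1 ≤ K)
    (hab : ∀ x, pa x ≤ K * pb x ∧ pb x ≤ K * pa x)
    {s t : ℝ} (hs0 : 0 ≤ s) (hs1 : s ≤ 1) (ht0 : 0 ≤ t) (ht1 : t ≤ 1) (x : X) :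
    ((Real.toNNReal (1 - t)) • pa + (Real.toNNReal t) • pb) x
      ≤ (1 + (1 + K) * |t - s|) * ((Real.toNNReal (1 - s)) • pa + (Real.toNNReal s) • pb) x := by
  rw [sigma_apply pa pb ht0 ht1, sigma_apply pa pb hs0 hs1]
  set A := pa x with hA
  set B := pb x with hB
  have hA0 : 0 ≤ A := apply_nonneg _ _
  have hB0 : 0 ≤ B := apply_nonneg _ _
  have hmin_s : min A B ≤ (1 - s) * A + s * B := by
    rcases le_total A B with h | h
    · rw [min_eq_left h]; nlinarith
    · rw [min_eq_right h]; nlinarith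
  have habs : |B - A| ≤ (1 + K) * min A B := by
    rcases le_total A B with h | h
    · rw [abs_of_nonneg (by linarith), min_eq_left h]
      have := (hab x).2
      nlinarith
    · rw [abs_of_nonpos (by linarith), min_eq_right h]
      have := (hab x).1
      nlinarith
  have hdiff : (1 - t) * A + t * B - ((1 - s) * A + s * B) = (t - s) * (B - A) := by ring
  have h1 : (t - s) * (B - A) ≤ |t - s| * |B - A| := by
    calc (t - s) * (B - A) ≤ |(t - s) * (B - A)| := le_abs_self _
      _ = |t - s| * |B - A| := abs_mul _ _
  have h2 : |t - s| * |B - A| ≤ |t - s| * ((1 + K) * min A B) :=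
    mul_le_mul_of_nonneg_left habs (abs_nonneg _)
  have h3 : min A B ≤ (1 - s) * A + s * B := hmin_s
  have h4 : |t - s| * ((1 + K) * min A B) ≤ |t - s| * ((1 + K) * ((1 - s) * A + s * B)) := by
    apply mul_le_mul_of_nonneg_left _ (abs_nonneg _)
    exact mul_le_mul_of_nonneg_left h3 (by linarith)
  nlinarith [h1, h2, h4]

end LipIndexAux

open LipIndexAux in
/-- The map `p ↦ n_L^p(X)` from `(E(X), μ)` to `ℝ` is continuous; consequently
the set `N_L(X) = {n_L^p(X) : p ∈ E(X)}` is an interval. -/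
theorem lipschitz_numerical_index_continuous_and_interval
    {X : Type*} [NormedAddCommGroup X] [NormedSpace ℝ X] [CompleteSpace X] :
    (∀ p₀ ∈ eqNorms X, ∀ ε > (0 : ℝ), ∃ δ > (0 : ℝ), ∀ p ∈ eqNorms X,
        normDist p p₀ < δ → |nLP p - nLP p₀| < ε) ∧
    (∀ a b c : ℝ, (∃ p ∈ eqNorms X, nLP p = a) → (∃ p ∈ eqNorms X, nLP p = b) →
        a ≤ c → c ≤ b → ∃ p ∈ eqNorms X, nLP p = c) := by
  rcases subsingleton_or_nontrivial X with hsub | hnt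
  · constructor
    · intro p₀ _ ε hε
      refine ⟨1, one_pos, fun p _ _ => ?_⟩
      rw [nLP_trivial, nLP_trivial, sub_zero, abs_zero]
      exact hε
    · rintro a b c ⟨pa, hpa, rfl⟩ ⟨pb, hpb, rfl⟩ hac hcb
      refine ⟨pa, hpa, ?_⟩
      rw [nLP_trivial] at hac ⊢
      rw [nLP_trivial] at hcb
      linarith
  · constructor
    · intro p₀ hp₀ ε hε
      exact cont_at hp₀ hε
    · rintro a b c ⟨pa, hpa, rfl⟩ ⟨pb, hpb, rfl⟩ hac hcb
      obtain ⟨K, hK1, hab⟩ : ∃ K : ℝ, 1 ≤ K ∧ ∀ x, pa x ≤ K * pb x ∧ pb x ≤ K * pa x := by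
        obtain ⟨k, hk⟩ := cmpSet_nonempty hpa hpb
        exact ⟨k, hk.1, hk.2⟩
      set σ : ℝ → Seminorm ℝ X :=
        fun t => (Real.toNNReal (1 - t)) • pa + (Real.toNNReal t) • pb with hσ
      have hσmem : ∀ t ∈ Set.Icc (0:ℝ) 1, σ t ∈ eqNorms X := fun t ht =>
        sigma_mem hpa hpb ht.1 ht.2
      have hcont : ContinuousOn (fun t => nLP (σ t)) (Set.Icc (0:ℝ) 1) := by
        rw [Metric.continuousOn_iff]
        intro s hs ε hε
        obtain ⟨δ, hδ0, hδ⟩ := cont_at (hσmem s hs) hε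
        have hexp : 0 < Real.exp δ - 1 := by
          have := Real.add_one_le_exp δ
          linarith
        refine ⟨(Real.exp δ - 1) / (1 + K), by positivity, fun t ht hdist => ?_⟩
        have hcmp : ∀ x, σ t x ≤ (1 + (1 + K) * |t - s|) * σ s x ∧
            σ s x ≤ (1 + (1 + K) * |t - s|) * σ t x := by
          intro x
          refine ⟨sigma_close hK1 hab hs.1 hs.2 ht.1 ht.2 x, ?_⟩
          have h := sigma_close hK1 hab ht.1 ht.2 hs.1 hs.2 x
          rwa [abs_sub_comm s t] at h
        have hk1' : (1:ℝ) ≤ 1 + (1 + K) * |t - s| := by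
          have := mul_nonneg (by linarith : (0:ℝ) ≤ 1 + K) (abs_nonneg (t - s))
          linarith
        have hnd := normDist_le_log (hσmem t ht) (hσmem s hs) hk1' hcmp
        have hlt : 1 + (1 + K) * |t - s| < Real.exp δ := by
          rw [Real.dist_eq] at hdist
          have h3 : |t - s| * (1 + K) < Real.exp δ - 1 :=
            (lt_div_iff₀ (by linarith : (0:ℝ) < 1 + K)).1 hdist
          nlinarith [h3]
        have h5 : normDist (σ t) (σ s) < δ :=
          lt_of_le_of_lt hnd ((Real.log_lt_iff_lt_exp (by linarith)).2 hlt)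
        have h6 := hδ (σ t) (hσmem t ht) h5
        rw [Real.dist_eq]
        exact h6
      have h0 : σ 0 = pa := by
        ext x
        have h := sigma_apply pa pb (le_refl (0:ℝ)) zero_le_one x
        rw [hσ]
        simpa using h
      have h1 : σ 1 = pb := by
        ext x
        have h := sigma_apply pa pb zero_le_one (le_refl (1:ℝ)) x
        rw [hσ]
        simpa using h
      have hmem : c ∈ Set.Icc ((fun t => nLP (σ t)) 0) ((fun t => nLP (σ t)) 1) := by
        simp only
        rw [h0, h1]
        exact ⟨hac, hcb⟩
      obtain ⟨t, ht, hgt⟩ := intermediate_value_Icc zero_le_one hcont hmem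
      exact ⟨σ t, hσmem t ht, hgt⟩

end
end

section
/- Let X be a real Banach space and T ∈ Lip₀(X,X). Suppose T attains its Lipschitz numerical radius at (x, y, x*), i.e., x ≠ y, x* ∈ D(x − y) and |x*(Tx − Ty)|/‖x − y‖² = ν_L(T). Then for every 0 < λ < 1, setting z = λx + (1−λ)y, one has (1−λ)x* ∈ D(x − z) and λx* ∈ D(z − y), and T attains its Lipschitz numerical radius at (x, z, (1−λ)x*) and at (z, y, λx*); that is, |(1−λ)x*(Tx − Tz)|/‖x − z‖² = ν_L(T) and |λx*(Tz − Ty)|/‖z − y‖² = ν_L(T). -/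
noncomputable section

/-- The Lipschitz norm of a map between normed spaces. -/
def LipNorm {X Y : Type*} [NormedAddCommGroup X] [NormedAddCommGroup Y] (T : X → Y) : ℝ :=
  sSup {r : ℝ | ∃ x y : X, x ≠ y ∧ r = ‖T x - T y‖ / ‖x - y‖}

/-- `D(x)`: functionals with `f x = ‖f‖ ‖x‖ = ‖x‖²`. -/
def Dset (𝕜 : Type*) {X : Type*} [RCLike 𝕜] [NormedAddCommGroup X] [NormedSpace 𝕜 X]
    (x : X) : Set (X →L[𝕜] 𝕜) :=
  {f | f x = ((‖x‖ ^ 2 : ℝ) : 𝕜) ∧ ‖f‖ * ‖x‖ = ‖x‖ ^ 2}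

/-- The Lipschitz numerical radius. -/
def nuL (𝕜 : Type*) {X : Type*} [RCLike 𝕜] [NormedAddCommGroup X] [NormedSpace 𝕜 X]
    (T : X → X) : ℝ :=
  sSup {r : ℝ | ∃ (x y : X) (f : X →L[𝕜] 𝕜), x ≠ y ∧ f ∈ Dset 𝕜 (x - y) ∧
    r = ‖f (T x - T y)‖ / ‖x - y‖ ^ 2}

/-- The Lipschitz numerical index. -/
def nL (𝕜 X : Type*) [RCLike 𝕜] [NormedAddCommGroup X] [NormedSpace 𝕜 X] : ℝ :=
  sInf {r : ℝ | ∃ T : X → X, IsLip0 T ∧ LipNorm T = 1 ∧ r = nuL 𝕜 T}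

/-- If `T ∈ Lip₀(X,X)` attains its Lipschitz numerical radius at `(x, y, x*)`,
then for every `0 < λ < 1`, with `z = λx + (1-λ)y`, one has `(1-λ)x* ∈ D(x-z)`,
`λx* ∈ D(z-y)`, and `T` attains its Lipschitz numerical radius at `(x, z, (1-λ)x*)`
and at `(z, y, λx*)`. -/
theorem lipschitz_numerical_radius_attaining_on_segment
    {X : Type*} [NormedAddCommGroup X] [NormedSpace ℝ X] [CompleteSpace X]
    (T : X → X) (hT : IsLip0 T) (x y : X) (f : X →L[ℝ] ℝ)
    (hxy : x ≠ y) (hf : f ∈ Dset ℝ (x - y))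
    (hatt : |f (T x - T y)| / ‖x - y‖ ^ 2 = nuL ℝ T)
    (l : ℝ) (hl0 : 0 < l) (hl1 : l < 1) :
    ((1 - l) • f ∈ Dset ℝ (x - (l • x + (1 - l) • y)) ∧
      l • f ∈ Dset ℝ ((l • x + (1 - l) • y) - y)) ∧
    |((1 - l) • f) (T x - T (l • x + (1 - l) • y))| / ‖x - (l • x + (1 - l) • y)‖ ^ 2
      = nuL ℝ T ∧
    |(l • f) (T (l • x + (1 - l) • y) - T y)| / ‖(l • x + (1 - l) • y) - y‖ ^ 2
      = nuL ℝ T := by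
  obtain ⟨⟨K, hK⟩, -⟩ := hT
  set z := l • x + (1 - l) • y with hz
  have hxz : x - z = (1 - l) • (x - y) := by rw [hz]; module
  have hzy : z - y = l • (x - y) := by rw [hz]; module
  have hd : (0:ℝ) < ‖x - y‖ := by rw [norm_pos_iff]; exact sub_ne_zero.mpr hxy
  have hl1' : (0:ℝ) < 1 - l := by linarith
  obtain ⟨hf1, hf2⟩ := hf
  have hf1' : f (x - y) = ‖x - y‖ ^ 2 := hf1
  have hfn : ‖f‖ = ‖x - y‖ := by
    have h : ‖f‖ * ‖x - y‖ = ‖x - y‖ * ‖x - y‖ := by rw [hf2]; ring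
    exact mul_right_cancel₀ hd.ne' h
  -- norms of the new differences
  have hnxz : ‖x - z‖ = (1 - l) * ‖x - y‖ := by
    rw [hxz]
    rw [show ‖(1 - l) • (x - y)‖ = ‖(1 - l : ℝ)‖ * ‖x - y‖ from norm_smul _ _,
      Real.norm_eq_abs, abs_of_pos hl1']
  have hnzy : ‖z - y‖ = l * ‖x - y‖ := by
    rw [hzy]
    rw [show ‖l • (x - y)‖ = ‖(l : ℝ)‖ * ‖x - y‖ from norm_smul _ _,
      Real.norm_eq_abs, abs_of_pos hl0]
  have hs1 : ‖(1 - l) • f‖ = ‖(1 - l : ℝ)‖ * ‖f‖ := norm_smul (β := X →L[ℝ] ℝ) _ _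
  have hs2 : ‖l • f‖ = ‖(l : ℝ)‖ * ‖f‖ := norm_smul (β := X →L[ℝ] ℝ) _ _
  have hnf1 : ‖(1 - l) • f‖ = (1 - l) * ‖x - y‖ := by
    rw [hs1, Real.norm_eq_abs, abs_of_pos hl1', hfn]
  have hnf2 : ‖l • f‖ = l * ‖x - y‖ := by
    rw [hs2, Real.norm_eq_abs, abs_of_pos hl0, hfn]
  have hxz' : x ≠ z := by
    intro h
    have h0 : x - z = 0 := sub_eq_zero.mpr h
    rw [hxz] at h0
    rcases smul_eq_zero.mp h0 with h1 | h2
    · linarith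
    · exact hxy (sub_eq_zero.mp h2)
  have hzy' : z ≠ y := by
    intro h
    have h0 : z - y = 0 := sub_eq_zero.mpr h
    rw [hzy] at h0
    rcases smul_eq_zero.mp h0 with h1 | h2
    · linarith
    · exact hxy (sub_eq_zero.mp h2)
  -- Dset memberships
  have happ1 : ((1 - l) • f) (x - z) = (1 - l) ^ 2 * ‖x - y‖ ^ 2 := by
    rw [ContinuousLinearMap.smul_apply, smul_eq_mul, hxz, map_smul, smul_eq_mul, hf1']
    ring
  have happ2 : (l • f) (z - y) = l ^ 2 * ‖x - y‖ ^ 2 := by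
    rw [ContinuousLinearMap.smul_apply, smul_eq_mul, hzy, map_smul, smul_eq_mul, hf1']
    ring
  have hmem1 : (1 - l) • f ∈ Dset ℝ (x - z) := by
    constructor
    · show ((1 - l) • f) (x - z) = ‖x - z‖ ^ 2
      rw [happ1, hnxz]; ring
    · show ‖(1 - l) • f‖ * ‖x - z‖ = ‖x - z‖ ^ 2
      rw [hnf1, hnxz]; ring
  have hmem2 : l • f ∈ Dset ℝ (z - y) := by
    constructor
    · show (l • f) (z - y) = ‖z - y‖ ^ 2
      rw [happ2, hnzy]; ring
    · show ‖l • f‖ * ‖z - y‖ = ‖z - y‖ ^ 2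
      rw [hnf2, hnzy]; ring
  -- the defining set of nuL is bounded above by K
  have hbdd : BddAbove {r : ℝ | ∃ (u v : X) (g : X →L[ℝ] ℝ), u ≠ v ∧ g ∈ Dset ℝ (u - v) ∧
      r = ‖g (T u - T v)‖ / ‖u - v‖ ^ 2} := by
    refine ⟨K, ?_⟩
    rintro r ⟨u, v, g, huv, ⟨hg1, hg2⟩, rfl⟩
    have hduv : (0:ℝ) < ‖u - v‖ := by rw [norm_pos_iff]; exact sub_ne_zero.mpr huv
    have hgn : ‖g‖ = ‖u - v‖ := by
      have h : ‖g‖ * ‖u - v‖ = ‖u - v‖ * ‖u - v‖ := by rw [hg2]; ring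
      exact mul_right_cancel₀ hduv.ne' h
    have h1 : ‖g (T u - T v)‖ ≤ ‖u - v‖ * (K * ‖u - v‖) := by
      calc ‖g (T u - T v)‖ ≤ ‖g‖ * ‖T u - T v‖ := g.le_opNorm _
        _ ≤ ‖u - v‖ * (K * ‖u - v‖) := by
            rw [hgn]
            refine mul_le_mul_of_nonneg_left ?_ hduv.le
            have h2 := hK.dist_le_mul u v
            rwa [dist_eq_norm, dist_eq_norm] at h2
    rw [div_le_iff₀ (by positivity)]
    calc ‖g (T u - T v)‖ ≤ ‖u - v‖ * (K * ‖u - v‖) := h1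
      _ = K * ‖u - v‖ ^ 2 := by ring
  have key : ∀ (u v : X) (g : X →L[ℝ] ℝ), u ≠ v → g ∈ Dset ℝ (u - v) →
      |g (T u - T v)| / ‖u - v‖ ^ 2 ≤ nuL ℝ T := by
    intro u v g huv hg
    have h := le_csSup hbdd (show ‖g (T u - T v)‖ / ‖u - v‖ ^ 2 ∈ _ from ⟨u, v, g, huv, hg, rfl⟩)
    rwa [Real.norm_eq_abs] at h
  set ν := nuL ℝ T with hν
  set d := ‖x - y‖ with hdd
  set a := f (T x - T z) with ha
  set b := f (T z - T y) with hb
  have hab : a + b = f (T x - T y) := by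
    rw [ha, hb, ← map_add]
    congr 1
    abel
  -- bounds
  have h1 : |a| ≤ ν * ((1 - l) * d ^ 2) := by
    have h := key x z ((1 - l) • f) hxz' hmem1
    rw [ContinuousLinearMap.smul_apply, smul_eq_mul, abs_mul, abs_of_pos hl1', hnxz,
      div_le_iff₀ (by positivity)] at h
    have h' : (1 - l) * |a| ≤ (1 - l) * (ν * ((1 - l) * d ^ 2)) := by
      calc (1 - l) * |a| ≤ ν * ((1 - l) * d) ^ 2 := h
        _ = (1 - l) * (ν * ((1 - l) * d ^ 2)) := by ring
    exact le_of_mul_le_mul_left h' hl1'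
  have h2 : |b| ≤ ν * (l * d ^ 2) := by
    have h := key z y (l • f) hzy' hmem2
    rw [ContinuousLinearMap.smul_apply, smul_eq_mul, abs_mul, abs_of_pos hl0, hnzy,
      div_le_iff₀ (by positivity)] at h
    have h' : l * |b| ≤ l * (ν * (l * d ^ 2)) := by
      calc l * |b| ≤ ν * (l * d) ^ 2 := h
        _ = l * (ν * (l * d ^ 2)) := by ring
    exact le_of_mul_le_mul_left h' hl0
  have hsum : |a + b| = ν * d ^ 2 := by
    rw [hab]
    have h0 := hatt
    rw [div_eq_iff (by positivity : (d:ℝ) ^ 2 ≠ 0)] at h0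
    exact h0
  have htri : |a + b| ≤ |a| + |b| := abs_add_le a b
  have hid : ν * ((1 - l) * d ^ 2) + ν * (l * d ^ 2) = ν * d ^ 2 := by ring
  have hae : |a| = ν * ((1 - l) * d ^ 2) := by linarith
  have hbe : |b| = ν * (l * d ^ 2) := by linarith
  refine ⟨⟨hmem1, hmem2⟩, ?_, ?_⟩
  · rw [ContinuousLinearMap.smul_apply, smul_eq_mul, abs_mul, abs_of_pos hl1', hnxz, ← ha,
      hae, div_eq_iff (by positivity : ((1 - l) * d) ^ 2 ≠ 0)]
    ring
  · rw [ContinuousLinearMap.smul_apply, smul_eq_mul, abs_mul, abs_of_pos hl0, hnzy, ← hb,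
      hbe, div_eq_iff (by positivity : (l * d) ^ 2 ≠ 0)]
    ring

end
end

section
/- Let X be a real Banach space and T ∈ Lip₀(X,X). Suppose T attains its Lipschitz numerical radius at (x, y, x*), i.e., x ≠ y, x* ∈ D(x − y) and |x*(Tx − Ty)|/‖x − y‖² = ν_L(T), and suppose that at every point u of the segment [x,y] = {tx + (1−t)y : 0 ≤ t ≤ 1} the map T is Gâteaux differentiable with derivative D_T(u), a bounded linear operator on X. Then for every u ∈ [x,y], the operator D_T(u) attains its numerical radius at ((x−y)/‖x−y‖, x*/‖x*‖); that is, ν(D_T(u)) = |(x*/‖x*‖)(D_T(u)((x−y)/‖x−y‖))|. -/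
noncomputable section

/-- The (classical) numerical radius of a bounded linear operator. -/
def numRadius {X : Type*} [NormedAddCommGroup X] [NormedSpace ℝ X] (S : X →L[ℝ] X) : ℝ :=
  sSup {r : ℝ | ∃ (x : X) (f : X →L[ℝ] ℝ), ‖x‖ = 1 ∧ ‖f‖ = 1 ∧ f x = 1 ∧ r = |f (S x)|}

/-- Auxiliary: norm of a real scalar multiple. -/
private lemma abs_smul_norm {E : Type*} [NormedAddCommGroup E] [NormedSpace ℝ E]
    (r : ℝ) (v : E) : ‖r • v‖ = |r| * ‖v‖ := by
  rw [show ‖r • v‖ = ‖r‖ * ‖v‖ from norm_smul r v, Real.norm_eq_abs]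

/-- Auxiliary: operator norm of a real scalar multiple of a functional. -/
private lemma clm_norm_smul {X : Type*} [NormedAddCommGroup X] [NormedSpace ℝ X]
    (r : ℝ) (f : X →L[ℝ] ℝ) : ‖r • f‖ = |r| * ‖f‖ := norm_smul r f

set_option synthInstance.maxHeartbeats 1000000
set_option maxHeartbeats 1000000

/-- If `T ∈ Lip₀(X,X)` attains its Lipschitz numerical radius at `(x, y, x*)`
and `T` is Gâteaux differentiable at every point `u` of the segment `[x,y]` with derivative
`D_T(u)`, then for every `u ∈ [x,y]` the operator `D_T(u)` attains its numerical radius at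
`((x-y)/‖x-y‖, x*/‖x*‖)`. -/
theorem gateaux_derivative_attains_numerical_radius
    {X : Type*} [NormedAddCommGroup X] [NormedSpace ℝ X] [CompleteSpace X]
    (T : X → X) (hT : IsLip0 T) (x y : X) (f : X →L[ℝ] ℝ)
    (hxy : x ≠ y) (hf : f ∈ Dset ℝ (x - y))
    (hatt : |f (T x - T y)| / ‖x - y‖ ^ 2 = nuL ℝ T)
    (DT : X → X →L[ℝ] X)
    (hdiff : ∀ u ∈ segment ℝ x y, ∀ z : X,
      Filter.Tendsto (fun t : ℝ => t⁻¹ • (T (u + t • z) - T u)) (nhdsWithin 0 {0}ᶜ)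
        (nhds (DT u z))) :
    ∀ u ∈ segment ℝ x y,
      numRadius (DT u) = |(‖f‖⁻¹ • f) ((DT u) (‖x - y‖⁻¹ • (x - y)))| := by
  classical
  obtain ⟨K, hK⟩ := hT.1
  have hc0 : (0:ℝ) < ‖x - y‖ := norm_pos_iff.mpr (sub_ne_zero.mpr hxy)
  set c : ℝ := ‖x - y‖ with hc
  have hfx : f (x - y) = c ^ 2 := by simpa using hf.1
  have hfn : ‖f‖ = c := by
    have h := hf.2
    have : ‖f‖ * c = c * c := by rw [h]; ring
    exact mul_right_cancel₀ hc0.ne' this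
  set ν : ℝ := nuL ℝ T with hν
  -- boundedness of the nuL defining set
  have hbdd : BddAbove {r : ℝ | ∃ (p q : X) (g : X →L[ℝ] ℝ), p ≠ q ∧ g ∈ Dset ℝ (p - q) ∧
      r = ‖g (T p - T q)‖ / ‖p - q‖ ^ 2} := by
    refine ⟨(K : ℝ), ?_⟩
    rintro r ⟨p, q, g, hpq, hg, rfl⟩
    have hpq0 : (0:ℝ) < ‖p - q‖ := norm_pos_iff.mpr (sub_ne_zero.mpr hpq)
    have hgn : ‖g‖ = ‖p - q‖ := by
      have h := hg.2
      have : ‖g‖ * ‖p - q‖ = ‖p - q‖ * ‖p - q‖ := by rw [h]; ring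
      exact mul_right_cancel₀ hpq0.ne' this
    have h1 : ‖g (T p - T q)‖ ≤ ‖g‖ * ‖T p - T q‖ := g.le_opNorm _
    have h2 : ‖T p - T q‖ ≤ (K : ℝ) * ‖p - q‖ := by
      have := hK.dist_le_mul p q
      simpa [dist_eq_norm] using this
    rw [div_le_iff₀ (by positivity)]
    have hg0 : (0:ℝ) ≤ ‖g‖ := norm_nonneg _
    nlinarith [norm_nonneg (T p - T q)]
  have key : ∀ (p q : X) (g : X →L[ℝ] ℝ), p ≠ q → g ∈ Dset ℝ (p - q) →
      ‖g (T p - T q)‖ / ‖p - q‖ ^ 2 ≤ ν :=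
    fun p q g hpq hg => le_csSup hbdd ⟨p, q, g, hpq, hg, rfl⟩
  have hν0 : 0 ≤ ν := by rw [← hatt]; positivity
  set a : ℝ := f (T x - T y) with ha
  have haν : |a| = ν * c ^ 2 := by
    have := hatt
    rw [div_eq_iff (by positivity : (c:ℝ)^2 ≠ 0)] at this
    simpa [hν] using this
  -- the scalar function along the segment
  set φ : ℝ → ℝ := fun t => f (T (y + t • (x - y)) - T y) with hφ
  have hφlip : ∀ s t : ℝ, |φ s - φ t| ≤ ν * c ^ 2 * |s - t| := by
    intro s t
    rcases eq_or_ne s t with rfl | hst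
    · simp
    · set p : X := y + s • (x - y)
      set q : X := y + t • (x - y)
      have hpq' : p - q = (s - t) • (x - y) := by
        simp only [p, q, sub_smul]; abel
      have hst0 : s - t ≠ 0 := sub_ne_zero.mpr hst
      have hpq : p ≠ q := by
        intro h
        apply hst0
        have : (s - t) • (x - y) = 0 := by rw [← hpq', h, sub_self]
        rcases smul_eq_zero.mp this with h' | h'
        · exact h'
        · exact absurd h' (sub_ne_zero.mpr hxy)
      have hnpq : ‖p - q‖ = |s - t| * c := by
        rw [hpq', abs_smul_norm]
      have hmem : (s - t) • f ∈ Dset ℝ (p - q) := by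
        constructor
        · rw [hpq']
          simp only [ContinuousLinearMap.smul_apply, map_smul, smul_eq_mul, hfx,
            RCLike.ofReal_real_eq_id, id]
          rw [abs_smul_norm, mul_pow, sq_abs]
          ring
        · rw [hnpq, clm_norm_smul, hfn]
          ring
      have hk := key p q ((s - t) • f) hpq hmem
      have hval : ((s - t) • f) (T p - T q) = (s - t) * (φ s - φ t) := by
        simp only [ContinuousLinearMap.smul_apply, smul_eq_mul, hφ, p, q, map_sub]
        ring
      rw [hval, hnpq] at hk
      rw [Real.norm_eq_abs, abs_mul, div_le_iff₀ (by positivity)] at hk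
      have habs : (0:ℝ) < |s - t| := abs_pos.mpr hst0
      rw [mul_pow] at hk
      nlinarith [hk, habs, abs_nonneg (φ s - φ t)]
  have hφ0 : φ 0 = 0 := by simp [hφ]
  have hφ1 : φ 1 = a := by simp [hφ, ha]
  have haff : ∀ t ∈ Set.Icc (0:ℝ) 1, φ t = a * t := by
    rintro t ⟨ht0, ht1⟩
    have h1 : |φ t| ≤ |a| * t := by
      have := hφlip t 0
      rw [hφ0, sub_zero, sub_zero] at this
      calc |φ t| ≤ ν * c ^ 2 * |t| := this
        _ = ν * c ^ 2 * t := by rw [abs_of_nonneg ht0]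
        _ = |a| * t := by rw [haν]
    have h2 : |a - φ t| ≤ |a| * (1 - t) := by
      have := hφlip 1 t
      rw [hφ1] at this
      calc |a - φ t| ≤ ν * c ^ 2 * |1 - t| := this
        _ = ν * c ^ 2 * (1 - t) := by rw [abs_of_nonneg (by linarith)]
        _ = |a| * (1 - t) := by rw [haν]
    rcases abs_le.mp h1 with ⟨h1l, h1r⟩
    rcases abs_le.mp h2 with ⟨h2l, h2r⟩
    rcases abs_cases a with ⟨hae, _⟩ | ⟨hae, _⟩ <;> rw [hae] at h1l h1r h2l h2r <;> nlinarith
  -- main part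
  intro u hu
  have hu' := hu
  rw [segment_eq_image] at hu'
  obtain ⟨θ, hθ, huθ⟩ := hu'
  obtain ⟨s, hs0, hs1, hus⟩ : ∃ s : ℝ, 0 ≤ s ∧ s ≤ 1 ∧ u = y + s • (x - y) := by
    refine ⟨1 - θ, by linarith [hθ.2], by linarith [hθ.1], ?_⟩
    rw [← huθ]
    simp only [smul_sub, sub_smul, one_smul]
    abel
  -- the derivative value in direction x - y
  have hquot : ∀ t : ℝ, t ≠ 0 → s + t ∈ Set.Icc (0:ℝ) 1 →
      f (t⁻¹ • (T (u + t • (x - y)) - T u)) = a := by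
    intro t ht hst
    have hpt : u + t • (x - y) = y + (s + t) • (x - y) := by
      rw [hus, add_smul]; abel
    have e1 : f (T (u + t • (x - y))) - f (T u) = φ (s + t) - φ s := by
      simp only [hφ, map_sub]
      rw [hpt, hus]
      ring
    rw [map_smul, smul_eq_mul, map_sub, e1, haff _ hst, haff s ⟨hs0, hs1⟩]
    field_simp
    ring
  have hder := hdiff u hu (x - y)
  have hfd : Filter.Tendsto (fun t : ℝ => f (t⁻¹ • (T (u + t • (x - y)) - T u)))
      (nhdsWithin 0 {0}ᶜ) (nhds (f (DT u (x - y)))) :=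
    (f.continuous.tendsto _).comp hder
  have hlim : f (DT u (x - y)) = a := by
    by_cases hs : s < 1
    · have hle : nhdsWithin (0:ℝ) (Set.Ioi 0) ≤ nhdsWithin 0 {0}ᶜ :=
        nhdsWithin_mono _ (fun t ht => ne_of_gt ht)
      have h1 := hfd.mono_left hle
      have h2 : ∀ᶠ t in nhdsWithin (0:ℝ) (Set.Ioi 0),
          f (t⁻¹ • (T (u + t • (x - y)) - T u)) = a := by
        filter_upwards [Ioo_mem_nhdsGT_of_mem (Set.mem_Ico.mpr ⟨le_refl 0, show (0:ℝ) < 1 - s by linarith⟩)]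
          with t ht
        exact hquot t (ne_of_gt ht.1) ⟨by linarith [ht.1.le], by linarith [ht.2]⟩
      exact tendsto_nhds_unique ((Filter.tendsto_congr' h2).mp h1) tendsto_const_nhds
    · have hseq : s = 1 := le_antisymm hs1 (not_lt.mp hs)
      have hle : nhdsWithin (0:ℝ) (Set.Iio 0) ≤ nhdsWithin 0 {0}ᶜ :=
        nhdsWithin_mono _ (fun t ht => ne_of_lt ht)
      have h1 := hfd.mono_left hle
      have h2 : ∀ᶠ t in nhdsWithin (0:ℝ) (Set.Iio 0),
          f (t⁻¹ • (T (u + t • (x - y)) - T u)) = a := by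
        filter_upwards [Ioo_mem_nhdsLT_of_mem (Set.mem_Ioc.mpr ⟨show (-1:ℝ) < 0 by norm_num, le_refl 0⟩)]
          with t ht
        exact hquot t (ne_of_lt ht.2) ⟨by rw [hseq]; linarith [ht.1], by rw [hseq]; linarith [ht.2.le]⟩
      exact tendsto_nhds_unique ((Filter.tendsto_congr' h2).mp h1) tendsto_const_nhds
  -- compute the RHS
  have hRHS : |(‖f‖⁻¹ • f) ((DT u) (‖x - y‖⁻¹ • (x - y)))| = ν := by
    rw [hfn]
    simp only [ContinuousLinearMap.smul_apply, map_smul, smul_eq_mul, hlim]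
    rw [abs_mul, abs_mul, abs_of_nonneg (show (0:ℝ) ≤ c⁻¹ by positivity), haν]
    field_simp
  rw [hRHS]
  -- the attaining pair
  set z₀ : X := c⁻¹ • (x - y) with hz₀
  set w₀ : X →L[ℝ] ℝ := c⁻¹ • f with hw₀
  have hz₀n : ‖z₀‖ = 1 := by
    rw [hz₀, abs_smul_norm, abs_of_nonneg (show (0:ℝ) ≤ c⁻¹ by positivity)]
    field_simp
    exact hc.symm
  have hw₀n : ‖w₀‖ = 1 := by
    rw [hw₀, clm_norm_smul, hfn, abs_of_nonneg (show (0:ℝ) ≤ c⁻¹ by positivity)]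
    field_simp
  have hw₀z₀ : w₀ z₀ = 1 := by
    rw [hw₀, hz₀]
    simp only [ContinuousLinearMap.smul_apply, map_smul, smul_eq_mul, hfx]
    field_simp
  have hw₀S : |w₀ ((DT u) z₀)| = ν := by
    rw [hw₀, hz₀]
    simp only [ContinuousLinearMap.smul_apply, map_smul, smul_eq_mul, hlim]
    rw [abs_mul, abs_mul, abs_of_nonneg (show (0:ℝ) ≤ c⁻¹ by positivity), haν]
    field_simp
  have hνmem : ν ∈ {r : ℝ | ∃ (z : X) (w : X →L[ℝ] ℝ), ‖z‖ = 1 ∧ ‖w‖ = 1 ∧ w z = 1 ∧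
      r = |w ((DT u) z)|} := ⟨z₀, w₀, hz₀n, hw₀n, hw₀z₀, hw₀S.symm⟩
  have hbdd2 : BddAbove {r : ℝ | ∃ (z : X) (w : X →L[ℝ] ℝ), ‖z‖ = 1 ∧ ‖w‖ = 1 ∧ w z = 1 ∧
      r = |w ((DT u) z)|} := by
    refine ⟨‖DT u‖, ?_⟩
    rintro r ⟨z, w, hz, hw, _, rfl⟩
    calc |w ((DT u) z)| ≤ ‖w‖ * ‖(DT u) z‖ := w.le_opNorm _
      _ ≤ 1 * (‖DT u‖ * ‖z‖) := by
          rw [hw]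
          exact mul_le_mul_of_nonneg_left ((DT u).le_opNorm z) zero_le_one
      _ = ‖DT u‖ := by rw [hz]; ring
  have hub : ∀ r ∈ {r : ℝ | ∃ (z : X) (w : X →L[ℝ] ℝ), ‖z‖ = 1 ∧ ‖w‖ = 1 ∧ w z = 1 ∧
      r = |w ((DT u) z)|}, r ≤ ν := by
    rintro r ⟨z, w, hz, hw, hwz, rfl⟩
    have hz0 : z ≠ 0 := by intro h; rw [h, norm_zero] at hz; norm_num at hz
    have hder2 := hdiff u hu z
    have htend : Filter.Tendsto (fun t : ℝ => |w (t⁻¹ • (T (u + t • z) - T u))|)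
        (nhdsWithin 0 {0}ᶜ) (nhds (|w ((DT u) z)|)) :=
      (continuous_abs.tendsto _).comp ((w.continuous.tendsto _).comp hder2)
    have hev : ∀ᶠ t in nhdsWithin (0:ℝ) {0}ᶜ,
        |w (t⁻¹ • (T (u + t • z) - T u))| ≤ ν := by
      filter_upwards [eventually_mem_nhdsWithin] with t ht
      have ht0 : t ≠ 0 := ht
      have htz : t • z ≠ 0 := smul_ne_zero ht0 hz0
      have hpne : u + t • z ≠ u := by
        intro h
        apply htz
        have := congrArg (fun v => v - u) h
        simpa using this
      have hsub : (u + t • z) - u = t • z := by abel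
      have hmem : t • w ∈ Dset ℝ ((u + t • z) - u) := by
        rw [hsub]
        constructor
        · simp only [ContinuousLinearMap.smul_apply, map_smul, smul_eq_mul, hwz,
            RCLike.ofReal_real_eq_id, id]
          rw [abs_smul_norm, hz, mul_pow, sq_abs]
          ring
        · rw [clm_norm_smul, abs_smul_norm, hw, hz]
          ring
      have hk := key (u + t • z) u (t • w) hpne hmem
      rw [hsub] at hk
      have hnz : ‖t • z‖ = |t| := by rw [abs_smul_norm, hz, mul_one]
      rw [hnz] at hk
      have hval : ((t • w) (T (u + t • z) - T u)) = t * (w (T (u + t • z) - T u)) := by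
        simp [ContinuousLinearMap.smul_apply, smul_eq_mul]
      rw [hval, Real.norm_eq_abs, abs_mul] at hk
      have habs : (0:ℝ) < |t| := abs_pos.mpr ht0
      have : |w (t⁻¹ • (T (u + t • z) - T u))| = |t|⁻¹ * |w (T (u + t • z) - T u)| := by
        rw [map_smul, smul_eq_mul, abs_mul, abs_inv]
      rw [this]
      rw [div_le_iff₀ (by positivity), sq_abs] at hk
      rw [inv_mul_le_iff₀ habs]
      nlinarith [hk, habs, sq_abs t]
    exact le_of_tendsto htend hev
  exact le_antisymm (csSup_le ⟨ν, hνmem⟩ hub) (le_csSup hbdd2 hνmem)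

end
end

section
/- Let X and Y be real Banach spaces and let G : X → Y be a bounded linear operator with ‖G‖ = 1. Then G is a Daugavet center if and only if for every y ∈ Y with ‖y‖ = 1, every f ∈ Lip₀(X,ℝ) and every ε > 0, there exists u ∈ S(f, ε) such that ‖Gu + y‖ > 2 − ε. -/
noncomputable section

/-- A bounded linear operator `G : X → Y` is a Daugavet center if `‖G + T‖ = ‖G‖ + ‖T‖`
for every rank-one operator `T = x* ⊗ y₀`. -/
def IsDaugavetCenter {X Y : Type*} [NormedAddCommGroup X] [NormedSpace ℝ X]
    [NormedAddCommGroup Y] [NormedSpace ℝ Y] (G : X →L[ℝ] Y) : Prop :=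
  ∀ (f : X →L[ℝ] ℝ) (y₀ : Y),
    ‖G + f.smulRight y₀‖ = ‖G‖ + ‖f.smulRight y₀‖

/-- The Lip-slice `S(f, ε)` of the unit sphere of `X`. -/
def LipSlice {X : Type*} [NormedAddCommGroup X] [NormedSpace ℝ X] (f : X → ℝ) (ε : ℝ) :
    Set X :=
  {z | ∃ u v : X, u ≠ v ∧ z = ‖u - v‖⁻¹ • (u - v) ∧ (f u - f v) / ‖u - v‖ > LipNorm f - ε}

open scoped NNReal
namespace DGHelp

variable {X Y : Type*} [NormedAddCommGroup X] [NormedSpace ℝ X]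
  [NormedAddCommGroup Y] [NormedSpace ℝ Y]

lemma bdd (f : X → ℝ) {K : ℝ≥0} (hK : LipschitzWith K f) :
    BddAbove {r : ℝ | ∃ u v : X, u ≠ v ∧ r = ‖f u - f v‖ / ‖u - v‖} := by
  refine ⟨K, fun r hr => ?_⟩
  obtain ⟨u, v, huv, rfl⟩ := hr
  have h1 : ‖f u - f v‖ ≤ K * ‖u - v‖ := by
    simpa [dist_eq_norm] using hK.dist_le_mul u v
  have h2 : (0:ℝ) < ‖u - v‖ := by
    rw [norm_pos_iff, sub_ne_zero]; exact huv
  exact (div_le_iff₀ h2).mpr h1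

lemma quot_le (f : X → ℝ) {K : ℝ≥0} (hK : LipschitzWith K f) {u v : X} (huv : u ≠ v) :
    ‖f u - f v‖ / ‖u - v‖ ≤ LipNorm f :=
  le_csSup (bdd f hK) ⟨u, v, huv, rfl⟩

lemma abs_le (f : X → ℝ) {K : ℝ≥0} (hK : LipschitzWith K f) (u v : X) :
    |f u - f v| ≤ LipNorm f * ‖u - v‖ := by
  rcases eq_or_ne u v with rfl | h
  · simp
  · have h2 : (0:ℝ) < ‖u - v‖ := by rw [norm_pos_iff, sub_ne_zero]; exact h
    have := quot_le f hK h
    rw [div_le_iff₀ h2] at this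
    simpa [Real.norm_eq_abs] using this

lemma lipNorm_nonneg [Nontrivial X] (f : X → ℝ) {K : ℝ≥0} (hK : LipschitzWith K f) :
    0 ≤ LipNorm f := by
  obtain ⟨u, v, huv⟩ := exists_pair_ne X
  exact le_trans (by positivity) (quot_le f hK huv)

lemma lipNorm_clm [Nontrivial X] (g : X →L[ℝ] ℝ) : LipNorm ⇑g = ‖g‖ := by
  have hK : LipschitzWith ‖g‖₊ ⇑g := g.lipschitz
  refine le_antisymm ?_ ?_
  · refine csSup_le ?_ ?_
    · obtain ⟨u, v, huv⟩ := exists_pair_ne X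
      exact ⟨_, u, v, huv, rfl⟩
    · rintro r ⟨u, v, huv, rfl⟩
      have h2 : (0:ℝ) < ‖u - v‖ := by rw [norm_pos_iff, sub_ne_zero]; exact huv
      rw [div_le_iff₀ h2]
      calc ‖g u - g v‖ = ‖g (u - v)‖ := by rw [map_sub]
        _ ≤ ‖g‖ * ‖u - v‖ := g.le_opNorm _
  · refine g.opNorm_le_bound (lipNorm_nonneg _ hK) fun x => ?_
    rcases eq_or_ne x 0 with rfl | hx
    · simp
    · have h2 : (0:ℝ) < ‖x‖ := norm_pos_iff.2 hx
      have h3 := quot_le (⇑g) hK (show x ≠ (0:X) from hx)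
      simp only [map_zero, sub_zero] at h3
      rw [div_le_iff₀ h2] at h3
      exact h3

lemma slice_lemma (G : X →L[ℝ] Y) (hG : ‖G‖ = 1) (hDC : IsDaugavetCenter G)
    {y : Y} (hy : ‖y‖ = 1) {x' : X →L[ℝ] ℝ} (hx' : ‖x'‖ = 1) {δ : ℝ} (hδ : 0 < δ) :
    ∃ d : X, ‖d‖ ≤ 1 ∧ 1 - δ < x' d ∧ 2 - δ < ‖G d + y‖ := by
  have hT : ‖x'.smulRight y‖ = 1 := by
    rw [ContinuousLinearMap.norm_smulRight_apply, hx', hy, one_mul]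
  have h2 : (2 - δ/2 : ℝ) < ‖G + x'.smulRight y‖ := by
    rw [hDC x' y, hG, hT]; linarith
  obtain ⟨w, hw1, hw2⟩ := (G + x'.smulRight y).exists_lt_apply_of_lt_opNorm h2
  have happly : (G + x'.smulRight y) w = G w + x' w • y := by
    simp [ContinuousLinearMap.add_apply, ContinuousLinearMap.smulRight_apply]
  rw [happly] at hw2
  have hGw : ‖G w‖ ≤ 1 := by
    have := G.le_opNorm w; rw [hG, one_mul] at this; linarith
  have habs : 1 - δ/2 < |x' w| := by
    have h3 : ‖G w + x' w • y‖ ≤ ‖G w‖ + |x' w| := by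
      calc ‖G w + x' w • y‖ ≤ ‖G w‖ + ‖x' w • y‖ := norm_add_le _ _
        _ = ‖G w‖ + |x' w| := by rw [norm_smul, Real.norm_eq_abs, hy, mul_one]
    linarith
  obtain ⟨d, hd_norm, hd_val, hd_G⟩ :
      ∃ d : X, ‖d‖ ≤ 1 ∧ x' d = |x' w| ∧ 2 - δ/2 < ‖G d + x' d • y‖ := by
    rcases le_or_gt 0 (x' w) with h | h
    · exact ⟨w, hw1.le, (abs_of_nonneg h).symm, hw2⟩
    · refine ⟨-w, by rw [norm_neg]; exact hw1.le, by rw [map_neg, abs_of_neg h], ?_⟩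
      have hflip : G (-w) + x' (-w) • y = -(G w + x' w • y) := by
        rw [map_neg, map_neg, neg_smul, neg_add]
      rw [hflip, norm_neg]
      exact hw2
  have hd_le1 : x' d ≤ 1 := by
    have h5 := x'.le_opNorm d
    rw [hx', one_mul] at h5
    calc x' d ≤ |x' d| := le_abs_self _
      _ = ‖x' d‖ := (Real.norm_eq_abs _).symm
      _ ≤ ‖d‖ := h5
      _ ≤ 1 := hd_norm
  have hval : 1 - δ/2 < x' d := by rw [hd_val]; exact habs
  refine ⟨d, hd_norm, by linarith, ?_⟩
  have hexp : ‖G d + x' d • y‖ ≤ ‖G d + y‖ + (1 - x' d) := by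
    have h4 : G d + x' d • y = (G d + y) - (1 - x' d) • y := by module
    rw [h4]
    calc ‖(G d + y) - (1 - x' d) • y‖ ≤ ‖G d + y‖ + ‖(1 - x' d) • y‖ := norm_sub_le _ _
      _ = ‖G d + y‖ + (1 - x' d) := by
          rw [norm_smul, Real.norm_eq_abs, hy, mul_one, abs_of_nonneg (by linarith)]
  linarith

lemma ball_subset [Nontrivial X] [CompleteSpace X]
    (G : X →L[ℝ] Y) (hG : ‖G‖ = 1) (hDC : IsDaugavetCenter G)
    {y : Y} (hy : ‖y‖ = 1) {ε' : ℝ} (hε' : 0 < ε') {e : X} (he : ‖e‖ ≤ 1) :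
    e ∈ closure (convexHull ℝ {d : X | ‖d‖ ≤ 1 ∧ 2 - ε' < ‖G d + y‖}) := by
  set D := {d : X | ‖d‖ ≤ 1 ∧ 2 - ε' < ‖G d + y‖} with hD
  by_contra hcon
  obtain ⟨φ, u, hu1, hu2⟩ :=
    geometric_hahn_banach_closed_point ((convex_convexHull ℝ D).closure) isClosed_closure hcon
  have hφD : ∀ d ∈ D, φ d < u := fun d hd =>
    hu1 _ (subset_closure (subset_convexHull ℝ D hd))
  obtain ⟨x₀, hx₀⟩ := exists_ne (0 : X)
  obtain ⟨g₀, hg₀, -⟩ := exists_dual_vector ℝ x₀ (norm_ne_zero_iff.mpr hx₀)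
  obtain ⟨d₀, hd₀1, -, hd₀3⟩ := slice_lemma G hG hDC hy hg₀ hε'
  have hd₀D : d₀ ∈ D := ⟨hd₀1, hd₀3⟩
  have hφne : φ ≠ 0 := by
    intro h0
    have h1 := hφD d₀ hd₀D
    rw [h0] at h1 hu2
    simp at h1 hu2
    linarith
  have hφpos : 0 < ‖φ‖ := norm_pos_iff.2 hφne
  have hue : u < ‖φ‖ := by
    have : φ e ≤ ‖φ‖ := by
      calc φ e ≤ |φ e| := le_abs_self _
        _ = ‖φ e‖ := (Real.norm_eq_abs _).symm
        _ ≤ ‖φ‖ * ‖e‖ := φ.le_opNorm e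
        _ ≤ ‖φ‖ * 1 := by nlinarith
        _ = ‖φ‖ := mul_one _
    linarith
  set x' : X →L[ℝ] ℝ := ‖φ‖⁻¹ • φ with hx'
  have hx'norm : ‖x'‖ = 1 := by
    have h1 := norm_smul (‖φ‖⁻¹) φ
    rw [hx', h1, norm_inv, norm_norm, inv_mul_cancel₀ hφpos.ne']
  set δ := min ε' ((‖φ‖ - u)/(2*‖φ‖)) with hδdef
  have hδpos : 0 < δ := lt_min hε' (div_pos (by linarith) (by linarith))
  obtain ⟨d, hd1, hd2, hd3⟩ := slice_lemma G hG hDC hy hx'norm hδpos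
  have hdD : d ∈ D := by
    refine ⟨hd1, lt_of_le_of_lt ?_ hd3⟩
    have := min_le_left ε' ((‖φ‖ - u)/(2*‖φ‖))
    linarith
  have hφd : φ d < u := hφD d hdD
  have hx'd : x' d = ‖φ‖⁻¹ * φ d := by
    rw [hx']; simp [smul_eq_mul]
  have h1 : ‖φ‖ * (1 - δ) < φ d := by
    have h2 := hd2
    rw [hx'd] at h2
    have h3 : ‖φ‖ * (1 - δ) < ‖φ‖ * (‖φ‖⁻¹ * φ d) := by
      exact mul_lt_mul_of_pos_left h2 hφpos
    rw [← mul_assoc, mul_inv_cancel₀ hφpos.ne', one_mul] at h3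
    exact h3
  have hmin : δ ≤ (‖φ‖ - u)/(2*‖φ‖) := min_le_right _ _
  have hq : ‖φ‖ * ((‖φ‖ - u)/(2*‖φ‖)) = (‖φ‖ - u)/2 := by
    field_simp [hφpos.ne']
  have h2 : ‖φ‖ * δ ≤ (‖φ‖ - u)/2 := by
    calc ‖φ‖ * δ ≤ ‖φ‖ * ((‖φ‖ - u)/(2*‖φ‖)) := by
          exact mul_le_mul_of_nonneg_left hmin hφpos.le
      _ = (‖φ‖ - u)/2 := hq
  nlinarith

lemma sum_dite_card {ι : Type} {M : Type*} [AddCommMonoid M] (t : Finset ι) (g : ι → M) :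
    ∑ i ∈ Finset.range t.card,
      (if h : i < t.card then g (((Fintype.equivFinOfCardEq (Fintype.card_coe t)).symm ⟨i, h⟩ : t) : ι) else 0)
      = ∑ i ∈ t, g i := by
  rw [← Fin.sum_univ_eq_sum_range]
  have h1 : ∀ i : Fin t.card,
      (if h : (i : ℕ) < t.card then
        g (((Fintype.equivFinOfCardEq (Fintype.card_coe t)).symm ⟨(i : ℕ), h⟩ : t) : ι) else 0)
        = g (((Fintype.equivFinOfCardEq (Fintype.card_coe t)).symm i : t) : ι) := by
    intro i
    rw [dif_pos i.isLt]
  rw [Finset.sum_congr rfl fun i _ => h1 i, ← Finset.sum_coe_sort t g]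
  exact Equiv.sum_comp (Fintype.equivFinOfCardEq (Fintype.card_coe t)).symm fun a => g (a : ι)

end DGHelp

set_option maxHeartbeats 4000000 in
/-- A norm-one operator `G : X → Y` is a Daugavet center if and only if for
every `y ∈ S_Y`, every `f ∈ Lip₀(X,ℝ)` and every `ε > 0` there is `u ∈ S(f,ε)` with
`‖Gu + y‖ > 2 - ε`. -/
theorem daugavet_center_iff_lip_slice
    {X Y : Type*} [NormedAddCommGroup X] [NormedSpace ℝ X] [CompleteSpace X]
    [NormedAddCommGroup Y] [NormedSpace ℝ Y] [CompleteSpace Y]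
    (G : X →L[ℝ] Y) (hG : ‖G‖ = 1) :
    IsDaugavetCenter G ↔
      ∀ y : Y, ‖y‖ = 1 → ∀ f : X → ℝ, IsLip0 f → ∀ ε > (0 : ℝ),
        ∃ u ∈ LipSlice f ε, ‖G u + y‖ > 2 - ε := by
  haveI hXnt : Nontrivial X := by
    by_contra h
    rw [not_nontrivial_iff_subsingleton] at h
    have hG0 : G = 0 := by
      ext x
      rw [Subsingleton.elim x (0 : X)]
      simp
    rw [hG0] at hG
    simp at hG
  constructor
  · -- forward direction
    intro hDC y hy f hf ε hεpos
    have main : ∀ ε : ℝ, 0 < ε → ε ≤ 1/2 → ∃ u ∈ LipSlice f ε, 2 - ε < ‖G u + y‖ := by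
      clear hεpos ε
      intro ε hε hε2
      obtain ⟨K, hK⟩ := hf.1
      set L := LipNorm f with hLdef
      have hL0 : 0 ≤ L := DGHelp.lipNorm_nonneg f hK
      -- pick a good pair (a, b)
      have hQne : {r : ℝ | ∃ u v : X, u ≠ v ∧ r = ‖f u - f v‖ / ‖u - v‖}.Nonempty := by
        obtain ⟨u, v, huv⟩ := exists_pair_ne X
        exact ⟨_, u, v, huv, rfl⟩
      have hlt : L - ε/8 < sSup {r : ℝ | ∃ u v : X, u ≠ v ∧ r = ‖f u - f v‖ / ‖u - v‖} := by
        have : sSup {r : ℝ | ∃ u v : X, u ≠ v ∧ r = ‖f u - f v‖ / ‖u - v‖} = L := rfl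
        rw [this]; linarith
      obtain ⟨ρ, hρQ, hρ⟩ := exists_lt_of_lt_csSup hQne hlt
      obtain ⟨p, q, hpq, rfl⟩ := hρQ
      obtain ⟨a, b, hab, hqab⟩ : ∃ a b : X, a ≠ b ∧ L - ε/8 < (f a - f b)/‖a - b‖ := by
        rcases le_total (f q) (f p) with h | h
        · refine ⟨p, q, hpq, ?_⟩
          rwa [Real.norm_eq_abs, abs_of_nonneg (by linarith)] at hρ
        · refine ⟨q, p, hpq.symm, ?_⟩
          have h1 : ‖f p - f q‖ = f q - f p := by
            rw [Real.norm_eq_abs, abs_of_nonpos (by linarith)]; ring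
          rw [norm_sub_rev q p]
          rw [h1] at hρ
          exact hρ
      have hr : (0:ℝ) < ‖a - b‖ := by rw [norm_pos_iff, sub_ne_zero]; exact hab
      set r : ℝ := ‖a - b‖ with hrdef
      set ε' : ℝ := ε/(8*(L+1)) with hε'def
      have hε'pos : 0 < ε' := by positivity
      have hε'le : ε' ≤ ε/8 := by
        rw [hε'def]
        apply div_le_div_of_nonneg_left hε.le (by norm_num)
        nlinarith
      have hε'small : ε' < 1/8 := lt_of_le_of_lt hε'le (by linarith)
      set e : X := r⁻¹ • (a - b) with hedef
      have he1 : ‖e‖ = 1 := by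
        rw [hedef, norm_smul, norm_inv, norm_norm, ← hrdef, inv_mul_cancel₀ hr.ne']
      have hae : a = b + r • e := by
        rw [hedef, smul_inv_smul₀ hr.ne']
        abel
      set D := {d : X | ‖d‖ ≤ 1 ∧ 2 - ε' < ‖G d + y‖} with hDdef
      have heD : e ∈ closure (convexHull ℝ D) :=
        DGHelp.ball_subset G hG hDC hy hε'pos he1.le
      rw [Metric.mem_closure_iff] at heD
      obtain ⟨c, hcD, hce⟩ := heD ε' hε'pos
      rw [convexHull_eq] at hcD
      obtain ⟨ι, t, w, z, hw0, hw1, hzD, hc⟩ := hcD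
      rw [Finset.centerMass_eq_of_sum_1 _ _ hw1] at hc
      set E := (Fintype.equivFinOfCardEq (Fintype.card_coe t)).symm with hEdef
      set W : ℕ → ℝ := fun i => if h : i < t.card then w ((E ⟨i, h⟩ : t) : ι) else 0 with hWdef
      set Z : ℕ → X := fun i => if h : i < t.card then z ((E ⟨i, h⟩ : t) : ι) else 0 with hZdef
      have hWsum : ∑ i ∈ Finset.range t.card, W i = 1 := by
        simp only [hWdef, hEdef]
        rw [DGHelp.sum_dite_card t w]
        exact hw1
      have hWZsum : ∑ i ∈ Finset.range t.card, W i • Z i = c := by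
        have h1 : ∀ i ∈ Finset.range t.card, W i • Z i
            = (if h : i < t.card then (fun j => w j • z j) ((E ⟨i, h⟩ : t) : ι) else 0) := by
          intro i hi
          have hi' := Finset.mem_range.1 hi
          simp only [hWdef, hZdef, dif_pos hi']
        rw [Finset.sum_congr rfl h1]
        simp only [hEdef]
        rw [DGHelp.sum_dite_card t (fun j => w j • z j)]
        exact hc
      have hW0 : ∀ i, 0 ≤ W i := by
        intro i
        simp only [hWdef]
        split
        · exact hw0 _ (Finset.coe_mem _)
        · exact le_refl 0
      set x : ℕ → X := fun k => b + r • ∑ i ∈ Finset.range k, W i • Z i with hxdef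
      have hx0 : x 0 = b := by simp [hxdef]
      have hxn : x t.card = b + r • c := by simp only [hxdef]; rw [hWZsum]
      have htel : ∑ i ∈ Finset.range t.card, (f (x (i+1)) - f (x i)) = f (x t.card) - f (x 0) :=
        Finset.sum_range_sub (fun k => f (x k)) t.card
      have hdist : ‖x t.card - a‖ ≤ r * ε' := by
        have hxa : x t.card - a = r • (c - e) := by
          rw [hxn, hae]; module
        rw [hxa, norm_smul, Real.norm_eq_abs, abs_of_pos hr]
        have : ‖c - e‖ = dist e c := by rw [dist_eq_norm, norm_sub_rev]
        rw [this]
        exact mul_le_mul_of_nonneg_left hce.le hr.le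
      have hsum_lb : (L - ε/4) * r < ∑ i ∈ Finset.range t.card, (f (x (i+1)) - f (x i)) := by
        rw [htel, hx0]
        have h1 : (L - ε/8) * r < f a - f b := (lt_div_iff₀ hr).1 hqab
        have habs : |f (x t.card) - f a| ≤ L * (r * ε') := by
          refine le_trans (DGHelp.abs_le f hK _ _) ?_
          exact mul_le_mul_of_nonneg_left hdist hL0
        have h2 : L * ε' ≤ ε/8 := by
          calc L * ε' ≤ (L+1) * ε' := by nlinarith
            _ = ε/8 := by rw [hε'def]; field_simp
        have h3 : L * (r * ε') ≤ (ε/8) * r := by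
          have : L * (r * ε') = (L * ε') * r := by ring
          rw [this]
          exact mul_le_mul_of_nonneg_right h2 hr.le
        have h4 : -(ε/8 * r) ≤ f (x t.card) - f a := by
          have := neg_abs_le (f (x t.card) - f a)
          linarith
        nlinarith
      have hexist : ∃ i ∈ Finset.range t.card,
          0 < W i ∧ (L - ε/2) * (W i * r) < f (x (i+1)) - f (x i) := by
        by_contra hcon
        push_neg at hcon
        have hle : ∀ i ∈ Finset.range t.card,
            f (x (i+1)) - f (x i) ≤ (L - ε/2) * (W i * r) := by
          intro i hi
          rcases (hW0 i).lt_or_eq with hpos | hzero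
          · exact hcon i hi hpos
          · have hx_eq : x (i+1) = x i := by
              rw [hxdef]
              simp [Finset.sum_range_succ, ← hzero]
            rw [hx_eq, ← hzero]
            simp
        have hsum_ub : ∑ i ∈ Finset.range t.card, (f (x (i+1)) - f (x i)) ≤ (L - ε/2) * r := by
          calc ∑ i ∈ Finset.range t.card, (f (x (i+1)) - f (x i))
              ≤ ∑ i ∈ Finset.range t.card, (L - ε/2) * (W i * r) := Finset.sum_le_sum hle
            _ = ((L - ε/2) * r) * ∑ i ∈ Finset.range t.card, W i := by
                rw [Finset.mul_sum]
                exact Finset.sum_congr rfl fun i _ => by ring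
            _ = (L - ε/2) * r := by rw [hWsum, mul_one]
        nlinarith
      obtain ⟨i, hi_mem, hWi, hinc⟩ := hexist
      have hi_lt : i < t.card := Finset.mem_range.1 hi_mem
      have hZiD : Z i ∈ D := by
        simp only [hZdef, dif_pos hi_lt]
        exact hzD _ (Finset.coe_mem _)
      obtain ⟨hZ1, hZG⟩ := hZiD
      have hGZ : ‖G (Z i)‖ ≤ ‖Z i‖ := by
        have := G.le_opNorm (Z i); rwa [hG, one_mul] at this
      have hZlow : 1 - ε' < ‖Z i‖ := by
        have h1 : ‖G (Z i) + y‖ ≤ ‖G (Z i)‖ + ‖y‖ := norm_add_le _ _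
        rw [hy] at h1
        linarith
      have hZpos : 0 < ‖Z i‖ := by linarith
      have hZne : Z i ≠ 0 := norm_pos_iff.1 hZpos
      have hdiff : x (i+1) - x i = (r * W i) • Z i := by
        simp only [hxdef, Finset.sum_range_succ]
        module
      have hdnorm : ‖x (i+1) - x i‖ = r * W i * ‖Z i‖ := by
        rw [hdiff, norm_smul, Real.norm_eq_abs, abs_of_pos (mul_pos hr hWi)]
      have hxne : x (i+1) ≠ x i := by
        rw [← sub_ne_zero, hdiff]
        exact smul_ne_zero (mul_pos hr hWi).ne' hZne
      set u : X := ‖Z i‖⁻¹ • Z i with hudef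
      have hu_eq : u = ‖x (i+1) - x i‖⁻¹ • (x (i+1) - x i) := by
        rw [hudef, hdnorm, hdiff, smul_smul]
        congr 1
        field_simp
      have hq : LipNorm f - ε < (f (x (i+1)) - f (x i)) / ‖x (i+1) - x i‖ := by
        rw [hdnorm, ← hLdef]
        rcases le_or_gt 0 (L - ε/2) with hcase | hcase
        · have hq1 : (L - ε/2) < (f (x (i+1)) - f (x i)) / (r * W i) := by
            rw [lt_div_iff₀ (mul_pos hr hWi)]
            calc (L - ε/2) * (r * W i) = (L - ε/2) * (W i * r) := by ring
              _ < f (x (i+1)) - f (x i) := hinc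
          have hinc_nonneg : 0 ≤ f (x (i+1)) - f (x i) :=
            le_trans (mul_nonneg hcase (mul_nonneg hWi.le hr.le)) hinc.le
          have hq2 : (f (x (i+1)) - f (x i)) / (r * W i)
              ≤ (f (x (i+1)) - f (x i)) / (r * W i * ‖Z i‖) := by
            apply div_le_div_of_nonneg_left hinc_nonneg
            · positivity
            · calc r * W i * ‖Z i‖ ≤ r * W i * 1 :=
                    mul_le_mul_of_nonneg_left hZ1 (mul_pos hr hWi).le
                _ = r * W i := mul_one _
          linarith
        · have habs2 := DGHelp.abs_le f hK (x (i+1)) (x i)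
          rw [hdnorm] at habs2
          have hden : (0:ℝ) < r * W i * ‖Z i‖ := by positivity
          have hlow : -L ≤ (f (x (i+1)) - f (x i)) / (r * W i * ‖Z i‖) := by
            rw [le_div_iff₀ hden]
            have := neg_abs_le (f (x (i+1)) - f (x i))
            nlinarith
          linarith
      have hGu : 2 - ε < ‖G u + y‖ := by
        have hmap : G u = ‖Z i‖⁻¹ • G (Z i) := by rw [hudef, map_smul]
        have hinv1 : 1 ≤ ‖Z i‖⁻¹ := by
          have h1 : ‖Z i‖ * ‖Z i‖⁻¹ = 1 := mul_inv_cancel₀ hZpos.ne'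
          nlinarith
        have hexp : ‖G (Z i) + y‖ ≤ ‖G u + y‖ + (‖Z i‖⁻¹ - 1) * ‖G (Z i)‖ := by
          have h5 : G (Z i) + y = (G u + y) - (‖Z i‖⁻¹ - 1) • G (Z i) := by
            rw [hmap]; module
          rw [h5]
          calc ‖(G u + y) - (‖Z i‖⁻¹ - 1) • G (Z i)‖
              ≤ ‖G u + y‖ + ‖(‖Z i‖⁻¹ - 1) • G (Z i)‖ := norm_sub_le _ _
            _ = ‖G u + y‖ + (‖Z i‖⁻¹ - 1) * ‖G (Z i)‖ := by
                rw [norm_smul, Real.norm_eq_abs, abs_of_nonneg (by linarith)]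
        have hprod : (‖Z i‖⁻¹ - 1) * ‖G (Z i)‖ ≤ 1 - ‖Z i‖ := by
          have h6 : (‖Z i‖⁻¹ - 1) * ‖G (Z i)‖ ≤ (‖Z i‖⁻¹ - 1) * ‖Z i‖ :=
            mul_le_mul_of_nonneg_left hGZ (by linarith)
          have h7 : (‖Z i‖⁻¹ - 1) * ‖Z i‖ = 1 - ‖Z i‖ := by
            field_simp
          linarith
        have h8 : 2 * ε' ≤ ε := by linarith
        linarith
      exact ⟨u, ⟨x (i+1), x i, hxne, hu_eq, hq⟩, hGu⟩
    rcases le_or_gt ε (1/2) with h | h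
    · exact main ε hεpos h
    · obtain ⟨u, hu, hGu⟩ := main (1/2) (by norm_num) le_rfl
      obtain ⟨p, q, hpq, hupq, hq⟩ := hu
      exact ⟨u, ⟨p, q, hpq, hupq, by linarith⟩, by linarith⟩
  · -- backward direction
    intro hcond x' y₀
    rcases eq_or_ne y₀ 0 with rfl | hy₀
    · have hT0 : x'.smulRight (0 : Y) = 0 := by ext x; simp
      rw [hT0]; simp
    rcases eq_or_ne x' 0 with rfl | hx'
    · have hT0 : (0 : X →L[ℝ] ℝ).smulRight y₀ = 0 := by ext x; simp
      rw [hT0]; simp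
    obtain ⟨M, hM⟩ : ∃ M : ℝ, M = ‖x'‖ * ‖y₀‖ := ⟨_, rfl⟩
    have hx'pos : 0 < ‖x'‖ := norm_pos_iff.2 hx'
    have hy₀pos : 0 < ‖y₀‖ := norm_pos_iff.2 hy₀
    have hMpos : 0 < M := hM ▸ mul_pos hx'pos hy₀pos
    have hTnorm : ‖x'.smulRight y₀‖ = M :=
      (ContinuousLinearMap.norm_smulRight_apply x' y₀).trans hM.symm
    have hle : ‖G + x'.smulRight y₀‖ ≤ ‖G‖ + ‖x'.smulRight y₀‖ := norm_add_le _ _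
    have hge : ∀ δ : ℝ, 0 < δ → δ < 1 → 1 + M - δ * (2*M + 1) ≤ ‖G + x'.smulRight y₀‖ := by
      intro δ hδ hδ1
      set g : X →L[ℝ] ℝ := ‖x'‖⁻¹ • x' with hgdef
      have hgnorm : ‖g‖ = 1 := by
        have h1 := norm_smul (‖x'‖⁻¹) x'
        rw [hgdef, h1, norm_inv, norm_norm, inv_mul_cancel₀ hx'pos.ne']
      set yy : Y := ‖y₀‖⁻¹ • y₀ with hyydef
      have hyynorm : ‖yy‖ = 1 := by
        rw [hyydef, norm_smul, norm_inv, norm_norm, inv_mul_cancel₀ hy₀pos.ne']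
      obtain ⟨u, huS, huG⟩ := hcond yy hyynorm ⇑g ⟨⟨‖g‖₊, g.lipschitz⟩, map_zero g⟩ δ hδ
      obtain ⟨p, q, hpq, hu_eq, hqslice⟩ := huS
      have hpq_pos : (0:ℝ) < ‖p - q‖ := by rw [norm_pos_iff, sub_ne_zero]; exact hpq
      have hunorm : ‖u‖ = 1 := by
        rw [hu_eq, norm_smul, norm_inv, norm_norm, inv_mul_cancel₀ hpq_pos.ne']
      have hLg : LipNorm ⇑g = 1 := by rw [DGHelp.lipNorm_clm g, hgnorm]
      have hgu : 1 - δ < g u := by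
        have h1 : g u = (g p - g q)/‖p - q‖ := by
          rw [hu_eq, map_smul, map_sub, smul_eq_mul, div_eq_inv_mul]
        rw [hLg] at hqslice
        rw [h1]
        linarith [hqslice]
      have hgu1 : g u ≤ 1 := by
        have h2 := g.le_opNorm u
        rw [hgnorm, one_mul, hunorm] at h2
        calc g u ≤ |g u| := le_abs_self _
          _ = ‖g u‖ := (Real.norm_eq_abs _).symm
          _ ≤ 1 := h2
      have happ : (G + x'.smulRight y₀) u = G u + (M * g u) • yy := by
        rw [ContinuousLinearMap.add_apply, ContinuousLinearMap.smulRight_apply]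
        congr 1
        have h1 : x' u = ‖x'‖ * g u := by
          rw [hgdef]
          simp only [ContinuousLinearMap.coe_smul', Pi.smul_apply, smul_eq_mul]
          rw [← mul_assoc, mul_inv_cancel₀ hx'pos.ne', one_mul]
        have h2 : y₀ = ‖y₀‖ • yy := by
          rw [hyydef, smul_inv_smul₀ hy₀pos.ne']
        rw [h1, h2, smul_smul, hM]
        ring_nf
      have hGu_le : ‖G u‖ ≤ 1 := by
        have := G.le_opNorm u
        rwa [hG, one_mul, hunorm] at this
      have hbound : 1 + M - δ*(2*M+1) ≤ ‖G u + (M * g u) • yy‖ := by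
        rcases le_or_gt M 1 with hcase | hcase
        · have htr : ‖G u + yy‖ ≤ ‖G u + (M * g u) • yy‖ + |M * g u - 1| := by
            have h3 : G u + yy = (G u + (M * g u) • yy) - ((M * g u - 1) • yy) := by module
            rw [h3]
            calc ‖(G u + (M * g u) • yy) - ((M * g u - 1) • yy)‖
                ≤ ‖G u + (M * g u) • yy‖ + ‖(M * g u - 1) • yy‖ := norm_sub_le _ _
              _ = ‖G u + (M * g u) • yy‖ + |M * g u - 1| := by
                  rw [norm_smul, Real.norm_eq_abs, hyynorm, mul_one]
          have habs : |M * g u - 1| ≤ (1 - M) + M*δ := by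
            rw [abs_le]
            constructor
            · nlinarith [mul_le_mul_of_nonneg_left hgu.le hMpos.le]
            · nlinarith [mul_le_mul_of_nonneg_left hgu.le hMpos.le]
          nlinarith [mul_nonneg hδ.le hMpos.le]
        · have h5 : M * ‖G u + yy‖
              ≤ ‖G u + (M * g u) • yy‖ + (M - 1)*‖G u‖ + (M - M * g u) := by
            have hid : M • (G u + yy)
                = (G u + (M * g u) • yy) + (M - 1) • G u + ((M - M * g u) • yy) := by
              module
            calc M * ‖G u + yy‖ = ‖M • (G u + yy)‖ := by
                  rw [norm_smul, Real.norm_eq_abs, abs_of_pos hMpos]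
              _ = ‖(G u + (M * g u) • yy) + (M - 1) • G u + ((M - M * g u) • yy)‖ := by
                  rw [hid]
              _ ≤ ‖(G u + (M * g u) • yy) + (M - 1) • G u‖ + ‖(M - M * g u) • yy‖ :=
                  norm_add_le _ _
              _ ≤ ‖G u + (M * g u) • yy‖ + ‖(M - 1) • G u‖ + ‖(M - M * g u) • yy‖ := by
                  have := norm_add_le (G u + (M * g u) • yy) ((M - 1) • G u)
                  linarith
              _ = ‖G u + (M * g u) • yy‖ + (M - 1)*‖G u‖ + (M - M * g u) := by
                  rw [norm_smul, Real.norm_eq_abs, abs_of_nonneg (by linarith : (0:ℝ) ≤ M - 1),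
                    norm_smul, Real.norm_eq_abs, hyynorm, mul_one,
                    abs_of_nonneg (by nlinarith [mul_le_mul_of_nonneg_left hgu1 hMpos.le] : (0:ℝ) ≤ M - M * g u)]
          have h9 : M * (2 - δ) < M * ‖G u + yy‖ := by
            apply mul_lt_mul_of_pos_left _ hMpos
            linarith
          have h10 : M * (1 - δ) ≤ M * g u := mul_le_mul_of_nonneg_left hgu.le hMpos.le
          have h11 : (M - 1) * ‖G u‖ ≤ (M - 1) * 1 :=
            mul_le_mul_of_nonneg_left hGu_le (by linarith)
          nlinarith [h5, h9, h10, h11]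
      have hfin := (G + x'.smulRight y₀).le_opNorm u
      rw [hunorm, mul_one, happ] at hfin
      linarith
    rw [hG, hTnorm]
    have hfinal : 1 + M ≤ ‖G + x'.smulRight y₀‖ := by
      by_contra hlt
      push_neg at hlt
      obtain ⟨A, hA⟩ : ∃ A : ℝ, A = ‖G + x'.smulRight y₀‖ := ⟨_, rfl⟩
      rw [← hA] at hlt
      set δ := min ((1 + M - A)/(2*(2*M+1))) (1/2) with hδdef
      have hδpos : 0 < δ :=
        lt_min (div_pos (by linarith) (by linarith)) (by norm_num)
      have hδ1 : δ < 1 := lt_of_le_of_lt (min_le_right _ _) (by norm_num)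
      have h6 := hge δ hδpos hδ1
      rw [← hA] at h6
      have hδle : δ ≤ (1 + M - A)/(2*(2*M+1)) := min_le_left _ _
      have h7 : δ * (2*M+1) ≤ (1+M-A)/2 := by
        have h8 : (0:ℝ) < 2*M+1 := by linarith
        calc δ*(2*M+1) ≤ ((1 + M - A)/(2*(2*M+1)))*(2*M+1) :=
              mul_le_mul_of_nonneg_right hδle h8.le
          _ = (1+M-A)/2 := by field_simp
      linarith
    linarith

end
end

section
/- Let X and Y be real Banach spaces, let G : X → Y be a bounded linear operator which is a Daugavet center, and let T ∈ Lip₀(X,Y). Then there exist closed separable subspaces E of X and F of Y such that T(E) ⊆ F, G(E) ⊆ F, the restriction T|_E ∈ Lip₀(E,F) satisfies ‖T|_E‖_L = ‖T‖_L, the restriction G|_E : E → F satisfies ‖G|_E‖ = ‖G‖, and G|_E : E → F is a Daugavet center. -/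
noncomputable section

open Set Metric TopologicalSpace

namespace DCaux

variable {X Y : Type*} [NormedAddCommGroup X] [NormedSpace ℝ X]
  [NormedAddCommGroup Y] [NormedSpace ℝ Y]

lemma opNorm_le_of_unit {S : X →L[ℝ] Y} {b : ℝ} (hb : 0 ≤ b)
    (h : ∀ x : X, ‖x‖ ≤ 1 → ‖S x‖ ≤ b) : ‖S‖ ≤ b := by
  refine S.opNorm_le_bound hb fun x => ?_
  rcases eq_or_ne x 0 with rfl | hx
  · simp [hb]
  · have hx' : (0:ℝ) < ‖x‖ := norm_pos_iff.mpr hx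
    have h1 : ‖(‖x‖⁻¹ : ℝ) • x‖ ≤ 1 := by
      rw [norm_smul, norm_inv, norm_norm, inv_mul_cancel₀ hx'.ne']
    have h2 := h _ h1
    rw [map_smul, norm_smul, norm_inv, norm_norm] at h2
    have h3 : ‖x‖ * (‖x‖⁻¹ * ‖S x‖) ≤ ‖x‖ * b :=
      mul_le_mul_of_nonneg_left h2 (norm_nonneg x)
    calc ‖S x‖ = ‖x‖ * (‖x‖⁻¹ * ‖S x‖) := by field_simp
    _ ≤ ‖x‖ * b := h3
    _ = b * ‖x‖ := mul_comm _ _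

lemma exists_unit_gt {S : X →L[ℝ] Y} {b : ℝ} (hb : b < ‖S‖) :
    ∃ x : X, ‖x‖ ≤ 1 ∧ b < ‖S x‖ := by
  by_contra h
  push_neg at h
  rcases le_or_gt 0 b with hb0 | hb0
  · exact absurd (opNorm_le_of_unit hb0 h) (not_le.mpr hb)
  · have := h 0 (by simp)
    rw [map_zero, norm_zero] at this
    linarith

lemma exists_unit_gt_apply {f : X →L[ℝ] ℝ} {b : ℝ} (hb : b < ‖f‖) :
    ∃ x : X, ‖x‖ ≤ 1 ∧ b < f x := by
  obtain ⟨x, hx1, hx2⟩ := exists_unit_gt hb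
  rcases le_or_gt 0 (f x) with h | h
  · exact ⟨x, hx1, by rwa [Real.norm_eq_abs, abs_of_nonneg h] at hx2⟩
  · refine ⟨-x, by simpa using hx1, ?_⟩
    rw [map_neg]
    rwa [Real.norm_eq_abs, abs_of_neg h] at hx2

end DCaux

namespace DCaux

variable {X Y : Type*} [NormedAddCommGroup X] [NormedSpace ℝ X]
  [NormedAddCommGroup Y] [NormedSpace ℝ Y]

lemma keyA0aux (G : X →L[ℝ] Y) {y : Y} (hy : ‖y‖ = 1)
    (f : X →L[ℝ] ℝ) {c η : ℝ} (hc : 0 < c) (h2 : ‖G‖ + η ≤ c * ‖f‖)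
    {z : X} (hz : ‖z‖ ≤ 1) (hsign : 0 ≤ f z)
    (hval : ‖G‖ + c * ‖f‖ - η < ‖G z + (c * f z) • y‖) :
    ‖z‖ ≤ 1 ∧ c * ‖f‖ - η ≤ c * f z ∧ 2 * ‖G‖ - η < ‖G z + ‖G‖ • y‖ := by
  set g := ‖G‖ with hgdef
  set t := c * f z with htdef
  have ht0 : 0 ≤ t := mul_nonneg hc.le hsign
  have hfz : f z ≤ ‖f‖ := by
    have := f.unit_le_opNorm z hz
    rw [Real.norm_eq_abs] at this
    exact (le_abs_self _).trans this
  have htle : t ≤ c * ‖f‖ := mul_le_mul_of_nonneg_left hfz hc.le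
  have hGz : ‖G z‖ ≤ g := G.unit_le_opNorm z hz
  have hty : ‖t • y‖ = t := by rw [norm_smul, hy, Real.norm_eq_abs, abs_of_nonneg ht0, mul_one]
  have h3 : ‖G z + t • y‖ ≤ ‖G z‖ + t := by
    have h3' := norm_add_le (G z) (t • y)
    rwa [hty] at h3'
  have htlb : c * ‖f‖ - η < t := by linarith
  have htg : g ≤ t := by linarith
  have hid : G z + t • y = (G z + g • y) + (t - g) • y := by module
  have h4 : ‖G z + t • y‖ ≤ ‖G z + g • y‖ + (t - g) := by
    rw [hid]
    have := norm_add_le (G z + g • y) ((t - g) • y)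
    rw [norm_smul, hy, Real.norm_eq_abs, abs_of_nonneg (by linarith), mul_one] at this
    exact this
  exact ⟨hz, htlb.le, by linarith⟩

lemma keyA0 (G : X →L[ℝ] Y) (hG : IsDaugavetCenter G) {y : Y} (hy : ‖y‖ = 1)
    (f : X →L[ℝ] ℝ) {c η : ℝ} (hc : 0 < c) (hη : 0 < η)
    (h2 : ‖G‖ + η ≤ c * ‖f‖) :
    ∃ z : X, ‖z‖ ≤ 1 ∧ c * ‖f‖ - η ≤ c * f z ∧ 2 * ‖G‖ - η < ‖G z + ‖G‖ • y‖ := by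
  have hR : ‖f.smulRight (c • y)‖ = c * ‖f‖ := by
    rw [ContinuousLinearMap.norm_smulRight_apply, norm_smul, hy, Real.norm_eq_abs,
      abs_of_pos hc, mul_one, mul_comm]
  have hb : ‖G‖ + c * ‖f‖ - η < ‖G + f.smulRight (c • y)‖ := by
    rw [hG f (c • y), hR]; linarith
  obtain ⟨z₀, hz₀, hz₀'⟩ := exists_unit_gt hb
  have happ : ∀ w : X, (G + f.smulRight (c • y)) w = G w + (c * f w) • y := by
    intro w
    rw [ContinuousLinearMap.add_apply, ContinuousLinearMap.smulRight_apply,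
      smul_smul, mul_comm (f w) c]
  rw [happ z₀] at hz₀'
  rcases le_or_gt 0 (f z₀) with hsign | hsign
  · exact ⟨z₀, keyA0aux G hy f hc h2 hz₀ hsign hz₀'⟩
  · refine ⟨-z₀, keyA0aux G hy f hc h2 (by rw [norm_neg]; exact hz₀)
      (by rw [map_neg]; linarith) ?_⟩
    have hneg : G (-z₀) + (c * f (-z₀)) • y = -(G z₀ + (c * f z₀) • y) := by
      rw [map_neg, map_neg]; module
    rw [hneg, norm_neg]
    exact hz₀'

lemma hullA (G : X →L[ℝ] Y) (hG : IsDaugavetCenter G) {y : Y} (hy : ‖y‖ = 1)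
    {ε : ℝ} (hε : 0 < ε) {x₀ : X} (hx₀ : ‖x₀‖ ≤ 1) :
    x₀ ∈ closure (convexHull ℝ {z : X | ‖z‖ ≤ 1 ∧ 2 * ‖G‖ - ε < ‖G z + ‖G‖ • y‖}) := by
  set g := ‖G‖ with hgdef
  have hg0 : 0 ≤ g := norm_nonneg G
  set A : Set X := {z : X | ‖z‖ ≤ 1 ∧ 2 * g - ε < ‖G z + g • y‖} with hA
  rcases eq_or_lt_of_le hg0 with hgz | hgpos
  · have hx₀A : x₀ ∈ A := by
      refine ⟨hx₀, ?_⟩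
      have : (0:ℝ) ≤ ‖G x₀ + g • y‖ := norm_nonneg _
      rw [← hgz] at *
      linarith
    exact subset_closure (subset_convexHull ℝ _ hx₀A)
  -- g > 0
  have hGne : ∃ v : X, G v ≠ 0 := by
    by_contra hcon
    push_neg at hcon
    have hG0 : ‖G‖ = 0 := by
      have : G = 0 := by ext v; simp [hcon v]
      simp [this]
    rw [hgdef, hG0] at hgpos
    exact lt_irrefl _ hgpos
  obtain ⟨v, hv⟩ := hGne
  have hv0 : v ≠ 0 := by rintro rfl; simp at hv
  obtain ⟨f₀, hf₀, -⟩ := exists_dual_vector ℝ v (norm_ne_zero_iff.mpr hv0)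
  have hAne : A.Nonempty := by
    obtain ⟨z, hz1, -, hz3⟩ := keyA0 G hG hy f₀ (c := g + ε) (η := ε / 2)
      (by linarith) (by linarith) (by rw [hf₀, mul_one]; linarith)
    exact ⟨z, hz1, by linarith⟩
  by_contra hx
  obtain ⟨f, u, hfu, hux⟩ := geometric_hahn_banach_closed_point
    ((convex_convexHull ℝ A).closure) isClosed_closure hx
  have hfA : ∀ a ∈ A, f a < u := fun a ha =>
    hfu _ (subset_closure (subset_convexHull ℝ _ ha))
  have hfx : f x₀ ≤ ‖f‖ := by
    have h1 : f x₀ ≤ |f x₀| := le_abs_self _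
    have h2 := f.unit_le_opNorm x₀ hx₀
    rw [Real.norm_eq_abs] at h2
    linarith
  have huf : u < ‖f‖ := lt_of_lt_of_le hux hfx
  have hfpos : 0 < ‖f‖ := by
    by_contra hcon
    push_neg at hcon
    have hf0 : f = 0 := by
      have := le_antisymm hcon (norm_nonneg f)
      rwa [norm_eq_zero] at this
    obtain ⟨a, ha⟩ := hAne
    have h1 := hfA a ha
    rw [hf0] at h1 hux
    simp at h1 hux
    linarith
  set η := ε / 2 with hηdef
  have hηpos : 0 < η := by positivity
  set c := max ((g + η) / ‖f‖) (ε / (‖f‖ - u)) with hcdef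
  have hc : 0 < c := lt_max_of_lt_left (by positivity)
  have h2 : g + η ≤ c * ‖f‖ := by
    have := le_max_left ((g + η) / ‖f‖) (ε / (‖f‖ - u))
    rw [div_le_iff₀ hfpos] at this
    linarith
  obtain ⟨z, hz1, hz2, hz3⟩ := keyA0 G hG hy f hc hηpos h2
  have hzA : z ∈ A := ⟨hz1, by linarith⟩
  have hzu : f z < u := hfA z hzA
  have hcu : ε ≤ c * (‖f‖ - u) := by
    have := le_max_right ((g + η) / ‖f‖) (ε / (‖f‖ - u))
    rw [div_le_iff₀ (by linarith : (0:ℝ) < ‖f‖ - u)] at this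
    linarith
  nlinarith [hz2, hzu, hc, hcu, hηpos]

end DCaux
namespace DCaux

variable {E F : Type*} [NormedAddCommGroup E] [NormedSpace ℝ E]
  [NormedAddCommGroup F] [NormedSpace ℝ F]

lemma daugavetOfHull (H : E →L[ℝ] F)
    (hull : ∀ y : F, ‖y‖ = 1 → ∀ ε : ℝ, 0 < ε → ∀ x : E, ‖x‖ ≤ 1 →
      x ∈ closure (convexHull ℝ {z : E | ‖z‖ ≤ 1 ∧ 2 * ‖H‖ - ε < ‖H z + ‖H‖ • y‖})) :
    IsDaugavetCenter H := by
  intro f y₀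
  refine le_antisymm (norm_add_le _ _) ?_
  rw [ContinuousLinearMap.norm_smulRight_apply]
  by_cases hf0 : f = 0
  · have hR : f.smulRight y₀ = 0 := by ext w; simp [hf0]
    rw [hR, hf0, add_zero]
    simp
  by_cases hy0 : y₀ = 0
  · have hR : f.smulRight y₀ = 0 := by ext w; simp [hy0]
    rw [hR, hy0, add_zero]
    simp
  set g := ‖H‖ with hgdef
  by_cases hH0 : g = 0
  · have hH : H = 0 := by rwa [hgdef, norm_eq_zero] at hH0
    rw [hH0, hH]
    simp
  have hgpos : 0 < g := lt_of_le_of_ne (norm_nonneg H) (Ne.symm hH0)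
  have hfpos : 0 < ‖f‖ := norm_pos_iff.mpr hf0
  have hypos : 0 < ‖y₀‖ := norm_pos_iff.mpr hy0
  refine le_of_forall_pos_le_add fun ε hε => ?_
  set M := max 1 (‖f‖ * ‖y₀‖ / g) with hMdef
  have hM1 : 1 ≤ M := le_max_left _ _
  have hM2 : ‖f‖ * ‖y₀‖ / g ≤ M := le_max_right _ _
  set K := M + 2 * ‖y₀‖ + 1 with hKdef
  have hK : 0 < K := by positivity
  set η := min (ε / K) (‖f‖ / 2) with hηdef
  have hηpos : 0 < η := lt_min (by positivity) (by positivity)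
  have hη1 : η ≤ ε / K := min_le_left _ _
  have hη2 : η ≤ ‖f‖ / 2 := min_le_right _ _
  obtain ⟨x₁, hx₁, hfx₁⟩ := exists_unit_gt_apply (f := f) (b := ‖f‖ - η) (by linarith)
  set y : F := (‖y₀‖⁻¹ : ℝ) • y₀ with hydef
  have hy : ‖y‖ = 1 := by
    rw [hydef, norm_smul, norm_inv, norm_norm, inv_mul_cancel₀ hypos.ne']
  set A : Set E := {z : E | ‖z‖ ≤ 1 ∧ 2 * g - η < ‖H z + g • y‖} with hAdef
  have hx₁A : x₁ ∈ closure (convexHull ℝ A) := hull y hy η hηpos x₁ hx₁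
  have hzex : ∃ z ∈ A, f x₁ - η < f z := by
    by_contra hcon
    push_neg at hcon
    have hsub : convexHull ℝ A ⊆ {w : E | f w ≤ f x₁ - η} :=
      convexHull_min hcon (convex_halfSpace_le (LinearMap.isLinear (f : E →ₗ[ℝ] ℝ)) _)
    have hcl : closure (convexHull ℝ A) ⊆ {w : E | f w ≤ f x₁ - η} :=
      closure_minimal hsub (isClosed_le f.continuous continuous_const)
    have := hcl hx₁A
    simp only [Set.mem_setOf_eq] at this
    linarith
  obtain ⟨z, ⟨hz1, hz2⟩, hz3⟩ := hzex
  have hfzub : f z ≤ ‖f‖ := by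
    have := f.unit_le_opNorm z hz1
    rw [Real.norm_eq_abs] at this
    exact (le_abs_self _).trans this
  have hfz : ‖f‖ - 2 * η < f z := by linarith
  have hfzpos : 0 < f z := lt_of_le_of_lt (by linarith) hfz
  set s := f z * ‖y₀‖ with hsdef
  have hspos : 0 < s := by positivity
  have hsle : s ≤ ‖f‖ * ‖y₀‖ := mul_le_mul_of_nonneg_right hfzub hypos.le
  have happ : (H + f.smulRight y₀) z = H z + s • y := by
    have hsy : (f z) • y₀ = s • y := by
      rw [hsdef, hydef, smul_smul, mul_assoc, mul_inv_cancel₀ hypos.ne', mul_one]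
    rw [ContinuousLinearMap.add_apply, ContinuousLinearMap.smulRight_apply, hsy]
  have hHz : ‖H z‖ ≤ g := H.unit_le_opNorm z hz1
  have hkey : g + s - M * η ≤ ‖H z + s • y‖ := by
    rcases le_or_gt s g with hsg | hsg
    · have hid : H z + g • y = (H z + s • y) + (g - s) • y := by module
      have h5 := norm_add_le (H z + s • y) ((g - s) • y)
      rw [norm_smul, hy, Real.norm_eq_abs, abs_of_nonneg (by linarith), mul_one] at h5
      rw [← hid] at h5
      have a4 : η ≤ M * η := le_mul_of_one_le_left hηpos.le hM1
      linarith
    · obtain ⟨t, htdef⟩ : ∃ t : ℝ, t = s / g := ⟨s / g, rfl⟩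
      have ht : t * g = s := by rw [htdef]; exact div_mul_cancel₀ _ hgpos.ne'
      have hsg1 : 1 < t := by rw [htdef]; exact (one_lt_div hgpos).mpr hsg
      have hid : H z + s • y = t • (H z + g • y) - (t - 1) • H z := by
        rw [← ht]; module
      have h5 : ‖t • (H z + g • y)‖ - ‖(t - 1) • H z‖ ≤ ‖H z + s • y‖ := by
        rw [hid]; exact norm_sub_norm_le _ _
      rw [norm_smul, norm_smul, Real.norm_eq_abs, Real.norm_eq_abs,
        abs_of_pos (by linarith : (0:ℝ) < t), abs_of_pos (by linarith : (0:ℝ) < t - 1)] at h5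
      have hMg : t ≤ M := by
        refine le_trans ?_ hM2
        rw [htdef]
        gcongr
      have a1 : t * (2 * g - η) ≤ t * ‖H z + g • y‖ :=
        mul_le_mul_of_nonneg_left hz2.le (by linarith)
      have a2 : (t - 1) * ‖H z‖ ≤ (t - 1) * g :=
        mul_le_mul_of_nonneg_left hHz (by linarith)
      have a3 : t * (2 * g - η) - (t - 1) * g = s + g - t * η := by rw [← ht]; ring
      have a4 : t * η ≤ M * η := mul_le_mul_of_nonneg_right hMg hηpos.le
      linarith
  have hHR : ‖H z + s • y‖ ≤ ‖H + f.smulRight y₀‖ := by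
    rw [← happ]; exact (H + f.smulRight y₀).unit_le_opNorm z hz1
  have hs_lb : ‖f‖ * ‖y₀‖ - 2 * ‖y₀‖ * η ≤ s := by
    have h6 := mul_le_mul_of_nonneg_right hfz.le hypos.le
    have h7 : (‖f‖ - 2 * η) * ‖y₀‖ = ‖f‖ * ‖y₀‖ - 2 * ‖y₀‖ * η := by ring
    rw [h7] at h6
    exact h6.trans_eq hsdef.symm
  have hηK : K * η ≤ ε := by
    rw [← le_div_iff₀' hK]; exact hη1
  have hKη : K * η = M * η + 2 * ‖y₀‖ * η + η := by rw [hKdef]; ring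
  linarith

end DCaux
namespace DCaux

variable {V : Type*} [NormedAddCommGroup V] [NormedSpace ℝ V]

/-- All finite ℚ-linear combinations of elements of `s`. -/
def qspan (s : Set V) : Set V :=
  (fun l : List (ℚ × V) => (l.map fun p => (p.1 : ℝ) • p.2).sum) '' {l | ∀ p ∈ l, p.2 ∈ s}

lemma subset_qspan (s : Set V) : s ⊆ qspan s := by
  intro x hx
  exact ⟨[(1, x)], by simpa using hx, by simp⟩

lemma zero_mem_qspan (s : Set V) : (0 : V) ∈ qspan s := ⟨[], by simp, by simp⟩

lemma qspan_add {s : Set V} {a b : V} (ha : a ∈ qspan s) (hb : b ∈ qspan s) :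
    a + b ∈ qspan s := by
  obtain ⟨la, hla, rfl⟩ := ha
  obtain ⟨lb, hlb, rfl⟩ := hb
  refine ⟨la ++ lb, ?_, ?_⟩
  · intro p hp
    rcases List.mem_append.mp hp with h | h
    · exact hla p h
    · exact hlb p h
  · dsimp only
    rw [List.map_append, List.sum_append]

lemma qspan_smul {s : Set V} (q : ℚ) {a : V} (ha : a ∈ qspan s) :
    (q : ℝ) • a ∈ qspan s := by
  obtain ⟨l, hl, rfl⟩ := ha
  refine ⟨l.map fun p => (q * p.1, p.2), ?_, ?_⟩
  · intro p hp
    obtain ⟨p', hp', rfl⟩ := List.mem_map.mp hp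
    exact hl p' hp'
  · dsimp only
    rw [List.map_map, List.smul_sum, List.map_map]
    congr 1
    ext p
    simp [Function.comp, smul_smul]

lemma qspan_mono {s t : Set V} (h : s ⊆ t) : qspan s ⊆ qspan t := by
  rintro x ⟨l, hl, rfl⟩
  exact ⟨l, fun p hp => h (hl p hp), rfl⟩

lemma qspan_countable {s : Set V} (hs : s.Countable) : (qspan s).Countable := by
  have : Countable s := hs.to_subtype
  have hst : {l : List (ℚ × V) | ∀ p ∈ l, p.2 ∈ s} ⊆
      Set.range (fun l : List (ℚ × s) => l.map fun p => ((p.1 : ℚ), (p.2 : V))) := by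
    intro l hl
    induction l with
    | nil => exact ⟨[], rfl⟩
    | cons p l ih =>
      obtain ⟨l', hl'⟩ := ih fun q hq => hl q (List.mem_cons_of_mem _ hq)
      exact ⟨(p.1, ⟨p.2, hl p (List.mem_cons_self)⟩) :: l', by simp [hl']⟩
  have hcl : {l : List (ℚ × V) | ∀ p ∈ l, p.2 ∈ s}.Countable :=
    (Set.countable_range _).mono hst
  exact hcl.image _

/-- A predicate: nonempty, closed under addition and rational scalars. -/
def QClosed (s : Set V) : Prop :=
  (0 : V) ∈ s ∧ (∀ a ∈ s, ∀ b ∈ s, a + b ∈ s) ∧ (∀ (q : ℚ), ∀ a ∈ s, (q : ℝ) • a ∈ s)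

lemma qspan_qclosed (s : Set V) : QClosed (qspan s) :=
  ⟨zero_mem_qspan s, fun a ha b hb => qspan_add ha hb, fun q a ha => qspan_smul q ha⟩

/-- The closure of a `QClosed` set is an `ℝ`-submodule. -/
def closSub (s : Set V) (hs : QClosed s) : Submodule ℝ V where
  carrier := closure s
  zero_mem' := subset_closure hs.1
  add_mem' := fun {a b} ha hb =>
    map_mem_closure₂ continuous_add ha hb (fun a' ha' b' hb' => hs.2.1 a' ha' b' hb')
  smul_mem' := by
    intro r x hx
    have hq : ∀ q : ℚ, (q : ℝ) • x ∈ closure s := fun q =>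
      map_mem_closure (continuous_const_smul _) hx (fun a ha => hs.2.2 q a ha)
    have hr : r ∈ closure (Set.range ((↑) : ℚ → ℝ)) := by
      rw [Rat.denseRange_cast.closure_range]
      trivial
    have : r • x ∈ closure (closure s) := by
      refine map_mem_closure (f := fun t : ℝ => t • x) ?_ hr ?_
      · exact continuous_id.smul continuous_const
      · rintro _ ⟨q, rfl⟩
        exact hq q
    rwa [closure_closure] at this

lemma closSub_coe (s : Set V) (hs : QClosed s) : (closSub s hs : Set V) = closure s := rfl

end DCaux
namespace DCaux

variable {X Y : Type*} [NormedAddCommGroup X] [NormedSpace ℝ X]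
  [NormedAddCommGroup Y] [NormedSpace ℝ Y]

open scoped Classical in
/-- Selection of a finite set of "good" points approximating `x` in convex combination. -/
def sel (G : X →L[ℝ] Y) (x : X) (y : Y) (m : ℕ) : Set X :=
  if h : ∃ t : Set X, t.Finite ∧
      (t ⊆ {z : X | ‖z‖ ≤ 1 ∧ 2 * ‖G‖ - (1 / (m + 1)) < ‖G z + ‖G‖ • y‖}) ∧
      ∃ w ∈ convexHull ℝ t, ‖x - w‖ < 1 / (m + 1)
  then h.choose else ∅

lemma sel_finite (G : X →L[ℝ] Y) (x : X) (y : Y) (m : ℕ) : (sel G x y m).Finite := by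
  rw [sel]
  split
  · next h => exact h.choose_spec.1
  · exact Set.finite_empty

lemma sel_sub (G : X →L[ℝ] Y) (x : X) (y : Y) (m : ℕ) :
    sel G x y m ⊆ {z : X | ‖z‖ ≤ 1 ∧ 2 * ‖G‖ - (1 / (m + 1)) < ‖G z + ‖G‖ • y‖} := by
  rw [sel]
  split
  · next h => exact h.choose_spec.2.1
  · exact Set.empty_subset _

lemma sel_spec (G : X →L[ℝ] Y) (hG : IsDaugavetCenter G) {x : X} (hx : ‖x‖ ≤ 1)
    {y : Y} (hy : ‖y‖ = 1) (m : ℕ) :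
    ∃ w ∈ convexHull ℝ (sel G x y m), ‖x - w‖ < 1 / (m + 1) := by
  have hm : (0 : ℝ) < 1 / (m + 1) := by positivity
  have hmem := hullA G hG hy hm hx
  rw [Metric.mem_closure_iff] at hmem
  obtain ⟨w, hw, hdist⟩ := hmem (1 / (m + 1)) hm
  rw [convexHull_eq_union_convexHull_finite_subsets] at hw
  simp only [Set.mem_iUnion] at hw
  obtain ⟨t, ht, hwt⟩ := hw
  have hex : ∃ t' : Set X, t'.Finite ∧
      (t' ⊆ {z : X | ‖z‖ ≤ 1 ∧ 2 * ‖G‖ - (1 / (m + 1)) < ‖G z + ‖G‖ • y‖}) ∧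
      ∃ w ∈ convexHull ℝ t', ‖x - w‖ < 1 / (m + 1) :=
    ⟨↑t, t.finite_toSet, ht, w, hwt, by rwa [dist_eq_norm] at hdist⟩
  rw [sel, dif_pos hex]
  exact hex.choose_spec.2.2

/-- The recursive stages of the separable reduction. -/
def stage (G : X →L[ℝ] Y) (T : X → Y) (W : Set X) : ℕ → Set X × Set Y
  | 0 =>
    let c := qspan W
    (c, qspan (T '' c ∪ G '' c))
  | n + 1 =>
    let p := stage G T W n
    let c := qspan (p.1 ∪ ⋃ x ∈ p.1, ⋃ d ∈ p.2, ⋃ m : ℕ, sel G x ((‖d‖⁻¹ : ℝ) • d) m)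
    (c, qspan (p.2 ∪ (T '' c ∪ G '' c)))

lemma stage_fst_qclosed (G : X →L[ℝ] Y) (T : X → Y) (W : Set X) (n : ℕ) :
    QClosed (stage G T W n).1 := by
  cases n <;> exact qspan_qclosed _

lemma stage_snd_qclosed (G : X →L[ℝ] Y) (T : X → Y) (W : Set X) (n : ℕ) :
    QClosed (stage G T W n).2 := by
  cases n <;> exact qspan_qclosed _

lemma stage_mono_fst (G : X →L[ℝ] Y) (T : X → Y) (W : Set X) (n : ℕ) :
    (stage G T W n).1 ⊆ (stage G T W (n + 1)).1 :=
  fun x hx => subset_qspan _ (Set.mem_union_left _ hx)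

lemma stage_mono_snd (G : X →L[ℝ] Y) (T : X → Y) (W : Set X) (n : ℕ) :
    (stage G T W n).2 ⊆ (stage G T W (n + 1)).2 :=
  fun x hx => subset_qspan _ (Set.mem_union_left _ hx)

lemma stage_le_fst (G : X →L[ℝ] Y) (T : X → Y) (W : Set X) {i j : ℕ} (h : i ≤ j) :
    (stage G T W i).1 ⊆ (stage G T W j).1 := by
  induction j, h using Nat.le_induction with
  | base => exact subset_rfl
  | succ n hn ih => exact ih.trans (stage_mono_fst G T W n)

lemma stage_le_snd (G : X →L[ℝ] Y) (T : X → Y) (W : Set X) {i j : ℕ} (h : i ≤ j) :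
    (stage G T W i).2 ⊆ (stage G T W j).2 := by
  induction j, h using Nat.le_induction with
  | base => exact subset_rfl
  | succ n hn ih => exact ih.trans (stage_mono_snd G T W n)

lemma stage_countable (G : X →L[ℝ] Y) (T : X → Y) (W : Set X) (hW : W.Countable) (n : ℕ) :
    (stage G T W n).1.Countable ∧ (stage G T W n).2.Countable := by
  induction n with
  | zero =>
    refine ⟨qspan_countable hW, qspan_countable ?_⟩
    exact ((qspan_countable hW).image T).union ((qspan_countable hW).image G)
  | succ n ih =>
    have hc : (stage G T W (n + 1)).1.Countable := by
      refine qspan_countable (ih.1.union ?_)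
      refine Set.Countable.biUnion ih.1 fun x _ => ?_
      refine Set.Countable.biUnion ih.2 fun d _ => ?_
      exact Set.countable_iUnion fun m => (sel_finite G x _ m).countable
    exact ⟨hc, qspan_countable (ih.2.union ((hc.image T).union (hc.image G)))⟩

lemma stage_image_sub (G : X →L[ℝ] Y) (T : X → Y) (W : Set X) (n : ℕ) :
    T '' (stage G T W n).1 ⊆ (stage G T W n).2 ∧
    G '' (stage G T W n).1 ⊆ (stage G T W n).2 := by
  cases n with
  | zero =>
    constructor
    · exact fun y hy => subset_qspan _ (Set.mem_union_left _ hy)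
    · exact fun y hy => subset_qspan _ (Set.mem_union_right _ hy)
  | succ n =>
    constructor
    · exact fun y hy => subset_qspan _ (Set.mem_union_right _ (Set.mem_union_left _ hy))
    · exact fun y hy => subset_qspan _ (Set.mem_union_right _ (Set.mem_union_right _ hy))

/-- The countable core in `X`. -/
def CC (G : X →L[ℝ] Y) (T : X → Y) (W : Set X) : Set X := ⋃ n, (stage G T W n).1

/-- The countable core in `Y`. -/
def DD (G : X →L[ℝ] Y) (T : X → Y) (W : Set X) : Set Y := ⋃ n, (stage G T W n).2

lemma CC_countable (G : X →L[ℝ] Y) (T : X → Y) (W : Set X) (hW : W.Countable) :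
    (CC G T W).Countable :=
  Set.countable_iUnion fun n => (stage_countable G T W hW n).1

lemma DD_countable (G : X →L[ℝ] Y) (T : X → Y) (W : Set X) (hW : W.Countable) :
    (DD G T W).Countable :=
  Set.countable_iUnion fun n => (stage_countable G T W hW n).2

lemma CC_qclosed (G : X →L[ℝ] Y) (T : X → Y) (W : Set X) : QClosed (CC G T W) := by
  refine ⟨Set.mem_iUnion.mpr ⟨0, (stage_fst_qclosed G T W 0).1⟩, ?_, ?_⟩
  · intro a ha b hb
    obtain ⟨i, hi⟩ := Set.mem_iUnion.mp ha
    obtain ⟨j, hj⟩ := Set.mem_iUnion.mp hb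
    refine Set.mem_iUnion.mpr ⟨max i j, (stage_fst_qclosed G T W (max i j)).2.1 a
      (stage_le_fst G T W (le_max_left i j) hi) b
      (stage_le_fst G T W (le_max_right i j) hj)⟩
  · intro q a ha
    obtain ⟨i, hi⟩ := Set.mem_iUnion.mp ha
    exact Set.mem_iUnion.mpr ⟨i, (stage_fst_qclosed G T W i).2.2 q a hi⟩

lemma DD_qclosed (G : X →L[ℝ] Y) (T : X → Y) (W : Set X) : QClosed (DD G T W) := by
  refine ⟨Set.mem_iUnion.mpr ⟨0, (stage_snd_qclosed G T W 0).1⟩, ?_, ?_⟩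
  · intro a ha b hb
    obtain ⟨i, hi⟩ := Set.mem_iUnion.mp ha
    obtain ⟨j, hj⟩ := Set.mem_iUnion.mp hb
    refine Set.mem_iUnion.mpr ⟨max i j, (stage_snd_qclosed G T W (max i j)).2.1 a
      (stage_le_snd G T W (le_max_left i j) hi) b
      (stage_le_snd G T W (le_max_right i j) hj)⟩
  · intro q a ha
    obtain ⟨i, hi⟩ := Set.mem_iUnion.mp ha
    exact Set.mem_iUnion.mpr ⟨i, (stage_snd_qclosed G T W i).2.2 q a hi⟩

lemma image_CC_sub_T (G : X →L[ℝ] Y) (T : X → Y) (W : Set X) :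
    T '' CC G T W ⊆ DD G T W := by
  rintro _ ⟨x, hx, rfl⟩
  obtain ⟨n, hn⟩ := Set.mem_iUnion.mp hx
  exact Set.mem_iUnion.mpr ⟨n, (stage_image_sub G T W n).1 ⟨x, hn, rfl⟩⟩

lemma image_CC_sub_G (G : X →L[ℝ] Y) (T : X → Y) (W : Set X) :
    G '' CC G T W ⊆ DD G T W := by
  rintro _ ⟨x, hx, rfl⟩
  obtain ⟨n, hn⟩ := Set.mem_iUnion.mp hx
  exact Set.mem_iUnion.mpr ⟨n, (stage_image_sub G T W n).2 ⟨x, hn, rfl⟩⟩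

lemma W_sub_CC (G : X →L[ℝ] Y) (T : X → Y) (W : Set X) : W ⊆ CC G T W :=
  fun x hx => Set.mem_iUnion.mpr ⟨0, subset_qspan _ hx⟩

lemma sel_sub_CC (G : X →L[ℝ] Y) (T : X → Y) (W : Set X) {x : X} {d : Y} {n : ℕ}
    (hx : x ∈ (stage G T W n).1) (hd : d ∈ (stage G T W n).2) (m : ℕ) :
    sel G x ((‖d‖⁻¹ : ℝ) • d) m ⊆ CC G T W := by
  intro z hz
  refine Set.mem_iUnion.mpr ⟨n + 1, subset_qspan _ (Set.mem_union_right _ ?_)⟩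
  simp only [Set.mem_iUnion]
  exact ⟨x, hx, d, hd, m, hz⟩

end DCaux
namespace DCaux

variable {X Y : Type*} [NormedAddCommGroup X] [NormedSpace ℝ X]
  [NormedAddCommGroup Y] [NormedSpace ℝ Y]

lemma approx_unit {s : Set X} (hq : QClosed s) {x : X} (hx : x ∈ closure s)
    (hx1 : ‖x‖ ≤ 1) {θ : ℝ} (hθ : 0 < θ) :
    ∃ c ∈ s, ‖c‖ ≤ 1 ∧ ‖x - c‖ < θ := by
  set θ' := min (θ / 6) (1 / 2) with hθ'def
  have hθ'pos : 0 < θ' := lt_min (by positivity) (by norm_num)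
  have hθ'le : θ' ≤ θ / 6 := min_le_left _ _
  have hθ'half : θ' ≤ 1 / 2 := min_le_right _ _
  obtain ⟨c₀, hc₀s, hc₀⟩ : ∃ c₀ ∈ s, ‖x - c₀‖ < θ' := by
    rw [Metric.mem_closure_iff] at hx
    obtain ⟨c₀, h1, h2⟩ := hx θ' hθ'pos
    exact ⟨c₀, h1, by rwa [dist_eq_norm] at h2⟩
  have hc₀n : ‖c₀‖ ≤ 1 + θ' := by
    have h1 : ‖c₀‖ - ‖x‖ ≤ ‖c₀ - x‖ := norm_sub_norm_le _ _
    rw [norm_sub_rev] at h1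
    linarith
  have hpos1 : (0:ℝ) < 1 + θ' := by linarith
  obtain ⟨q, hq1, hq2⟩ := exists_rat_btwn
    (show (1 - θ') / (1 + θ') < 1 / (1 + θ') by gcongr; linarith)
  have hq0 : (0:ℝ) < (q:ℝ) :=
    lt_of_le_of_lt (div_nonneg (by linarith) (by linarith)) hq1
  have hqlt1 : (q:ℝ) < 1 := by
    have : (1:ℝ) / (1 + θ') ≤ 1 := by
      rw [div_le_one hpos1]; linarith
    linarith
  refine ⟨(q : ℝ) • c₀, hq.2.2 q c₀ hc₀s, ?_, ?_⟩
  · rw [norm_smul, Real.norm_eq_abs, abs_of_pos hq0]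
    have h2 : (q:ℝ) * ‖c₀‖ ≤ (q:ℝ) * (1 + θ') := by
      exact mul_le_mul_of_nonneg_left hc₀n hq0.le
    have h3 : (q:ℝ) * (1 + θ') < (1 / (1 + θ')) * (1 + θ') :=
      mul_lt_mul_of_pos_right hq2 hpos1
    rw [one_div, inv_mul_cancel₀ hpos1.ne'] at h3
    linarith
  · have h4 : ‖c₀ - (q:ℝ) • c₀‖ = (1 - (q:ℝ)) * ‖c₀‖ := by
      have : c₀ - (q:ℝ) • c₀ = (1 - (q:ℝ)) • c₀ := by module
      rw [this, norm_smul, Real.norm_eq_abs, abs_of_pos (by linarith)]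
    have h5 : (1 - (q:ℝ)) * ‖c₀‖ ≤ (1 - (q:ℝ)) * (1 + θ') :=
      mul_le_mul_of_nonneg_left hc₀n (by linarith)
    have h6 : (1 - (q:ℝ)) * (1 + θ') < (1 - (1 - θ') / (1 + θ')) * (1 + θ') := by
      apply mul_lt_mul_of_pos_right _ hpos1
      linarith
    have h7 : (1 - (1 - θ') / (1 + θ')) * (1 + θ') = 2 * θ' := by
      field_simp
      ring
    have h8 : ‖x - (q:ℝ) • c₀‖ ≤ ‖x - c₀‖ + ‖c₀ - (q:ℝ) • c₀‖ := by
      have : x - (q:ℝ) • c₀ = (x - c₀) + (c₀ - (q:ℝ) • c₀) := by abel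
      rw [this]; exact norm_add_le _ _
    rw [h4] at h8
    linarith

lemma approx_norm {s : Set Y} {y : Y} (hy : y ∈ closure s) (hy1 : ‖y‖ = 1)
    {θ : ℝ} (hθ : 0 < θ) (hθ2 : θ ≤ 1 / 2) :
    ∃ d ∈ s, d ≠ 0 ∧ ‖(‖d‖⁻¹ : ℝ) • d - y‖ < 2 * θ := by
  obtain ⟨d, hds, hd⟩ : ∃ d ∈ s, ‖y - d‖ < θ := by
    rw [Metric.mem_closure_iff] at hy
    obtain ⟨d, h1, h2⟩ := hy θ hθ
    exact ⟨d, h1, by rwa [dist_eq_norm] at h2⟩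
  have hdn : 1 - θ ≤ ‖d‖ := by
    have h1 : ‖y‖ - ‖d‖ ≤ ‖y - d‖ := norm_sub_norm_le _ _
    rw [hy1] at h1
    linarith
  have hdpos : (0:ℝ) < ‖d‖ := by linarith
  have hd0 : d ≠ 0 := norm_pos_iff.mp hdpos
  refine ⟨d, hds, hd0, ?_⟩
  have h2 : ‖(‖d‖⁻¹ : ℝ) • d - d‖ = |1 - ‖d‖| := by
    have hid : (‖d‖⁻¹ : ℝ) • d - d = ((‖d‖⁻¹ : ℝ) - 1) • d := by module
    rw [hid, norm_smul, Real.norm_eq_abs]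
    rw [show |‖d‖⁻¹ - 1| * ‖d‖ = |(‖d‖⁻¹ - 1) * ‖d‖| from by rw [abs_mul, abs_of_pos hdpos]]
    rw [sub_mul, inv_mul_cancel₀ hdpos.ne', one_mul]
  have h4 : ‖(‖d‖⁻¹ : ℝ) • d - y‖ ≤ ‖(‖d‖⁻¹ : ℝ) • d - d‖ + ‖d - y‖ := by
    have : (‖d‖⁻¹ : ℝ) • d - y = ((‖d‖⁻¹ : ℝ) • d - d) + (d - y) := by abel
    rw [this]; exact norm_add_le _ _
  rw [h2] at h4
  rw [norm_sub_rev] at hd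
  have h3' : |1 - ‖d‖| ≤ ‖d - y‖ := by
    have h5 := abs_norm_sub_norm_le y d
    rw [hy1, norm_sub_rev] at h5
    exact h5
  linarith

end DCaux
namespace DCaux

variable {X Y : Type*} [NormedAddCommGroup X] [NormedSpace ℝ X]
  [NormedAddCommGroup Y] [NormedSpace ℝ Y]

lemma hullE (G : X →L[ℝ] Y) (hG : IsDaugavetCenter G) (T : X → Y) (W : Set X)
    {y : Y} (hyD : y ∈ closure (DD G T W)) (hy : ‖y‖ = 1)
    {ε : ℝ} (hε : 0 < ε) {x : X} (hxC : x ∈ closure (CC G T W)) (hx : ‖x‖ ≤ 1) :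
    x ∈ closure (convexHull ℝ {z : X | z ∈ closure (CC G T W) ∧ ‖z‖ ≤ 1 ∧
      2 * ‖G‖ - ε < ‖G z + ‖G‖ • y‖}) := by
  set g := ‖G‖ with hgdef
  have hg0 : 0 ≤ g := norm_nonneg G
  rw [Metric.mem_closure_iff]
  intro δ hδ
  set θ := min (min (δ / 4) (1 / 4)) (ε / (8 * (g + 1))) with hθdef
  have hθpos : 0 < θ := lt_min (lt_min (by positivity) (by norm_num)) (by positivity)
  have hθδ : θ ≤ δ / 4 := le_trans (min_le_left _ _) (min_le_left _ _)
  have hθ4 : θ ≤ 1 / 4 := le_trans (min_le_left _ _) (min_le_right _ _)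
  have hθε : θ ≤ ε / (8 * (g + 1)) := min_le_right _ _
  obtain ⟨c, hcC, hc1, hcx⟩ := approx_unit (CC_qclosed G T W) hxC hx hθpos
  obtain ⟨d, hdD, hd0, hdy⟩ := approx_norm hyD hy hθpos (by linarith)
  obtain ⟨m, hm⟩ := exists_nat_one_div_lt (show (0:ℝ) < min (δ / 2) (ε / 2) from
    lt_min (by positivity) (by positivity))
  have hm1 : (1:ℝ) / (m + 1) < δ / 2 := lt_of_lt_of_le hm (min_le_left _ _)
  have hm2 : (1:ℝ) / (m + 1) < ε / 2 := lt_of_lt_of_le hm (min_le_right _ _)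
  obtain ⟨i, hi⟩ := Set.mem_iUnion.mp hcC
  obtain ⟨j, hj⟩ := Set.mem_iUnion.mp hdD
  have hci : c ∈ (stage G T W (max i j)).1 := stage_le_fst G T W (le_max_left i j) hi
  have hdj : d ∈ (stage G T W (max i j)).2 := stage_le_snd G T W (le_max_right i j) hj
  have hdnorm : (0:ℝ) < ‖d‖ := norm_pos_iff.mpr hd0
  have hyhat : ‖(‖d‖⁻¹ : ℝ) • d‖ = 1 := by
    rw [norm_smul, norm_inv, norm_norm]
    exact inv_mul_cancel₀ hdnorm.ne'
  obtain ⟨w, hw, hwc⟩ := sel_spec G hG hc1 hyhat m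
  have hsub : sel G c ((‖d‖⁻¹ : ℝ) • d) m ⊆ {z : X | z ∈ closure (CC G T W) ∧ ‖z‖ ≤ 1 ∧
      2 * g - ε < ‖G z + g • y‖} := by
    intro z hz
    obtain ⟨hz1, hz2⟩ := sel_sub G c ((‖d‖⁻¹ : ℝ) • d) m hz
    refine ⟨subset_closure (sel_sub_CC G T W hci hdj m hz), hz1, ?_⟩
    have hid : G z + g • ((‖d‖⁻¹ : ℝ) • d) =
        (G z + g • y) + g • ((‖d‖⁻¹ : ℝ) • d - y) := by module
    have h5 : ‖G z + g • ((‖d‖⁻¹ : ℝ) • d)‖ ≤ ‖G z + g • y‖ + g * ‖(‖d‖⁻¹ : ℝ) • d - y‖ := by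
      rw [hid]
      have := norm_add_le (G z + g • y) (g • ((‖d‖⁻¹ : ℝ) • d - y))
      rwa [norm_smul, Real.norm_eq_abs, abs_of_nonneg hg0] at this
    have h6 : g * ‖(‖d‖⁻¹ : ℝ) • d - y‖ ≤ g * (2 * θ) :=
      mul_le_mul_of_nonneg_left hdy.le hg0
    have h7 : g * (2 * θ) ≤ ε / 4 := by
      have h8 : g * (2 * θ) ≤ (g + 1) * (2 * θ) := by nlinarith
      have h9 : (g + 1) * (2 * θ) ≤ (g + 1) * (2 * (ε / (8 * (g + 1)))) := by
        have : (0:ℝ) < g + 1 := by linarith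
        nlinarith
      have h10 : (g + 1) * (2 * (ε / (8 * (g + 1)))) = ε / 4 := by
        field_simp
        ring
      linarith
    linarith
  refine ⟨w, convexHull_mono hsub hw, ?_⟩
  rw [dist_eq_norm]
  have h11 : ‖x - w‖ ≤ ‖x - c‖ + ‖c - w‖ := by
    have : x - w = (x - c) + (c - w) := by abel
    rw [this]; exact norm_add_le _ _
  linarith

end DCaux
namespace DCaux

open Topology

variable {X Y : Type*} [NormedAddCommGroup X] [NormedSpace ℝ X]
  [NormedAddCommGroup Y] [NormedSpace ℝ Y]

lemma mem_closure_hull_subtype {E : Submodule ℝ X} (hE : IsClosed (E : Set X))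
    {s : Set ↥E} {x : ↥E}
    (h : (x : X) ∈ closure (convexHull ℝ (Subtype.val '' s))) :
    x ∈ closure (convexHull ℝ s) := by
  have h1 : convexHull ℝ (Subtype.val '' s) = Subtype.val '' convexHull ℝ s := by
    rw [← Submodule.coe_subtype, LinearMap.image_convexHull]
  have h2 : closure (Subtype.val '' (convexHull ℝ s)) = Subtype.val '' closure (convexHull ℝ s) :=
    hE.isClosedEmbedding_subtypeVal.closure_image_eq _
  rw [h1, h2] at h
  obtain ⟨w, hw, hwx⟩ := h
  rwa [Subtype.val_injective hwx] at hw

theorem main_construction (G : X →L[ℝ] Y) (hG : IsDaugavetCenter G) (T : X → Y)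
    (hT : IsLip0 T) :
    ∃ (E : Submodule ℝ X) (F : Submodule ℝ Y)
      (hTEF : ∀ e : E, T e ∈ F) (hGEF : ∀ e : E, G e ∈ F),
      IsClosed (E : Set X) ∧ IsClosed (F : Set Y) ∧
      TopologicalSpace.IsSeparable (E : Set X) ∧ TopologicalSpace.IsSeparable (F : Set Y) ∧
      LipNorm (fun e : E => (⟨T e, hTEF e⟩ : F)) = LipNorm T ∧
      ‖(G.comp E.subtypeL).codRestrict F (fun e => hGEF e)‖ = ‖G‖ ∧
      IsDaugavetCenter ((G.comp E.subtypeL).codRestrict F (fun e => hGEF e)) := by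
  classical
  obtain ⟨⟨K, hK⟩, hT0⟩ := hT
  have hTcont : Continuous T := hK.continuous
  -- witnesses for the operator norm
  have hGw : ∀ k : ℕ, ∃ x : X, ‖x‖ ≤ 1 ∧ ‖G‖ - 1 / (k + 1) < ‖G x‖ := by
    intro k
    refine exists_unit_gt ?_
    have : (0:ℝ) < 1 / (k + 1) := by positivity
    linarith
  choose u hu1 hu2 using hGw
  -- witnesses for the Lipschitz norm
  set S := {r : ℝ | ∃ a b : X, a ≠ b ∧ r = ‖T a - T b‖ / ‖a - b‖} with hSdef
  have hSbdd : BddAbove S := by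
    refine ⟨K, ?_⟩
    rintro r ⟨a, b, hab, rfl⟩
    have h1 : ‖T a - T b‖ ≤ K * ‖a - b‖ := by
      have := hK.dist_le_mul a b
      rwa [dist_eq_norm, dist_eq_norm] at this
    have h2 : (0:ℝ) < ‖a - b‖ := by
      rw [norm_pos_iff, sub_ne_zero]; exact hab
    rw [div_le_iff₀ h2]
    exact h1
  have hSnonneg : ∀ r ∈ S, 0 ≤ r := by
    rintro r ⟨a, b, hab, rfl⟩
    positivity
  have hL0 : 0 ≤ LipNorm T := Real.sSup_nonneg hSnonneg
  have hpair : ∀ k : ℕ, ∃ p : X × X, S.Nonempty →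
      (p.1 ≠ p.2 ∧ LipNorm T - 1 / (k + 1) < ‖T p.1 - T p.2‖ / ‖p.1 - p.2‖) := by
    intro k
    by_cases hS0 : S.Nonempty
    · have hlt : LipNorm T - 1 / (k + 1) < sSup S := by
        have : (0:ℝ) < 1 / (k + 1) := by positivity
        have hle : LipNorm T = sSup S := rfl
        linarith [hle]
      obtain ⟨r, hr, hrg⟩ := exists_lt_of_lt_csSup hS0 hlt
      obtain ⟨a, b, hab, rfl⟩ := hr
      exact ⟨(a, b), fun _ => ⟨hab, hrg⟩⟩
    · exact ⟨(0, 0), fun h => absurd h hS0⟩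
  choose p hp using hpair
  set W := insert (0:X) (Set.range u ∪ Set.range (fun k => (p k).1) ∪
    Set.range (fun k => (p k).2)) with hWdef
  have hWc : W.Countable :=
    (((Set.countable_range u).union (Set.countable_range _)).union
      (Set.countable_range _)).insert 0
  set C := CC G T W with hCdef
  set D := DD G T W with hDdef
  set E := closSub C (CC_qclosed G T W) with hEdef
  set F := closSub D (DD_qclosed G T W) with hFdef
  have hEset : (E : Set X) = closure C := rfl
  have hFset : (F : Set Y) = closure D := rfl
  have hWE : ∀ w ∈ W, w ∈ E := fun w hw => subset_closure (W_sub_CC G T W hw)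
  have hTEF : ∀ e : E, T e ∈ F := by
    intro e
    exact map_mem_closure hTcont e.2 fun a ha => image_CC_sub_T G T W ⟨a, ha, rfl⟩
  have hGEF : ∀ e : E, G e ∈ F := by
    intro e
    exact map_mem_closure G.continuous e.2 fun a ha => image_CC_sub_G G T W ⟨a, ha, rfl⟩
  set H := (G.comp E.subtypeL).codRestrict F (fun e => hGEF e) with hHdef
  have happ : ∀ e : E, ‖H e‖ = ‖G e‖ := by
    intro e
    rfl
  have hHnorm : ‖H‖ = ‖G‖ := by
    refine le_antisymm ?_ ?_
    · refine opNorm_le_of_unit (norm_nonneg G) fun e he => ?_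
      rw [happ e]
      calc ‖G e‖ ≤ ‖G‖ * ‖(e : X)‖ := G.le_opNorm _
      _ ≤ ‖G‖ := by
          have : ‖(e : X)‖ = ‖e‖ := (Submodule.coe_norm e).symm
          rw [this]
          nlinarith [norm_nonneg G, norm_nonneg e]
    · refine le_of_forall_pos_le_add fun ε hε => ?_
      obtain ⟨k, hk⟩ := exists_nat_one_div_lt hε
      set ek : E := ⟨u k, hWE _ (Set.mem_insert_iff.mpr (Or.inr
        (Set.mem_union_left _ (Set.mem_union_left _ ⟨k, rfl⟩))))⟩ with hekdef
      have h1 : ‖G (u k)‖ = ‖H ek‖ := (happ ek).symm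
      have h2 : ‖H ek‖ ≤ ‖H‖ := by
        refine H.unit_le_opNorm ek ?_
        rw [Submodule.coe_norm]
        exact hu1 k
      have := hu2 k
      rw [h1] at this
      linarith
  refine ⟨E, F, hTEF, hGEF, isClosed_closure, isClosed_closure,
    ((CC_countable G T W hWc).isSeparable).closure,
    ((DD_countable G T W hWc).isSeparable).closure, ?_, hHnorm, ?_⟩
  · -- Lipschitz norm equality
    set SE := {r : ℝ | ∃ e₁ e₂ : E, e₁ ≠ e₂ ∧
      r = ‖(⟨T e₁, hTEF e₁⟩ : F) - ⟨T e₂, hTEF e₂⟩‖ / ‖e₁ - e₂‖} with hSEdef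
    have hsub : SE ⊆ S := by
      rintro r ⟨e₁, e₂, hne, rfl⟩
      refine ⟨e₁, e₂, fun h => hne (Subtype.ext h), ?_⟩
      rw [Submodule.coe_norm, Submodule.coe_norm]
      norm_num
    have hgoal1 : LipNorm (fun e : E => (⟨T e, hTEF e⟩ : F)) = sSup SE := rfl
    have hgoal2 : LipNorm T = sSup S := rfl
    rw [hgoal1, hgoal2]
    refine le_antisymm ?_ ?_
    · rcases Set.eq_empty_or_nonempty SE with hSE | hSE
      · rw [hSE, Real.sSup_empty]
        exact Real.sSup_nonneg hSnonneg
      · exact csSup_le_csSup hSbdd hSE hsub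
    · rcases Set.eq_empty_or_nonempty S with hS | hS
      · rw [hS, Real.sSup_empty]
        exact Real.sSup_nonneg fun r hr => hSnonneg r (hsub hr)
      · refine le_of_forall_pos_le_add fun ε hε => ?_
        obtain ⟨k, hk⟩ := exists_nat_one_div_lt hε
        obtain ⟨hne, hrk⟩ := hp k hS
        set e₁ : E := ⟨(p k).1, hWE _ (Set.mem_insert_iff.mpr (Or.inr
          (Set.mem_union_left _ (Set.mem_union_right _ ⟨k, rfl⟩))))⟩ with he₁
        set e₂ : E := ⟨(p k).2, hWE _ (Set.mem_insert_iff.mpr (Or.inr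
          (Set.mem_union_right _ ⟨k, rfl⟩)))⟩ with he₂
        have hmem : ‖T (p k).1 - T (p k).2‖ / ‖(p k).1 - (p k).2‖ ∈ SE := by
          refine ⟨e₁, e₂, fun h => hne (congrArg Subtype.val h), ?_⟩
          rw [Submodule.coe_norm, Submodule.coe_norm]
          norm_num
          rfl
        have hle := le_csSup (hSbdd.mono hsub) hmem
        linarith
  · -- Daugavet center
    refine daugavetOfHull H ?_
    rw [hHnorm]
    intro yF hyF ε hε xE hxE
    have hyc : (yF : Y) ∈ closure D := yF.2
    have hyn : ‖(yF : Y)‖ = 1 := by rw [← Submodule.coe_norm]; exact hyF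
    have hxc : (xE : X) ∈ closure C := xE.2
    have hxn : ‖(xE : X)‖ ≤ 1 := by rw [← Submodule.coe_norm]; exact hxE
    have hamb := hullE G hG T W hyc hyn hε hxc hxn
    refine mem_closure_hull_subtype isClosed_closure ?_
    have himg : Subtype.val '' {z : E | ‖z‖ ≤ 1 ∧ 2 * ‖G‖ - ε < ‖H z + ‖G‖ • yF‖} =
        {z : X | z ∈ closure C ∧ ‖z‖ ≤ 1 ∧ 2 * ‖G‖ - ε < ‖G z + ‖G‖ • (yF : Y)‖} := by
      have hval : ∀ z : E, ‖H z + ‖G‖ • yF‖ = ‖G (z : X) + ‖G‖ • (yF : Y)‖ := by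
        intro z
        rfl
      ext z
      constructor
      · rintro ⟨z', ⟨hz1, hz2⟩, rfl⟩
        refine ⟨z'.2, ?_, ?_⟩
        · rw [← Submodule.coe_norm]; exact hz1
        · rw [← hval z']; exact hz2
      · rintro ⟨hz0, hz1, hz2⟩
        refine ⟨⟨z, hz0⟩, ⟨?_, ?_⟩, rfl⟩
        · rw [Submodule.coe_norm]; exact hz1
        · rw [hval ⟨z, hz0⟩]; exact hz2
    rw [himg]
    exact hamb

end DCaux

/-- If `G : X → Y` is a Daugavet center and `T ∈ Lip₀(X,Y)`, then there are
closed separable subspaces `E ⊆ X` and `F ⊆ Y` with `T(E) ⊆ F` and `G(E) ⊆ F` such that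
`‖T|_E‖_L = ‖T‖_L`, `‖G|_E‖ = ‖G‖`, and `G|_E : E → F` is a Daugavet center. -/
theorem daugavet_center_separable_reduction
    {X Y : Type*} [NormedAddCommGroup X] [NormedSpace ℝ X] [CompleteSpace X]
    [NormedAddCommGroup Y] [NormedSpace ℝ Y] [CompleteSpace Y]
    (G : X →L[ℝ] Y) (hG : IsDaugavetCenter G) (T : X → Y) (hT : IsLip0 T) :
    ∃ (E : Submodule ℝ X) (F : Submodule ℝ Y)
      (hTEF : ∀ e : E, T e ∈ F) (hGEF : ∀ e : E, G e ∈ F),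
      IsClosed (E : Set X) ∧ IsClosed (F : Set Y) ∧
      TopologicalSpace.IsSeparable (E : Set X) ∧ TopologicalSpace.IsSeparable (F : Set Y) ∧
      LipNorm (fun e : E => (⟨T e, hTEF e⟩ : F)) = LipNorm T ∧
      ‖(G.comp E.subtypeL).codRestrict F (fun e => hGEF e)‖ = ‖G‖ ∧
      IsDaugavetCenter ((G.comp E.subtypeL).codRestrict F (fun e => hGEF e)) := by
  exact DCaux.main_construction G hG T hT

end
end
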